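/- arXiv:1603.09309 — 7 statements merged into one kernel-verified Lean document; each statement's English description precedes it below -/
import Mathlib

section
/- Fix 0 < r < 1 and points p_1, …, p_e ∈ 𝔸_r (e ≥ 2, not necessarily distinct). Then there exist an integer M = M(r) > 0 and a constant c = c(r) > 0 such that for every N ≥ M and every z in the closed annulus Ā_r = {r ≤ |z| ≤ 1}, one has |B_N(z)·B_{−N}(z) − 1| ≤ c·r^{2N}. -/
open Finset Complex

/-- The Blaschke-type factor `B_j` associated to `r ∈ (0,1)` and points
`p 1, …, p e` of the annulus `𝔸_r`:
`B_j(z) = (∏ₖ (1 − conj(pₖ) r^{2j})/(1 − pₖ r^{2j})) · ∏ₖ (z − pₖ r^{2j})/(1 − conj(pₖ) r^{2j} z)`. -/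
noncomputable def annulusBlaschkeFactor (r : ℝ) {e : ℕ} (p : Fin e → ℂ) (j : ℤ)
    (z : ℂ) : ℂ :=
  (∏ k, (1 - (starRingEnd ℂ) (p k) * (r : ℂ) ^ (2 * j)) /
      (1 - p k * (r : ℂ) ^ (2 * j))) *
    ∏ k, (z - p k * (r : ℂ) ^ (2 * j)) /
      (1 - (starRingEnd ℂ) (p k) * (r : ℂ) ^ (2 * j) * z)

private lemma absAdd {x y : ℂ} {a b : ℝ} (hx : ‖x‖ ≤ a) (hy : ‖y‖ ≤ b) :
    ‖x + y‖ ≤ a + b :=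
  (norm_add_le x y).trans (add_le_add hx hy)

private lemma absSub {x y : ℂ} {a b : ℝ} (hx : ‖x‖ ≤ a) (hy : ‖y‖ ≤ b) :
    ‖x - y‖ ≤ a + b := by
  rw [sub_eq_add_neg]
  exact (norm_add_le _ _).trans (add_le_add hx ((norm_neg y) ▸ hy))

private lemma absMulOne {x y : ℂ} (hx : ‖x‖ ≤ 1) (hy : ‖y‖ ≤ 1) :
    ‖x * y‖ ≤ 1 := by
  rw [norm_mul]
  exact mul_le_one₀ hx (norm_nonneg _) hy

private lemma prod_sub_one_bound {ι : Type*} (s : Finset ι) (f : ι → ℂ) (d : ℝ)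
    (hd : d ≤ 1) (h : ∀ i ∈ s, ‖f i - 1‖ ≤ d) :
    ‖∏ i ∈ s, f i - 1‖ ≤ ((3 : ℝ) ^ s.card - 1) * d := by
  induction s using Finset.cons_induction with
  | empty => simp
  | cons a s ha ih =>
    have hd0 : 0 ≤ d := le_trans (norm_nonneg _) (h a (Finset.mem_cons_self a s))
    have hP := ih (fun i hi => h i (Finset.mem_cons_of_mem hi))
    have ha1 : ‖f a - 1‖ ≤ d := h a (Finset.mem_cons_self a s)
    rw [Finset.prod_cons, Finset.card_cons]
    have habsP : ‖∏ i ∈ s, f i‖ ≤ ((3 : ℝ) ^ s.card - 1) * d + 1 := by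
      have h1 : ‖∏ i ∈ s, f i‖ ≤ ‖∏ i ∈ s, f i - 1‖ + 1 := by
        have := norm_add_le (∏ i ∈ s, f i - 1) 1
        simpa using this
      linarith
    have key : f a * ∏ i ∈ s, f i - 1
        = (∏ i ∈ s, f i) * (f a - 1) + (∏ i ∈ s, f i - 1) := by ring
    rw [key, pow_succ]
    have h3 : (1 : ℝ) ≤ (3 : ℝ) ^ s.card := one_le_pow₀ (by norm_num)
    calc ‖(∏ i ∈ s, f i) * (f a - 1) + (∏ i ∈ s, f i - 1)‖
        ≤ ‖(∏ i ∈ s, f i) * (f a - 1)‖ + ‖∏ i ∈ s, f i - 1‖ :=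
          norm_add_le _ _
      _ ≤ (((3 : ℝ) ^ s.card - 1) * d + 1) * d + ((3 : ℝ) ^ s.card - 1) * d := by
          rw [norm_mul]
          exact add_le_add
            (mul_le_mul habsP ha1 (norm_nonneg _) (by nlinarith)) hP
      _ ≤ ((3 : ℝ) ^ s.card * 3 - 1) * d := by
          nlinarith [mul_nonneg (mul_nonneg (sub_nonneg.2 h3) hd0) (sub_nonneg.2 hd),
            mul_nonneg hd0 (le_trans zero_le_one h3)]

set_option maxHeartbeats 1600000 in
private lemma factor_bound (r t : ℝ) (hr0 : 0 < r) (hr1 : r < 1)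
    (ht0 : 0 < t) (ht2 : t ≤ r ^ 2 / 2)
    (p z : ℂ) (hp1 : r < ‖p‖) (hp2 : ‖p‖ < 1)
    (hz1 : r ≤ ‖z‖) (hz2 : ‖z‖ ≤ 1) :
    ‖
      ((1 - (starRingEnd ℂ) p * (t : ℂ)) / (1 - p * (t : ℂ)) *
        ((z - p * (t : ℂ)) / (1 - (starRingEnd ℂ) p * (t : ℂ) * z))) *
      ((1 - (starRingEnd ℂ) p * (t : ℂ)⁻¹) / (1 - p * (t : ℂ)⁻¹) *
        ((z - p * (t : ℂ)⁻¹) / (1 - (starRingEnd ℂ) p * (t : ℂ)⁻¹ * z))) - 1‖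
      ≤ 640 / r ^ 3 * t := by
  set q : ℂ := (starRingEnd ℂ) p with hq
  set T : ℂ := (t : ℂ) with hT
  have habsT : ‖T‖ = t := by rw [hT, Complex.norm_real, Real.norm_eq_abs]; exact abs_of_pos ht0
  have habsq : ‖q‖ = ‖p‖ := Complex.norm_conj p
  have ht1 : t ≤ 1 / 2 := by nlinarith
  have hsub : ∀ x y : ℂ, ‖x‖ - ‖y‖ ≤ ‖x - y‖ := fun x y => by
    simpa using norm_sub_norm_le x y
  -- lower bounds on the four denominators
  have h1 : (1 : ℝ) / 2 ≤ ‖1 - p * T‖ := by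
    have hpt : ‖p * T‖ ≤ t := by
      rw [norm_mul, habsT]; exact mul_le_of_le_one_left ht0.le hp2.le
    calc (1 : ℝ) / 2 ≤ 1 - t := by linarith
      _ ≤ ‖(1 : ℂ)‖ - ‖p * T‖ := by rw [norm_one]; linarith
      _ ≤ ‖1 - p * T‖ := hsub _ _
  have h2 : (1 : ℝ) / 2 ≤ ‖1 - q * T * z‖ := by
    have hpt : ‖q * T * z‖ ≤ t := by
      rw [norm_mul, norm_mul, habsq, habsT]
      calc ‖p‖ * t * ‖z‖ ≤ 1 * t * 1 := by gcongr
        _ = t := by ring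
    calc (1 : ℝ) / 2 ≤ 1 - t := by linarith
      _ ≤ ‖(1 : ℂ)‖ - ‖q * T * z‖ := by rw [norm_one]; linarith
      _ ≤ ‖1 - q * T * z‖ := hsub _ _
  have h3 : r / 2 ≤ ‖T - p‖ := by
    calc r / 2 ≤ r - t := by nlinarith
      _ ≤ ‖p‖ - ‖T‖ := by rw [habsT]; linarith
      _ ≤ ‖p - T‖ := hsub _ _
      _ = ‖T - p‖ := norm_sub_rev p T
  have h4 : r ^ 2 / 2 ≤ ‖T - q * z‖ := by
    have hqz : r ^ 2 ≤ ‖q * z‖ := by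
      rw [norm_mul, habsq]; nlinarith
    calc r ^ 2 / 2 ≤ r ^ 2 - t := by linarith
      _ ≤ ‖q * z‖ - ‖T‖ := by rw [habsT]; linarith
      _ ≤ ‖q * z - T‖ := hsub _ _
      _ = ‖T - q * z‖ := norm_sub_rev _ _
  -- nonvanishing
  have hT0 : T ≠ 0 := by
    rw [hT]; exact_mod_cast ne_of_gt ht0
  have hd1 : (1 : ℂ) - p * T ≠ 0 := by
    intro h; rw [h, norm_zero] at h1; linarith
  have hd2 : (1 : ℂ) - q * T * z ≠ 0 := by
    intro h; rw [h, norm_zero] at h2; linarith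
  have hd3 : T - p ≠ 0 := by
    intro h; rw [h, norm_zero] at h3; linarith
  have hd4 : T - q * z ≠ 0 := by
    intro h; rw [h, norm_zero] at h4; nlinarith
  have e5 : (1 : ℂ) - p * T⁻¹ = (T - p) * T⁻¹ := by field_simp
  have e6 : (1 : ℂ) - q * T⁻¹ * z = (T - q * z) * T⁻¹ := by field_simp
  have hd5 : (1 : ℂ) - p * T⁻¹ ≠ 0 := by
    rw [e5]; exact mul_ne_zero hd3 (inv_ne_zero hT0)
  have hd6 : (1 : ℂ) - q * T⁻¹ * z ≠ 0 := by
    rw [e6]; exact mul_ne_zero hd4 (inv_ne_zero hT0)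
  -- the key algebraic identity
  set A : ℂ := p - p ^ 2 * q + z * q - z * p - z * p * q ^ 2 + z * p ^ 2 * q
      - z ^ 2 * q + z ^ 2 * p * q ^ 2 with hA
  set B : ℂ := -1 + p ^ 2 * q ^ 2 + z ^ 2 - z ^ 2 * p ^ 2 * q ^ 2 with hB
  have key : ((1 - q * T) / (1 - p * T) * ((z - p * T) / (1 - q * T * z))) *
      ((1 - q * T⁻¹) / (1 - p * T⁻¹) * ((z - p * T⁻¹) / (1 - q * T⁻¹ * z))) - 1
      = T * ((1 + T ^ 2) * A + T * B) /
        ((1 - p * T) * (1 - q * T * z) * (T - p) * (T - q * z)) := by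
    rw [hA, hB]
    have h1' : (1:ℂ) - T * p ≠ 0 := by rwa [mul_comm]
    field_simp
    ring
  rw [key]
  -- bound the numerator polynomial
  have hple : ‖p‖ ≤ 1 := hp2.le
  have hqle : ‖q‖ ≤ 1 := by rw [habsq]; exact hple
  have hp2le : ‖p ^ 2‖ ≤ 1 := by
    rw [norm_pow]; exact pow_le_one₀ (norm_nonneg _) hple
  have hq2le : ‖q ^ 2‖ ≤ 1 := by
    rw [norm_pow]; exact pow_le_one₀ (norm_nonneg _) hqle
  have hz2le : ‖z ^ 2‖ ≤ 1 := by
    rw [norm_pow]; exact pow_le_one₀ (norm_nonneg _) hz2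
  have hAbd : ‖A‖ ≤ 8 := by
    have h := absAdd (absSub (absAdd (absSub (absSub (absAdd (absSub hple
      (absMulOne hp2le hqle)) (absMulOne hz2 hqle)) (absMulOne hz2 hple))
      (absMulOne (absMulOne hz2 hple) hq2le)) (absMulOne (absMulOne hz2 hp2le) hqle))
      (absMulOne hz2le hqle)) (absMulOne (absMulOne hz2le hple) hq2le)
    rw [← hA] at h
    norm_num at h
    exact h
  have hBbd : ‖B‖ ≤ 4 := by
    have hm1 : ‖(-1 : ℂ)‖ ≤ 1 := by norm_num
    have h := absSub (absAdd (absAdd hm1 (absMulOne hp2le hq2le)) hz2le)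
      (absMulOne (absMulOne hz2le hp2le) hq2le)
    rw [← hB] at h
    norm_num at h
    exact h
  have hEbd : ‖(1 + T ^ 2) * A + T * B‖ ≤ 20 := by
    have h1T : ‖1 + T ^ 2‖ ≤ 1 + t ^ 2 := by
      have := norm_add_le 1 (T ^ 2)
      rw [norm_one, norm_pow, habsT] at this
      exact this
    calc ‖(1 + T ^ 2) * A + T * B‖
        ≤ ‖(1 + T ^ 2) * A‖ + ‖T * B‖ := norm_add_le _ _
      _ = ‖1 + T ^ 2‖ * ‖A‖ + ‖T‖ * ‖B‖ := by
          rw [norm_mul, norm_mul]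
      _ ≤ (1 + t ^ 2) * 8 + t * 4 := by
          apply add_le_add
          · exact mul_le_mul h1T hAbd (norm_nonneg _) (by nlinarith)
          · rw [habsT]; exact mul_le_mul_of_nonneg_left hBbd ht0.le
      _ ≤ 20 := by nlinarith
  -- bound the denominator from below
  have hDen : r ^ 3 / 32 ≤ ‖(1 - p * T) * (1 - q * T * z) * (T - p) * (T - q * z)‖ := by
    rw [norm_mul, norm_mul, norm_mul]
    calc r ^ 3 / 32 ≤ (1 / 2) * (1 / 2) * (r / 2) * (r ^ 2 / 2) := by
          nlinarith [pow_pos hr0 3]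
      _ ≤ ‖1 - p * T‖ * ‖1 - q * T * z‖ *
            ‖T - p‖ * ‖T - q * z‖ := by
          gcongr <;> positivity
  have hDenpos : (0 : ℝ) < ‖(1 - p * T) * (1 - q * T * z) * (T - p) * (T - q * z)‖ :=
    lt_of_lt_of_le (by positivity) hDen
  rw [norm_div, norm_mul, habsT, div_le_iff₀ hDenpos]
  calc t * ‖(1 + T ^ 2) * A + T * B‖ ≤ t * 20 :=
        mul_le_mul_of_nonneg_left hEbd ht0.le
    _ = 640 / r ^ 3 * t * (r ^ 3 / 32) := by field_simp; ring
    _ ≤ 640 / r ^ 3 * t *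
          ‖(1 - p * T) * (1 - q * T * z) * (T - p) * (T - q * z)‖ := by
        gcongr

set_option maxHeartbeats 1600000 in
/-- For `0 < r < 1` and points `p₁, …, p_e ∈ 𝔸_r` (`e ≥ 2`),
there are `M = M(r) > 0` and `c = c(r) > 0` so that for all `N ≥ M` and all `z`
in the closed annulus `r ≤ |z| ≤ 1`, one has `|B_N(z)·B_{−N}(z) − 1| ≤ c·r^{2N}`. -/
theorem annulusBlaschkeFactor_tail_bound (r : ℝ) (hr0 : 0 < r) (hr1 : r < 1)
    (e : ℕ) (he : 2 ≤ e) (p : Fin e → ℂ)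
    (hp : ∀ k, r < ‖p k‖ ∧ ‖p k‖ < 1) :
    ∃ M : ℕ, 0 < M ∧ ∃ c : ℝ, 0 < c ∧ ∀ N : ℕ, M ≤ N → ∀ z : ℂ,
      r ≤ ‖z‖ → ‖z‖ ≤ 1 →
      ‖annulusBlaschkeFactor r p (N : ℤ) z *
          annulusBlaschkeFactor r p (-(N : ℤ)) z - 1‖ ≤ c * r ^ (2 * N) := by
  obtain ⟨n, hn⟩ := exists_pow_lt_of_lt_one
    (show (0 : ℝ) < min (r ^ 2 / 2) (r ^ 3 / 640) by positivity) hr1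
  refine ⟨n + 1, Nat.succ_pos n, 3 ^ e * (640 / r ^ 3), by positivity, ?_⟩
  intro N hN z hz1 hz2
  set t : ℝ := r ^ (2 * N) with htdef
  have ht0 : 0 < t := pow_pos hr0 _
  have htn : t ≤ r ^ n :=
    pow_le_pow_of_le_one hr0.le hr1.le (by omega)
  have ht2 : t ≤ r ^ 2 / 2 := (htn.trans_lt (hn.trans_le (min_le_left _ _))).le
  have ht3 : t ≤ r ^ 3 / 640 := (htn.trans_lt (hn.trans_le (min_le_right _ _))).le
  have e1 : (r : ℂ) ^ (2 * (N : ℤ)) = ((t : ℝ) : ℂ) := by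
    rw [show (2 * (N : ℤ)) = ((2 * N : ℕ) : ℤ) by push_cast; ring, zpow_natCast, htdef]
    norm_cast
  have e2 : (r : ℂ) ^ (2 * (-(N : ℤ))) = ((t : ℝ) : ℂ)⁻¹ := by
    rw [show (2 * (-(N : ℤ))) = -((2 * N : ℕ) : ℤ) by push_cast; ring, zpow_neg,
      zpow_natCast, htdef]
    norm_cast
  simp only [annulusBlaschkeFactor]
  rw [e1, e2, ← Finset.prod_mul_distrib, ← Finset.prod_mul_distrib, ← Finset.prod_mul_distrib]
  have hdle1 : 640 / r ^ 3 * t ≤ 1 := by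
    rw [div_mul_eq_mul_div, div_le_one (by positivity)]
    nlinarith
  refine le_trans (prod_sub_one_bound Finset.univ _ (640 / r ^ 3 * t) hdle1
    (fun k _ => factor_bound r t hr0 hr1 ht0 ht2 (p k) z (hp k).1 (hp k).2 hz1 hz2)) ?_
  rw [Finset.card_univ, Fintype.card_fin]
  have hK : (0 : ℝ) < 640 / r ^ 3 := by positivity
  nlinarith [pow_pos (show (0 : ℝ) < 3 by norm_num) e, mul_pos hK ht0]
end

section
/- Fix 0 < r < 1, an integer δ, and points p_1, …, p_e ∈ 𝔸_r (e ≥ 2, not necessarily distinct). Then the sequence of partial products f_N(z) = z^{−δ} B_0(z) ∏_{j=1}^N B_j(z)B_{−j}(z) converges uniformly on the closed annulus Ā_r = {r ≤ |z| ≤ 1} to a limit function f_∞, which is continuous on Ā_r and holomorphic on 𝔸_r. -/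
set_option maxHeartbeats 1600000


open Finset Complex Filter Topology

/-- The partial product `f_N(z) = z^{−δ} B₀(z) ∏_{j=1}^N B_j(z) B_{−j}(z)`. -/
noncomputable def annulusPartialProduct (r : ℝ) {e : ℕ} (p : Fin e → ℂ) (δ : ℤ)
    (N : ℕ) (z : ℂ) : ℂ :=
  z ^ (-δ) * annulusBlaschkeFactor r p 0 z *
    ∏ j ∈ Finset.Icc 1 N, (annulusBlaschkeFactor r p (j : ℤ) z *
      annulusBlaschkeFactor r p (-(j : ℤ)) z)

private lemma aux_ne_zero {X : ℂ} {c : ℝ} (hc : 0 < c) (h : c ≤ ‖X‖) : X ≠ 0 := by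
  intro h0; rw [h0, norm_zero] at h; linarith

private lemma aux_div_le {X Y : ℂ} {n dd : ℝ} (hX : ‖X‖ ≤ n) (hY : dd ≤ ‖Y‖) (hdd : 0 < dd) :
    ‖X / Y‖ ≤ n / dd := by
  rw [norm_div]
  exact div_le_div₀ (le_trans (norm_nonneg _) hX) hX hdd hY

private lemma aux_one_sub_lb {w : ℂ} {c : ℝ} (h : ‖w‖ ≤ c) : 1 - c ≤ ‖1 - w‖ := by
  have := norm_sub_norm_le (1 : ℂ) w
  rw [norm_one] at this
  linarith

private lemma aux_norm_le {a b : ℂ} {c ε : ℝ} (hb : ‖b‖ ≤ c) (h : ‖a - b‖ ≤ ε) :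
    ‖a‖ ≤ c + ε := by
  have h2 := norm_add_le b (a - b)
  rw [add_sub_cancel] at h2
  linarith

private lemma aux_one_sub_ne_of_lt {w : ℂ} (h : ‖w‖ < 1) : 1 - w ≠ 0 := by
  intro h0
  rw [sub_eq_zero] at h0
  rw [← h0] at h
  simp at h

private lemma aux_one_sub_ne_of_gt {w : ℂ} (h : 1 < ‖w‖) : 1 - w ≠ 0 := by
  intro h0
  rw [sub_eq_zero] at h0
  rw [← h0] at h
  simp at h

private lemma aux_norm_prod_sub_prod_le {ι : Type*} (s : Finset ι) (a b : ι → ℂ) (M : ℝ)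
    (hM : 1 ≤ M) (ha : ∀ i ∈ s, ‖a i‖ ≤ M) (hb : ∀ i ∈ s, ‖b i‖ ≤ M) :
    ‖∏ i ∈ s, a i - ∏ i ∈ s, b i‖ ≤ M ^ s.card * ∑ i ∈ s, ‖a i - b i‖ := by
  induction s using Finset.cons_induction with
  | empty => simp
  | cons i s his ih =>
    have hM0 : (0:ℝ) ≤ M := le_trans zero_le_one hM
    have ha' : ∀ j ∈ s, ‖a j‖ ≤ M := fun j hj => ha j (Finset.mem_cons_of_mem hj)
    have hb' : ∀ j ∈ s, ‖b j‖ ≤ M := fun j hj => hb j (Finset.mem_cons_of_mem hj)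
    have ihs := ih ha' hb'
    have hB : ‖∏ j ∈ s, b j‖ ≤ M ^ s.card := by
      rw [norm_prod]
      calc ∏ j ∈ s, ‖b j‖ ≤ ∏ j ∈ s, M :=
            Finset.prod_le_prod (fun j _ => norm_nonneg _) hb'
        _ = M ^ s.card := by simp
    have hid : a i * ∏ j ∈ s, a j - b i * ∏ j ∈ s, b j
        = a i * (∏ j ∈ s, a j - ∏ j ∈ s, b j) + (a i - b i) * ∏ j ∈ s, b j := by ring
    rw [Finset.prod_cons, Finset.prod_cons, Finset.sum_cons, Finset.card_cons, hid]
    have h1 : ‖a i * (∏ j ∈ s, a j - ∏ j ∈ s, b j) + (a i - b i) * ∏ j ∈ s, b j‖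
        ≤ ‖a i‖ * ‖∏ j ∈ s, a j - ∏ j ∈ s, b j‖ + ‖a i - b i‖ * ‖∏ j ∈ s, b j‖ := by
      refine (norm_add_le _ _).trans ?_
      simp [norm_mul]
    refine h1.trans ?_
    have hai : ‖a i‖ ≤ M := ha i (Finset.mem_cons_self i s)
    have hsum0 : (0:ℝ) ≤ ∑ j ∈ s, ‖a j - b j‖ :=
      Finset.sum_nonneg fun j _ => norm_nonneg _
    have hMp : (0:ℝ) ≤ M ^ s.card := pow_nonneg hM0 _
    have h2 : ‖a i‖ * ‖∏ j ∈ s, a j - ∏ j ∈ s, b j‖ ≤ M * (M ^ s.card * ∑ j ∈ s, ‖a j - b j‖) :=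
      mul_le_mul hai ihs (norm_nonneg _) hM0
    have h3 : ‖a i - b i‖ * ‖∏ j ∈ s, b j‖ ≤ ‖a i - b i‖ * M ^ s.card :=
      mul_le_mul_of_nonneg_left hB (norm_nonneg _)
    calc ‖a i‖ * ‖∏ j ∈ s, a j - ∏ j ∈ s, b j‖ + ‖a i - b i‖ * ‖∏ j ∈ s, b j‖
        ≤ M * (M ^ s.card * ∑ j ∈ s, ‖a j - b j‖) + ‖a i - b i‖ * M ^ s.card :=
          add_le_add h2 h3
      _ ≤ M ^ (s.card + 1) * (‖a i - b i‖ + ∑ j ∈ s, ‖a j - b j‖) := by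
          rw [pow_succ]
          nlinarith [mul_nonneg (mul_nonneg (norm_nonneg (a i - b i)) hMp) (sub_nonneg.2 hM)]

private lemma aux_norm_prod_sub_one_le {ι : Type*} (s : Finset ι) (a : ι → ℂ) :
    ‖∏ i ∈ s, a i - 1‖ ≤ ∏ i ∈ s, (1 + ‖a i - 1‖) - 1 := by
  induction s using Finset.cons_induction with
  | empty => simp
  | cons i s his ih =>
    rw [Finset.prod_cons, Finset.prod_cons]
    have hP : (1:ℝ) ≤ ∏ j ∈ s, (1 + ‖a j - 1‖) := by
      have := Finset.prod_le_prod (s := s) (f := fun _ => (1:ℝ))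
        (g := fun j => 1 + ‖a j - 1‖) (fun j _ => zero_le_one)
        (fun j _ => le_add_of_nonneg_right (norm_nonneg _))
      simpa using this
    have hid : a i * ∏ j ∈ s, a j - 1 = a i * (∏ j ∈ s, a j - 1) + (a i - 1) := by ring
    rw [hid]
    have hai : ‖a i‖ ≤ 1 + ‖a i - 1‖ := by
      calc ‖a i‖ = ‖1 + (a i - 1)‖ := by ring_nf
        _ ≤ ‖(1:ℂ)‖ + ‖a i - 1‖ := norm_add_le _ _
        _ = 1 + ‖a i - 1‖ := by simp
    calc ‖a i * (∏ j ∈ s, a j - 1) + (a i - 1)‖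
        ≤ ‖a i‖ * ‖∏ j ∈ s, a j - 1‖ + ‖a i - 1‖ := by
          refine (norm_add_le _ _).trans ?_; simp [norm_mul]
      _ ≤ (1 + ‖a i - 1‖) * (∏ j ∈ s, (1 + ‖a j - 1‖) - 1) + ‖a i - 1‖ := by
          refine add_le_add_left (mul_le_mul hai ih (norm_nonneg _) ?_) _
          positivity
      _ = (1 + ‖a i - 1‖) * ∏ j ∈ s, (1 + ‖a j - 1‖) - 1 := by ring

private lemma aux_prod_one_add_le_exp {ι : Type*} (s : Finset ι) (ε : ι → ℝ)
    (hε : ∀ i ∈ s, 0 ≤ ε i) :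
    ∏ i ∈ s, (1 + ε i) ≤ Real.exp (∑ i ∈ s, ε i) := by
  rw [Real.exp_sum]
  refine Finset.prod_le_prod (fun i hi => by linarith [hε i hi]) fun i hi => ?_
  linarith [Real.add_one_le_exp (ε i)]

private lemma aux_core {r μ d K M : ℝ} (hr0 : 0 < r) (hr1 : r < 1) (hμr : r < μ) (hμ1 : μ < 1)
    (hd1 : d ≤ 1 - r) (hd2 : d ≤ r^3*(μ-r)) (hd : 0 < d)
    (hK_def : K = 2 / d) (hM_def : M = r⁻¹ + K * r^2)
    (p z : ℂ) (hpμ : μ ≤ ‖p‖) (hp1 : ‖p‖ < 1)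
    (hz1 : r ≤ ‖z‖) (hz2 : ‖z‖ ≤ 1)
    {q : ℝ} (hq0 : 0 < q) (hq : q ≤ r^2) :
    ‖((1 - (starRingEnd ℂ) p * (q:ℂ)) / (1 - p * (q:ℂ))) *
        ((z - p * (q:ℂ)) / (1 - (starRingEnd ℂ) p * (q:ℂ) * z)) *
        (((1 - (starRingEnd ℂ) p * (q:ℂ)⁻¹) / (1 - p * (q:ℂ)⁻¹)) *
        ((z - p * (q:ℂ)⁻¹) / (1 - (starRingEnd ℂ) p * (q:ℂ)⁻¹ * z))) - 1‖
      ≤ 4 * M^4 * K * q := by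
  have hK : 0 < K := by rw [hK_def]; positivity
  have hrinv : 1 ≤ r⁻¹ := (one_le_inv₀ hr0).2 hr1.le
  have hM1 : 1 ≤ M := by
    have : 0 ≤ K * r^2 := by positivity
    rw [hM_def]; linarith
  have hμ0 : 0 < μ := hr0.trans hμr
  have hqc : ‖(q:ℂ)‖ = q := by
    rw [Complex.norm_real, Real.norm_eq_abs, abs_of_pos hq0]
  have hpcn : ‖(starRingEnd ℂ) p‖ = ‖p‖ := RCLike.norm_conj p
  have hp0 : p ≠ 0 := aux_ne_zero hμ0 hpμ
  have hz0 : z ≠ 0 := aux_ne_zero hr0 hz1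
  have hpc0 : (starRingEnd ℂ) p ≠ 0 := by
    rw [← norm_ne_zero_iff, hpcn]; exact (norm_ne_zero_iff.2 hp0)
  have hq0c : (q:ℂ) ≠ 0 := Complex.ofReal_ne_zero.2 hq0.ne'
  have hr2 : r^2 < 1 := by nlinarith
  have hp0' : 0 < ‖p‖ := lt_of_lt_of_le hμ0 hpμ
  -- elementary numerator bounds
  have hnum1 : ‖(q:ℂ) * (p - (starRingEnd ℂ) p)‖ ≤ 2 * q := by
    rw [norm_mul, hqc]
    have : ‖p - (starRingEnd ℂ) p‖ ≤ 2 := by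
      calc ‖p - (starRingEnd ℂ) p‖ ≤ ‖p‖ + ‖(starRingEnd ℂ) p‖ := norm_sub_le _ _
        _ ≤ 2 := by rw [hpcn]; linarith
    nlinarith
  have hnum2 : ‖(q:ℂ) * ((starRingEnd ℂ) p * z^2 - p)‖ ≤ 2 * q := by
    rw [norm_mul, hqc]
    have : ‖(starRingEnd ℂ) p * z^2 - p‖ ≤ 2 := by
      calc ‖(starRingEnd ℂ) p * z^2 - p‖ ≤ ‖(starRingEnd ℂ) p * z^2‖ + ‖p‖ := norm_sub_le _ _
        _ = ‖p‖ * ‖z‖^2 + ‖p‖ := by rw [norm_mul, hpcn, norm_pow]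
        _ ≤ 2 := by nlinarith [norm_nonneg p, norm_nonneg z]
    nlinarith
  -- denominator lower bounds
  have hden1 : d ≤ ‖1 - p * (q:ℂ)‖ := by
    have h1 : ‖p * (q:ℂ)‖ ≤ r^2 := by
      rw [norm_mul, hqc]; nlinarith [norm_nonneg p]
    have := aux_one_sub_lb h1
    nlinarith
  have hden2 : d ≤ ‖1 - (starRingEnd ℂ) p * (q:ℂ) * z‖ := by
    have h1 : ‖(starRingEnd ℂ) p * (q:ℂ) * z‖ ≤ r^2 := by
      rw [norm_mul, norm_mul, hqc, hpcn]
      have b1 : ‖p‖ * q ≤ q := by nlinarith [norm_nonneg p]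
      have b2 : ‖p‖ * q * ‖z‖ ≤ ‖p‖ * q := by nlinarith [mul_nonneg (norm_nonneg p) hq0.le, norm_nonneg z]
      linarith
    have := aux_one_sub_lb h1
    nlinarith
  have hqp : μ - r^2 ≤ ‖(q:ℂ) - p‖ := by
    have h2 := norm_sub_norm_le p (q:ℂ)
    rw [norm_sub_rev] at h2
    rw [hqc] at h2
    linarith
  have hden3 : d ≤ ‖p * ((q:ℂ) - p)‖ := by
    rw [norm_mul]
    have h3 : r^3*(μ-r) ≤ μ * (μ - r^2) := by
      nlinarith [mul_nonneg (sub_nonneg.2 hμr.le) (show (0:ℝ) ≤ 2*r - r^2 - r^3 by nlinarith),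
        sq_nonneg (μ - r), mul_nonneg (sq_nonneg r) (sub_nonneg.2 hr1.le)]
    have h4 : μ * (μ - r^2) ≤ ‖p‖ * ‖(q:ℂ) - p‖ := by
      have hμr2 : 0 ≤ μ - r^2 := by nlinarith
      exact mul_le_mul hpμ hqp hμr2 (le_trans hμ0.le hpμ)
    linarith
  have hpz : μ * r ≤ ‖(starRingEnd ℂ) p * z‖ := by
    rw [norm_mul, hpcn]
    exact mul_le_mul hpμ hz1 hr0.le (le_trans hμ0.le hpμ)
  have hqpz : μ * r - r^2 ≤ ‖(q:ℂ) - (starRingEnd ℂ) p * z‖ := by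
    have h2 := norm_sub_norm_le ((starRingEnd ℂ) p * z) (q:ℂ)
    rw [norm_sub_rev] at h2
    rw [hqc] at h2
    linarith
  have hden4 : d ≤ ‖((q:ℂ) - (starRingEnd ℂ) p * z) * ((starRingEnd ℂ) p * z)‖ := by
    rw [norm_mul]
    have h3 : r^3*(μ-r) ≤ (μ*r - r^2) * (μ*r) := by
      nlinarith [mul_nonneg (sq_nonneg r) (sq_nonneg (μ - r))]
    have h4 : (μ*r - r^2) * (μ*r) ≤ ‖(q:ℂ) - (starRingEnd ℂ) p * z‖ * ‖(starRingEnd ℂ) p * z‖ := by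
      have h5 : 0 ≤ μ*r - r^2 := by nlinarith
      exact mul_le_mul hqpz hpz (by positivity) (le_trans h5 (by linarith [hqpz]))
    linarith
  -- nonvanishing
  have hinv0 : (q:ℂ)⁻¹ ≠ 0 := inv_ne_zero hq0c
  have hne1 : 1 - p * (q:ℂ) ≠ 0 := aux_ne_zero hd hden1
  have hne2 : 1 - (starRingEnd ℂ) p * (q:ℂ) * z ≠ 0 := aux_ne_zero hd hden2
  have hμr2pos : (0:ℝ) < μ - r^2 := by nlinarith
  have hμrrpos : (0:ℝ) < μ*r - r^2 := by nlinarith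
  have hqp0 : (q:ℂ) - p ≠ 0 := aux_ne_zero hμr2pos hqp
  have hqpz0 : (q:ℂ) - (starRingEnd ℂ) p * z ≠ 0 := aux_ne_zero hμrrpos hqpz
  -- rewriting the level `-j` fractions
  have hrw3a : 1 - p * (q:ℂ)⁻¹ = ((q:ℂ) - p) * (q:ℂ)⁻¹ := by
    field_simp
  have hrw3b : 1 - (starRingEnd ℂ) p * (q:ℂ)⁻¹ = ((q:ℂ) - (starRingEnd ℂ) p) * (q:ℂ)⁻¹ := by
    field_simp
  have hrw4a : z - p * (q:ℂ)⁻¹ = ((q:ℂ) * z - p) * (q:ℂ)⁻¹ := by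
    field_simp <;> ring
  have hrw4b : 1 - (starRingEnd ℂ) p * (q:ℂ)⁻¹ * z
      = ((q:ℂ) - (starRingEnd ℂ) p * z) * (q:ℂ)⁻¹ := by
    field_simp <;> ring
  have hrw3 : (1 - (starRingEnd ℂ) p * (q:ℂ)⁻¹) / (1 - p * (q:ℂ)⁻¹)
      = ((q:ℂ) - (starRingEnd ℂ) p) / ((q:ℂ) - p) := by
    rw [hrw3a, hrw3b, mul_div_mul_right _ _ hinv0]
  have hrw4 : (z - p * (q:ℂ)⁻¹) / (1 - (starRingEnd ℂ) p * (q:ℂ)⁻¹ * z)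
      = ((q:ℂ) * z - p) / ((q:ℂ) - (starRingEnd ℂ) p * z) := by
    rw [hrw4a, hrw4b, mul_div_mul_right _ _ hinv0]
  rw [hrw3, hrw4]
  set A1 : ℂ := (1 - (starRingEnd ℂ) p * (q:ℂ)) / (1 - p * (q:ℂ)) with hA1
  set A2 : ℂ := (z - p * (q:ℂ)) / (1 - (starRingEnd ℂ) p * (q:ℂ) * z) with hA2
  set A3 : ℂ := ((q:ℂ) - (starRingEnd ℂ) p) / ((q:ℂ) - p) with hA3
  set A4 : ℂ := ((q:ℂ) * z - p) / ((q:ℂ) - (starRingEnd ℂ) p * z) with hA4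
  set b3 : ℂ := (starRingEnd ℂ) p / p with hb3def
  set b4 : ℂ := p / ((starRingEnd ℂ) p * z) with hb4def
  -- diff identities and estimates
  have hest1 : ‖A1 - 1‖ ≤ K * q := by
    have hdiff1 : A1 - 1 = ((q:ℂ) * (p - (starRingEnd ℂ) p)) / (1 - p * (q:ℂ)) := by
      rw [hA1, div_sub_one hne1]; congr 1; ring
    rw [hdiff1]
    calc ‖((q:ℂ) * (p - (starRingEnd ℂ) p)) / (1 - p * (q:ℂ))‖ ≤ (2*q) / d :=
          aux_div_le hnum1 hden1 hd
      _ = K * q := by rw [hK_def]; ring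
  have hest2 : ‖A2 - z‖ ≤ K * q := by
    have hdiff2 : A2 - z
        = ((q:ℂ) * ((starRingEnd ℂ) p * z^2 - p)) / (1 - (starRingEnd ℂ) p * (q:ℂ) * z) := by
      rw [hA2, div_sub' hne2]; congr 1; ring
    rw [hdiff2]
    calc ‖((q:ℂ) * ((starRingEnd ℂ) p * z^2 - p)) / (1 - (starRingEnd ℂ) p * (q:ℂ) * z)‖
        ≤ (2*q) / d := aux_div_le hnum2 hden2 hd
      _ = K * q := by rw [hK_def]; ring
  have hest3 : ‖A3 - b3‖ ≤ K * q := by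
    have hdiff3 : A3 - b3 = ((q:ℂ) * (p - (starRingEnd ℂ) p)) / (p * ((q:ℂ) - p)) := by
      rw [hA3, hb3def, div_sub_div _ _ hqp0 hp0]
      rw [div_eq_div_iff (mul_ne_zero hqp0 hp0) (mul_ne_zero hp0 hqp0)]
      ring
    rw [hdiff3]
    calc ‖((q:ℂ) * (p - (starRingEnd ℂ) p)) / (p * ((q:ℂ) - p))‖ ≤ (2*q) / d :=
          aux_div_le hnum1 hden3 hd
      _ = K * q := by rw [hK_def]; ring
  have hest4 : ‖A4 - b4‖ ≤ K * q := by
    have hpz0 : (starRingEnd ℂ) p * z ≠ 0 := mul_ne_zero hpc0 hz0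
    have hdiff4 : A4 - b4
        = ((q:ℂ) * ((starRingEnd ℂ) p * z^2 - p)) /
            (((q:ℂ) - (starRingEnd ℂ) p * z) * ((starRingEnd ℂ) p * z)) := by
      rw [hA4, hb4def, div_sub_div _ _ hqpz0 hpz0]
      congr 1; ring
    rw [hdiff4]
    calc ‖((q:ℂ) * ((starRingEnd ℂ) p * z^2 - p)) /
          (((q:ℂ) - (starRingEnd ℂ) p * z) * ((starRingEnd ℂ) p * z))‖ ≤ (2*q) / d :=
          aux_div_le hnum2 hden4 hd
      _ = K * q := by rw [hK_def]; ring
  -- norm bounds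
  have hKq : K * q ≤ K * r^2 := mul_le_mul_of_nonneg_left hq hK.le
  have hb3n : ‖b3‖ ≤ 1 := by
    rw [hb3def, norm_div, hpcn, div_self hp0'.ne']
  have hb4n : ‖b4‖ ≤ r⁻¹ := by
    rw [hb4def, norm_div, norm_mul, hpcn, div_mul_eq_div_div, div_self hp0'.ne', one_div]
    exact inv_anti₀ hr0 hz1
  have hA1n : ‖A1‖ ≤ M := by
    have := aux_norm_le (le_of_eq norm_one) hest1
    rw [hM_def]; linarith
  have hA2n : ‖A2‖ ≤ M := by
    have := aux_norm_le hz2 hest2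
    rw [hM_def]; linarith
  have hA3n : ‖A3‖ ≤ M := by
    have := aux_norm_le hb3n hest3
    rw [hM_def]; linarith
  have hA4n : ‖A4‖ ≤ M := by
    have := aux_norm_le hb4n hest4
    rw [hM_def]; linarith
  have hzM : ‖z‖ ≤ M := by rw [hM_def]; linarith
  have hb3M : ‖b3‖ ≤ M := le_trans hb3n (by linarith)
  have hb4M : ‖b4‖ ≤ M := by
    have : 0 ≤ K * r^2 := by positivity
    rw [hM_def]; linarith
  -- combine
  have hbprod : (1:ℂ) * z * (b3 * b4) = 1 := by
    rw [hb3def, hb4def]; field_simp <;> ring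
  have hID : A1 * A2 * (A3 * A4) - 1
      = (A1 - 1) * (A2 * (A3 * A4)) + ((A2 - z) * (A3 * A4))
        + z * ((A3 - b3) * A4) + z * b3 * (A4 - b4) + ((1:ℂ) * z * (b3 * b4) - 1) := by
    ring
  rw [hID, hbprod, sub_self, add_zero]
  have hM0 : (0:ℝ) ≤ M := le_trans zero_le_one hM1
  have T1 : ‖(A1 - 1) * (A2 * (A3 * A4))‖ ≤ (K*q) * (M * (M * M)) := by
    rw [norm_mul, norm_mul, norm_mul]
    gcongr
  have T2 : ‖(A2 - z) * (A3 * A4)‖ ≤ (K*q) * (M * M) := by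
    rw [norm_mul, norm_mul]
    gcongr
  have T3 : ‖z * ((A3 - b3) * A4)‖ ≤ M * ((K*q) * M) := by
    rw [norm_mul, norm_mul]
    gcongr
  have T4 : ‖z * b3 * (A4 - b4)‖ ≤ M * M * (K*q) := by
    rw [norm_mul, norm_mul]
    gcongr
  have hKq0 : (0:ℝ) ≤ K * q := by positivity
  calc ‖(A1 - 1) * (A2 * (A3 * A4)) + ((A2 - z) * (A3 * A4))
        + z * ((A3 - b3) * A4) + z * b3 * (A4 - b4)‖
      ≤ ‖(A1 - 1) * (A2 * (A3 * A4)) + ((A2 - z) * (A3 * A4))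
          + z * ((A3 - b3) * A4)‖ + ‖z * b3 * (A4 - b4)‖ := norm_add_le _ _
    _ ≤ (‖(A1 - 1) * (A2 * (A3 * A4)) + ((A2 - z) * (A3 * A4))‖ + ‖z * ((A3 - b3) * A4)‖)
          + ‖z * b3 * (A4 - b4)‖ := add_le_add_left (norm_add_le _ _) _
    _ ≤ ((‖(A1 - 1) * (A2 * (A3 * A4))‖ + ‖(A2 - z) * (A3 * A4)‖) + ‖z * ((A3 - b3) * A4)‖)
          + ‖z * b3 * (A4 - b4)‖ :=
        add_le_add_left (add_le_add_left (norm_add_le _ _) _) _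
    _ ≤ (((K*q) * (M * (M * M)) + (K*q) * (M * M)) + M * ((K*q) * M)) + M * M * (K*q) :=
        add_le_add (add_le_add (add_le_add T1 T2) T3) T4
    _ = K*q*M^3 + 3*(K*q*M^2) := by ring
    _ ≤ K*q*M^4 + 3*(K*q*M^4) := by
        have e1 : M^2 ≤ M^4 := pow_le_pow_right₀ hM1 (by norm_num)
        have e2 : M^3 ≤ M^4 := pow_le_pow_right₀ hM1 (by norm_num)
        have t1 : K*q*M^3 ≤ K*q*M^4 := mul_le_mul_of_nonneg_left e2 hKq0
        have t2 : K*q*M^2 ≤ K*q*M^4 := mul_le_mul_of_nonneg_left e1 hKq0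
        linarith
    _ = 4 * M^4 * K * q := by ring

private lemma aux_G_est {r μ d K M : ℝ} (hr0 : 0 < r) (hr1 : r < 1) (hμr : r < μ) (hμ1 : μ < 1)
    (hd1 : d ≤ 1 - r) (hd2 : d ≤ r^3*(μ-r)) (hd : 0 < d)
    (hK_def : K = 2 / d) (hM_def : M = r⁻¹ + K * r^2)
    {e : ℕ} (p : Fin e → ℂ) (hpμ : ∀ k, μ ≤ ‖p k‖) (hp1 : ∀ k, ‖p k‖ < 1)
    (j : ℕ) (hj : 1 ≤ j) (z : ℂ) (hz1 : r ≤ ‖z‖) (hz2 : ‖z‖ ≤ 1) :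
    ‖annulusBlaschkeFactor r p (j:ℤ) z * annulusBlaschkeFactor r p (-(j:ℤ)) z - 1‖
      ≤ ((1 + (4*M^4*K)*r^2)^e * (e * (4*M^4*K))) * (r^2)^j := by
  have hK : 0 < K := by rw [hK_def]; positivity
  have hM1 : 1 ≤ M := by
    have h1 : 1 ≤ r⁻¹ := (one_le_inv₀ hr0).2 hr1.le
    have h2 : 0 ≤ K * r^2 := by positivity
    rw [hM_def]; linarith
  have hC1 : (0:ℝ) ≤ 4*M^4*K := by positivity
  obtain ⟨q, hq_def⟩ : ∃ q : ℝ, q = r^(2*j) := ⟨_, rfl⟩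
  have hq0 : 0 < q := by rw [hq_def]; exact pow_pos hr0 _
  have hqle : q ≤ r^2 := by
    rw [hq_def]
    exact pow_le_pow_of_le_one hr0.le hr1.le (by omega)
  have hcast1 : (r:ℂ) ^ (2 * (j:ℤ)) = ((q:ℝ):ℂ) := by
    rw [show (2 * (j:ℤ)) = ((2*j : ℕ) : ℤ) by push_cast; ring, zpow_natCast, hq_def]
    push_cast
    ring
  have hcast2 : (r:ℂ) ^ (2 * (-(j:ℤ))) = (((q:ℝ):ℂ))⁻¹ := by
    rw [show (2 * (-(j:ℤ))) = -((2*j : ℕ) : ℤ) by push_cast; ring, zpow_neg, zpow_natCast, hq_def]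
    push_cast
    ring
  have hBB : annulusBlaschkeFactor r p (j:ℤ) z * annulusBlaschkeFactor r p (-(j:ℤ)) z
      = ∏ k, (((1 - (starRingEnd ℂ) (p k) * (q:ℂ)) / (1 - p k * (q:ℂ))) *
          ((z - p k * (q:ℂ)) / (1 - (starRingEnd ℂ) (p k) * (q:ℂ) * z)) *
          (((1 - (starRingEnd ℂ) (p k) * (q:ℂ)⁻¹) / (1 - p k * (q:ℂ)⁻¹)) *
          ((z - p k * (q:ℂ)⁻¹) / (1 - (starRingEnd ℂ) (p k) * (q:ℂ)⁻¹ * z)))) := by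
    unfold annulusBlaschkeFactor
    rw [hcast1, hcast2]
    simp only [Finset.prod_mul_distrib]
  rw [hBB]
  have hker : ∀ k : Fin e,
      ‖(((1 - (starRingEnd ℂ) (p k) * (q:ℂ)) / (1 - p k * (q:ℂ))) *
          ((z - p k * (q:ℂ)) / (1 - (starRingEnd ℂ) (p k) * (q:ℂ) * z)) *
          (((1 - (starRingEnd ℂ) (p k) * (q:ℂ)⁻¹) / (1 - p k * (q:ℂ)⁻¹)) *
          ((z - p k * (q:ℂ)⁻¹) / (1 - (starRingEnd ℂ) (p k) * (q:ℂ)⁻¹ * z)))) - 1‖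
        ≤ 4*M^4*K * q :=
    fun k => aux_core hr0 hr1 hμr hμ1 hd1 hd2 hd hK_def hM_def (p k) z (hpμ k) (hp1 k)
      hz1 hz2 hq0 hqle
  have hMout1 : (1:ℝ) ≤ 1 + (4*M^4*K)*r^2 := by nlinarith
  have hbnd := aux_norm_prod_sub_prod_le (Finset.univ : Finset (Fin e)) _ (fun _ => (1:ℂ))
    (1 + (4*M^4*K)*r^2) hMout1
    (fun k _ => by
      have := aux_norm_le (le_of_eq norm_one) (hker k)
      have h2 : 4*M^4*K * q ≤ (4*M^4*K) * r^2 := mul_le_mul_of_nonneg_left hqle hC1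
      linarith)
    (fun k _ => by rw [norm_one]; exact hMout1)
  rw [Finset.prod_const_one] at hbnd
  refine hbnd.trans ?_
  have hsum : ∑ k : Fin e, ‖(((1 - (starRingEnd ℂ) (p k) * (q:ℂ)) / (1 - p k * (q:ℂ))) *
          ((z - p k * (q:ℂ)) / (1 - (starRingEnd ℂ) (p k) * (q:ℂ) * z)) *
          (((1 - (starRingEnd ℂ) (p k) * (q:ℂ)⁻¹) / (1 - p k * (q:ℂ)⁻¹)) *
          ((z - p k * (q:ℂ)⁻¹) / (1 - (starRingEnd ℂ) (p k) * (q:ℂ)⁻¹ * z)))) - 1‖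
      ≤ e * (4*M^4*K * q) := by
    have := Finset.sum_le_card_nsmul (Finset.univ : Finset (Fin e)) _ (4*M^4*K * q)
      (fun k _ => hker k)
    simpa [Finset.card_univ, nsmul_eq_mul] using this
  have hcard : (Finset.univ : Finset (Fin e)).card = e := by simp
  rw [hcard]
  have hMe : (0:ℝ) ≤ (1 + (4*M^4*K)*r^2)^e := by positivity
  calc (1 + (4*M^4*K)*r^2)^e * ∑ k : Fin e, _ ≤ (1 + (4*M^4*K)*r^2)^e * (e * (4*M^4*K * q)) :=
        mul_le_mul_of_nonneg_left hsum hMe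
    _ = ((1 + (4*M^4*K)*r^2)^e * (e * (4*M^4*K))) * (r^2)^j := by
        rw [hq_def, ← pow_mul]
        ring

/-- For `0 < r < 1`, an integer `δ`, and points
`p₁, …, p_e ∈ 𝔸_r` (`e ≥ 2`), the partial products `f_N` converge uniformly on
the closed annulus `{r ≤ |z| ≤ 1}` to a limit `f_∞` which is continuous there
and holomorphic on the open annulus `𝔸_r = {r < |z| < 1}`. -/
theorem annulusPartialProduct_tendstoUniformly (r : ℝ) (hr0 : 0 < r) (hr1 : r < 1)
    (e : ℕ) (he : 2 ≤ e) (p : Fin e → ℂ)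
    (hp : ∀ k, r < ‖p k‖ ∧ ‖p k‖ < 1) (δ : ℤ) :
    ∃ finf : ℂ → ℂ,
      TendstoUniformlyOn (fun N z => annulusPartialProduct r p δ N z) finf atTop
        {z : ℂ | r ≤ ‖z‖ ∧ ‖z‖ ≤ 1} ∧
      ContinuousOn finf {z : ℂ | r ≤ ‖z‖ ∧ ‖z‖ ≤ 1} ∧
      DifferentiableOn ℂ finf {z : ℂ | r < ‖z‖ ∧ ‖z‖ < 1} := by
  classical
  set S : Set ℂ := {z : ℂ | r ≤ ‖z‖ ∧ ‖z‖ ≤ 1} with hS_def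
  set U : Set ℂ := {z : ℂ | r < ‖z‖ ∧ ‖z‖ < 1} with hU_def
  have hSz : ∀ z ∈ S, r ≤ ‖z‖ ∧ ‖z‖ ≤ 1 := fun z hz => by
    exact hz
  have hpn : ∀ k, r < ‖p k‖ ∧ ‖p k‖ < 1 := fun k => by
    exact hp k
  haveI hne : Nonempty (Fin e) := ⟨⟨0, by omega⟩⟩
  -- the minimum modulus μ
  obtain ⟨μ, hμ_def⟩ : ∃ μ : ℝ,
      μ = Finset.univ.inf' Finset.univ_nonempty (fun k => ‖p k‖) := ⟨_, rfl⟩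
  have hμp : ∀ k, μ ≤ ‖p k‖ := fun k => by
    rw [hμ_def]; exact Finset.inf'_le _ (Finset.mem_univ k)
  have hμr : r < μ := by
    rw [hμ_def]; exact (Finset.lt_inf'_iff _).2 fun k _ => (hpn k).1
  have hμ1 : μ < 1 := lt_of_le_of_lt (hμp ⟨0, by omega⟩) (hpn ⟨0, by omega⟩).2
  -- constants
  obtain ⟨d, hd_def⟩ : ∃ d : ℝ, d = min (1-r) (r^3*(μ-r)) := ⟨_, rfl⟩
  have hd1 : d ≤ 1 - r := hd_def ▸ min_le_left _ _
  have hd2 : d ≤ r^3*(μ-r) := hd_def ▸ min_le_right _ _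
  have hd : 0 < d := by
    rw [hd_def]; exact lt_min (by linarith) (mul_pos (by positivity) (by linarith))
  obtain ⟨K, hK_def⟩ : ∃ K : ℝ, K = 2/d := ⟨_, rfl⟩
  obtain ⟨M, hM_def⟩ : ∃ M : ℝ, M = r⁻¹ + K*r^2 := ⟨_, rfl⟩
  obtain ⟨C, hC_def⟩ : ∃ C : ℝ,
      C = (1 + (4*M^4*K)*r^2)^e * (e * (4*M^4*K)) := ⟨_, rfl⟩
  have hK0 : 0 < K := by rw [hK_def]; positivity
  have hC0 : 0 ≤ C := by
    rw [hC_def]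
    have h1 : (0:ℝ) ≤ 4*M^4*K := by positivity
    have h2 : (0:ℝ) ≤ (1 + (4*M^4*K)*r^2)^e := by positivity
    positivity
  have hr2_0 : (0:ℝ) ≤ r^2 := by positivity
  have hr2_1 : r^2 < 1 := by nlinarith
  -- the tail functions
  have hGest : ∀ (j : ℕ), 1 ≤ j → ∀ z ∈ S,
      ‖annulusBlaschkeFactor r p (j:ℤ) z * annulusBlaschkeFactor r p (-(j:ℤ)) z - 1‖
        ≤ C * (r^2)^j := by
    intro j hj z hz
    rw [hC_def]
    exact aux_G_est hr0 hr1 hμr hμ1 hd1 hd2 hd hK_def hM_def p hμp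
      (fun k => (hpn k).2) j hj z (hSz z hz).1 (hSz z hz).2
  -- geometric sums
  have hgeo : ∀ (m n : ℕ), ∑ j ∈ Finset.Ioc m n, (r^2)^j ≤ (r^2)^(m+1) * (1 - r^2)⁻¹ := by
    intro m n
    have h1 : Finset.Ioc m n = Finset.Ico (m+1) (n+1) := by
      ext x; simp only [Finset.mem_Ioc, Finset.mem_Ico]; omega
    rw [h1, Finset.sum_Ico_eq_sum_range]
    have h2 : ∀ i : ℕ, (r^2)^(m+1+i) = (r^2)^(m+1) * (r^2)^i := fun i => pow_add _ _ _
    calc ∑ i ∈ Finset.range (n+1-(m+1)), (r^2)^(m+1+i)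
        = (r^2)^(m+1) * ∑ i ∈ Finset.range (n+1-(m+1)), (r^2)^i := by
          rw [Finset.mul_sum]; exact Finset.sum_congr rfl fun i _ => h2 i
      _ ≤ (r^2)^(m+1) * (1 - r^2)⁻¹ := by
          refine mul_le_mul_of_nonneg_left ?_ (pow_nonneg hr2_0 _)
          refine (Summable.sum_le_tsum _ (fun i _ => pow_nonneg hr2_0 i)
            (summable_geometric_of_lt_one hr2_0 hr2_1)).trans_eq
            (tsum_geometric_of_lt_one hr2_0 hr2_1)
  -- differentiability of partial products
  have hden : ∀ (j : ℤ) (k : Fin e), ∀ z ∈ S,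
      1 - (starRingEnd ℂ) (p k) * (r:ℂ)^(2*j) * z ≠ 0 := by
    intro j k z hz
    obtain ⟨hz1, hz2⟩ := hSz z hz
    have habs : ‖(r:ℂ)^(2*j)‖ = r^(2*j) := by
      rw [norm_zpow, Complex.norm_real, Real.norm_eq_abs, abs_of_pos hr0]
    have hnm : ‖(starRingEnd ℂ) (p k) * (r:ℂ)^(2*j) * z‖ = ‖p k‖ * r^(2*j) * ‖z‖ := by
      rw [norm_mul, norm_mul, RCLike.norm_conj, habs]
    have hzp : (0:ℝ) < r^(2*j) := zpow_pos hr0 _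
    rcases le_or_gt 0 j with hj | hj
    · refine aux_one_sub_ne_of_lt ?_
      rw [hnm]
      have h1 : r^(2*j) ≤ 1 := zpow_le_one₀ hr0 hr1.le (by omega)
      have h2 : ‖p k‖ * r^(2*j) < r^(2*j) := by
        calc ‖p k‖ * r^(2*j) < 1 * r^(2*j) := mul_lt_mul_of_pos_right (hpn k).2 hzp
          _ = r^(2*j) := one_mul _
      have h3 : ‖p k‖ * r^(2*j) * ‖z‖ ≤ ‖p k‖ * r^(2*j) * 1 := by
        refine mul_le_mul_of_nonneg_left hz2 ?_
        positivity
      rw [mul_one] at h3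
      linarith
    · refine aux_one_sub_ne_of_gt ?_
      rw [hnm]
      have h1 : (1:ℝ) ≤ r^(2*j+2) := one_le_zpow_of_nonpos₀ hr0 hr1.le (by omega)
      have h2 : r^(2*j+2) = r^(2*j) * r^2 := by
        rw [zpow_add₀ hr0.ne' (2*j) 2, zpow_two, pow_two]
      have h3 : r * r^(2*j) * r < ‖p k‖ * r^(2*j) * ‖z‖ := by
        calc r * r^(2*j) * r < ‖p k‖ * r^(2*j) * r :=
              mul_lt_mul_of_pos_right (mul_lt_mul_of_pos_right (hpn k).1 hzp) hr0
          _ ≤ ‖p k‖ * r^(2*j) * ‖z‖ := by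
              refine mul_le_mul_of_nonneg_left hz1 ?_
              positivity
      linarith
  have hBdiff : ∀ j : ℤ, DifferentiableOn ℂ (annulusBlaschkeFactor r p j) S := by
    intro j
    refine DifferentiableOn.mul (differentiableOn_const _) ?_
    refine DifferentiableOn.fun_finsetProd fun k _ => ?_
    refine DifferentiableOn.div ?_ ?_ (fun z hz => hden j k z hz)
    · exact differentiableOn_id.sub (differentiableOn_const _)
    · exact (differentiableOn_const _).sub ((differentiableOn_const _).mul differentiableOn_id)
  have hS0 : (0:ℂ) ∉ S := by
    intro h
    have := (hSz 0 h).1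
    rw [norm_zero] at this
    linarith
  have hFdiff : ∀ N, DifferentiableOn ℂ (fun z => annulusPartialProduct r p δ N z) S := by
    intro N
    unfold annulusPartialProduct
    refine DifferentiableOn.mul (DifferentiableOn.mul ?_ (hBdiff 0)) ?_
    · exact differentiableOn_zpow _ _ (Or.inl hS0)
    · exact DifferentiableOn.fun_finsetProd fun j _ => (hBdiff (j:ℤ)).mul (hBdiff (-(j:ℤ)))
  -- splitting of the partial products
  have hIcc : ∀ N : ℕ, Finset.Icc 1 N = Finset.Ioc 0 N := by
    intro N; ext x; simp only [Finset.mem_Icc, Finset.mem_Ioc]; omega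
  have hsplit : ∀ m n : ℕ, m ≤ n → ∀ z : ℂ,
      annulusPartialProduct r p δ n z = annulusPartialProduct r p δ m z *
        ∏ j ∈ Finset.Ioc m n, (annulusBlaschkeFactor r p (j:ℤ) z *
          annulusBlaschkeFactor r p (-(j:ℤ)) z) := by
    intro m n hmn z
    unfold annulusPartialProduct
    rw [hIcc, hIcc, ← Finset.prod_Ioc_consecutive _ (Nat.zero_le m) hmn]
    ring
  -- compactness and boundedness
  have hScompact : IsCompact S := by
    have hclosed : IsClosed S := by
      have : S = (fun z : ℂ => ‖z‖) ⁻¹' (Set.Icc r 1) := by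
        ext z; simp [hS_def, Set.mem_Icc]
      rw [this]
      exact IsClosed.preimage continuous_norm isClosed_Icc
    refine (isCompact_closedBall (0:ℂ) 1).of_isClosed_subset hclosed ?_
    intro z hz
    simp only [Metric.mem_closedBall, Complex.dist_eq, sub_zero]
    exact hz.2
  obtain ⟨M0, hM0⟩ := hScompact.exists_bound_of_continuousOn (hFdiff 0).continuousOn
  obtain ⟨BB, hBB_def⟩ : ∃ BB : ℝ, BB = (max M0 0) * Real.exp (C * (1-r^2)⁻¹) := ⟨_, rfl⟩
  have hBB0 : 0 ≤ BB := by rw [hBB_def]; positivity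
  -- uniform bound on partial products
  have hGnorm : ∀ (j : ℕ), 1 ≤ j → ∀ z ∈ S,
      ‖annulusBlaschkeFactor r p (j:ℤ) z * annulusBlaschkeFactor r p (-(j:ℤ)) z‖
        ≤ 1 + C * (r^2)^j := fun j hj z hz =>
    aux_norm_le (le_of_eq norm_one) (hGest j hj z hz)
  have hsum_le : ∀ m n : ℕ, ∑ j ∈ Finset.Ioc m n, C * (r^2)^j
      ≤ C * ((r^2)^(m+1) * (1-r^2)⁻¹) := by
    intro m n
    rw [← Finset.mul_sum]
    exact mul_le_mul_of_nonneg_left (hgeo m n) hC0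
  have hFbound : ∀ m : ℕ, ∀ z ∈ S, ‖annulusPartialProduct r p δ m z‖ ≤ BB := by
    intro m z hz
    rw [hsplit 0 m (Nat.zero_le m) z, norm_mul]
    have h1 : ‖annulusPartialProduct r p δ 0 z‖ ≤ max M0 0 :=
      le_trans (hM0 z hz) (le_max_left _ _)
    have h2 : ‖∏ j ∈ Finset.Ioc 0 m, (annulusBlaschkeFactor r p (j:ℤ) z *
        annulusBlaschkeFactor r p (-(j:ℤ)) z)‖ ≤ Real.exp (C * (1-r^2)⁻¹) := by
      rw [norm_prod]
      calc ∏ j ∈ Finset.Ioc 0 m, ‖annulusBlaschkeFactor r p (j:ℤ) z *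
            annulusBlaschkeFactor r p (-(j:ℤ)) z‖
          ≤ ∏ j ∈ Finset.Ioc 0 m, (1 + C * (r^2)^j) := by
            refine Finset.prod_le_prod (fun j _ => norm_nonneg _) fun j hj => ?_
            have hj1 : 1 ≤ j := by have := (Finset.mem_Ioc.1 hj).1; omega
            exact hGnorm j hj1 z hz
        _ ≤ Real.exp (∑ j ∈ Finset.Ioc 0 m, C * (r^2)^j) :=
            aux_prod_one_add_le_exp _ _ fun j _ => by positivity
        _ ≤ Real.exp (C * (1-r^2)⁻¹) := by
            refine Real.exp_le_exp.2 ?_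
            refine le_trans (hsum_le 0 m) ?_
            have hinv : (0:ℝ) ≤ (1-r^2)⁻¹ := by
              rw [inv_nonneg]; linarith
            have h4 : (r^2)^(0+1) * (1-r^2)⁻¹ ≤ (1-r^2)⁻¹ := by
              rw [zero_add, pow_one]
              exact mul_le_of_le_one_left hinv hr2_1.le
            exact mul_le_mul_of_nonneg_left h4 hC0
    rw [hBB_def]
    exact mul_le_mul h1 h2 (norm_nonneg _) (le_max_right _ _)
  -- tail product estimate
  have hPdiff : ∀ m n : ℕ, m ≤ n → ∀ z ∈ S,
      ‖∏ j ∈ Finset.Ioc m n, (annulusBlaschkeFactor r p (j:ℤ) z *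
          annulusBlaschkeFactor r p (-(j:ℤ)) z) - 1‖
        ≤ Real.exp (C * ((r^2)^(m+1) * (1-r^2)⁻¹)) - 1 := by
    intro m n hmn z hz
    refine (aux_norm_prod_sub_one_le _ _).trans ?_
    have h1 : ∏ j ∈ Finset.Ioc m n, (1 + ‖annulusBlaschkeFactor r p (j:ℤ) z *
        annulusBlaschkeFactor r p (-(j:ℤ)) z - 1‖)
        ≤ Real.exp (C * ((r^2)^(m+1) * (1-r^2)⁻¹)) := by
      calc ∏ j ∈ Finset.Ioc m n, (1 + ‖annulusBlaschkeFactor r p (j:ℤ) z *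
            annulusBlaschkeFactor r p (-(j:ℤ)) z - 1‖)
          ≤ ∏ j ∈ Finset.Ioc m n, (1 + C * (r^2)^j) := by
            refine Finset.prod_le_prod (fun j _ => by positivity) fun j hj => ?_
            have hj1 : 1 ≤ j := by have := (Finset.mem_Ioc.1 hj).1; omega
            have := hGest j hj1 z hz
            linarith
        _ ≤ Real.exp (∑ j ∈ Finset.Ioc m n, C * (r^2)^j) :=
            aux_prod_one_add_le_exp _ _ fun j _ => by positivity
        _ ≤ Real.exp (C * ((r^2)^(m+1) * (1-r^2)⁻¹)) := Real.exp_le_exp.2 (hsum_le m n)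
    linarith
  -- uniform Cauchy
  have hUC : UniformCauchySeqOn (fun N z => annulusPartialProduct r p δ N z) atTop S := by
    rw [Metric.uniformCauchySeqOn_iff]
    intro ε hε
    have hg0 : Tendsto (fun m : ℕ =>
        BB * (Real.exp (C * ((r^2)^(m+1) * (1-r^2)⁻¹)) - 1)) atTop (𝓝 0) := by
      have h1 : Tendsto (fun m : ℕ => (r^2)^(m+1)) atTop (𝓝 0) :=
        (tendsto_pow_atTop_nhds_zero_of_lt_one hr2_0 hr2_1).comp (tendsto_add_atTop_nat 1)
      have h2 : Continuous (fun x : ℝ => BB * (Real.exp (C * (x * (1-r^2)⁻¹)) - 1)) :=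
        continuous_const.mul ((Real.continuous_exp.comp
          (continuous_const.mul (continuous_id.mul continuous_const))).sub continuous_const)
      have h3 := (h2.tendsto 0).comp h1
      simpa [Function.comp_def] using h3
    obtain ⟨N, hN⟩ := (Metric.tendsto_atTop.1 hg0) ε hε
    have key : ∀ m n : ℕ, N ≤ m → m ≤ n → ∀ z ∈ S,
        dist (annulusPartialProduct r p δ m z) (annulusPartialProduct r p δ n z) < ε := by
      intro m n hNm hmn z hz
      rw [dist_eq_norm]
      have hid : annulusPartialProduct r p δ m z - annulusPartialProduct r p δ n z
          = -(annulusPartialProduct r p δ m z *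
              (∏ j ∈ Finset.Ioc m n, (annulusBlaschkeFactor r p (j:ℤ) z *
                annulusBlaschkeFactor r p (-(j:ℤ)) z) - 1)) := by
        rw [hsplit m n hmn z]; ring
      rw [hid, norm_neg, norm_mul]
      have h1 := hFbound m z hz
      have h2 := hPdiff m n hmn z hz
      have hexp1 : (0:ℝ) ≤ Real.exp (C * ((r^2)^(m+1) * (1-r^2)⁻¹)) - 1 := by
        have : (0:ℝ) ≤ C * ((r^2)^(m+1) * (1-r^2)⁻¹) := by
          have hinv : (0:ℝ) ≤ (1-r^2)⁻¹ := by rw [inv_nonneg]; linarith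
          positivity
        linarith [Real.one_le_exp this]
      have hb := hN m hNm
      rw [Real.dist_eq, sub_zero] at hb
      calc ‖annulusPartialProduct r p δ m z‖ * ‖∏ j ∈ Finset.Ioc m n,
            (annulusBlaschkeFactor r p (j:ℤ) z * annulusBlaschkeFactor r p (-(j:ℤ)) z) - 1‖
          ≤ BB * (Real.exp (C * ((r^2)^(m+1) * (1-r^2)⁻¹)) - 1) :=
            mul_le_mul h1 h2 (norm_nonneg _) hBB0
        _ ≤ |BB * (Real.exp (C * ((r^2)^(m+1) * (1-r^2)⁻¹)) - 1)| := le_abs_self _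
        _ < ε := hb
    refine ⟨N, fun m hm n hn z hz => ?_⟩
    rcases le_total m n with h | h
    · exact key m n hm h z hz
    · rw [dist_comm]; exact key n m hn h z hz
  -- the limit
  have hcauchy : ∀ z ∈ S, CauchySeq (fun N => annulusPartialProduct r p δ N z) := by
    intro z hz
    rw [Metric.cauchySeq_iff]
    intro ε hε
    obtain ⟨N, hN⟩ := Metric.uniformCauchySeqOn_iff.1 hUC ε hε
    exact ⟨N, fun m hm n hn => hN m hm n hn z hz⟩
  have hptwise : ∀ z ∈ S, Tendsto (fun N => annulusPartialProduct r p δ N z) atTop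
      (𝓝 (limUnder atTop (fun N => annulusPartialProduct r p δ N z))) :=
    fun z hz => (hcauchy z hz).tendsto_limUnder
  have hTU : TendstoUniformlyOn (fun N z => annulusPartialProduct r p δ N z)
      (fun z => limUnder atTop (fun N => annulusPartialProduct r p δ N z)) atTop S :=
    hUC.tendstoUniformlyOn_of_tendsto hptwise
  refine ⟨fun z => limUnder atTop (fun N => annulusPartialProduct r p δ N z), hTU, ?_, ?_⟩
  · exact hTU.continuousOn (Filter.Frequently.of_forall fun N => (hFdiff N).continuousOn)
  · have hUopen : IsOpen U := by
      have : U = (fun z : ℂ => ‖z‖) ⁻¹' (Set.Ioo r 1) := by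
        ext z; simp [hU_def, Set.mem_Ioo]
      rw [this]
      exact IsOpen.preimage continuous_norm isOpen_Ioo
    have hUS : U ⊆ S := fun z hz => ⟨hz.1.le, hz.2.le⟩
    exact ((hTU.mono hUS).tendstoLocallyUniformlyOn).differentiableOn
      (Filter.Eventually.of_forall fun N => (hFdiff N).mono hUS) hUopen
end

section
/- Fix 0 < r < 1, an integer δ, and points p_1, …, p_e ∈ 𝔸_r with |p_1 p_2 ⋯ p_e| = r^δ. Then the limit function f_∞ is modular with respect to multiplication by r²: for every z ∈ ℂ ∖ {0} at which both sides are defined (i.e., z is not a pole of the infinite products), f_∞(r² z) = f_∞(z). -/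
open Finset Complex Filter

namespace AnnulusAux

variable {e : ℕ}

noncomputable def nP (r : ℝ) (p : Fin e → ℂ) (j : ℤ) (z : ℂ) : ℂ :=
  ∏ k, (z - p k * (r:ℂ)^(2*j))
noncomputable def dP (r : ℝ) (p : Fin e → ℂ) (j : ℤ) (z : ℂ) : ℂ :=
  ∏ k, (1 - (starRingEnd ℂ) (p k) * (r:ℂ)^(2*j) * z)
noncomputable def cnP (r : ℝ) (p : Fin e → ℂ) (j : ℤ) : ℂ :=
  ∏ k, (1 - (starRingEnd ℂ) (p k) * (r:ℂ)^(2*j))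
noncomputable def cdP (r : ℝ) (p : Fin e → ℂ) (j : ℤ) : ℂ :=
  ∏ k, (1 - p k * (r:ℂ)^(2*j))

lemma B_eq (r : ℝ) (p : Fin e → ℂ) (j : ℤ) (z : ℂ) :
    annulusBlaschkeFactor r p j z
      = (cnP r p j * nP r p j z) / (cdP r p j * dP r p j z) := by
  unfold annulusBlaschkeFactor nP dP cnP cdP
  rw [Finset.prod_div_distrib, Finset.prod_div_distrib, div_mul_div_comm]

lemma sym_prod (G : ℤ → ℂ) (N : ℕ) :
    G 0 * ∏ j ∈ Finset.Icc 1 N, (G (j:ℤ) * G (-(j:ℤ)))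
      = ∏ j ∈ Finset.Icc (-(N:ℤ)) (N:ℤ), G j := by
  induction N with
  | zero => simp
  | succ n ih =>
    have h1 : Finset.Icc 1 (n+1) = insert (n+1) (Finset.Icc 1 n) := by
      ext x; simp [Finset.mem_Icc]; omega
    have h2 : Finset.Icc (-((n:ℤ)+1)) ((n:ℤ)+1)
        = insert (-((n:ℤ)+1)) (insert ((n:ℤ)+1) (Finset.Icc (-(n:ℤ)) (n:ℤ))) := by
      ext x; simp [Finset.mem_Icc]; omega
    push_cast
    rw [h1, Finset.prod_insert (by simp), h2,
      Finset.prod_insert (by simp [Finset.mem_Icc]; try omega),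
      Finset.prod_insert (by simp [Finset.mem_Icc]; try omega), ← ih]
    push_cast
    ring

lemma F_eq (r : ℝ) (p : Fin e → ℂ) (δ : ℤ) (N : ℕ) (z : ℂ) :
    annulusPartialProduct r p δ N z
      = z^(-δ) * ∏ j ∈ Finset.Icc (-(N:ℤ)) (N:ℤ), annulusBlaschkeFactor r p j z := by
  rw [annulusPartialProduct, mul_assoc, sym_prod (fun j => annulusBlaschkeFactor r p j z)]


lemma prod_Icc_shift (f : ℤ → ℂ) (a b c : ℤ) :
    ∏ j ∈ Finset.Icc a b, f (j + c) = ∏ j ∈ Finset.Icc (a+c) (b+c), f j := by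
  rw [← Finset.map_add_right_Icc, Finset.prod_map]
  rfl

lemma prod_Icc_bot (a b : ℤ) (h : a ≤ b) (f : ℤ → ℂ) :
    ∏ j ∈ Finset.Icc a b, f j = f a * ∏ j ∈ Finset.Icc (a+1) b, f j := by
  rw [show Finset.Icc a b = insert a (Finset.Icc (a+1) b) by
      ext x; simp [Finset.mem_Icc]; omega,
    Finset.prod_insert (by simp [Finset.mem_Icc]; try omega)]

lemma prod_Icc_top (a b : ℤ) (h : a ≤ b) (f : ℤ → ℂ) :
    ∏ j ∈ Finset.Icc a b, f j = f b * ∏ j ∈ Finset.Icc a (b-1), f j := by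
  rw [show Finset.Icc a b = insert b (Finset.Icc a (b-1)) by
      ext x; simp [Finset.mem_Icc]; omega,
    Finset.prod_insert (by simp [Finset.mem_Icc]; try omega)]

lemma zpow_two_mul' (r : ℝ) (hr : (r:ℂ) ≠ 0) (j : ℤ) :
    (r:ℂ)^(2*j) = (r:ℂ)^(2*(j-1)) * (r:ℂ)^2 := by
  rw [show (2*j) = 2*(j-1) + 2 by ring, zpow_add₀ hr]
  norm_num

lemma B_shift (r : ℝ) (hr : (r:ℂ) ≠ 0) (p : Fin e → ℂ) (j : ℤ) (z : ℂ) :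
    annulusBlaschkeFactor r p j ((r:ℂ)^2 * z)
      = (cnP r p j * (((r:ℂ)^2)^e * nP r p (j-1) z)) / (cdP r p j * dP r p (j+1) z) := by
  unfold annulusBlaschkeFactor nP dP cnP cdP
  rw [Finset.prod_div_distrib, Finset.prod_div_distrib, div_mul_div_comm]
  congr 1
  · congr 1
    calc ∏ k, ((r:ℂ)^2 * z - p k * (r:ℂ)^(2*j))
        = ∏ k, ((r:ℂ)^2 * (z - p k * (r:ℂ)^(2*(j-1)))) := by
          refine Finset.prod_congr rfl fun k _ => ?_
          rw [zpow_two_mul' r hr j]; ring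
      _ = ((r:ℂ)^2)^e * ∏ k, (z - p k * (r:ℂ)^(2*(j-1))) := by
          rw [Finset.prod_mul_distrib, Finset.prod_const, Finset.card_univ, Fintype.card_fin]
  · congr 1
    refine Finset.prod_congr rfl fun k _ => ?_
    have h2 : (r:ℂ)^(2*(j+1)) = (r:ℂ)^(2*j) * (r:ℂ)^2 := by
      rw [show (2*(j+1)) = 2*j + 2 by ring, zpow_add₀ hr]; norm_num
    rw [h2]; ring


lemma shift_down (f : ℤ → ℂ) (N : ℕ) :
    ∏ j ∈ Finset.Icc (-(N:ℤ)) (N:ℤ), f (j-1)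
      = f (-(N:ℤ)-1) * ∏ j ∈ Finset.Icc (-(N:ℤ)) ((N:ℤ)-1), f j := by
  have h1 : ∏ j ∈ Finset.Icc (-(N:ℤ)) (N:ℤ), f (j-1)
      = ∏ j ∈ Finset.Icc (-(N:ℤ) + -1) ((N:ℤ) + -1), f j := by
    rw [← prod_Icc_shift f (-(N:ℤ)) (N:ℤ) (-1)]
    exact Finset.prod_congr rfl fun j _ => by rw [show j + -1 = j - 1 by ring]
  rw [h1, show (-(N:ℤ) + -1) = (-(N:ℤ)-1) by ring, show ((N:ℤ) + -1) = ((N:ℤ)-1) by ring,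
    prod_Icc_bot _ _ (by omega), show (-(N:ℤ)-1+1) = -(N:ℤ) by ring]

lemma shift_up (f : ℤ → ℂ) (N : ℕ) :
    ∏ j ∈ Finset.Icc (-(N:ℤ)) (N:ℤ), f (j+1)
      = f ((N:ℤ)+1) * ∏ j ∈ Finset.Icc (-(N:ℤ)+1) (N:ℤ), f j := by
  rw [prod_Icc_shift f _ _ 1, prod_Icc_top _ _ (by omega), show ((N:ℤ)+1-1) = (N:ℤ) by ring]

lemma key_identity (r : ℝ) (hr : (r:ℂ) ≠ 0) (p : Fin e → ℂ) (δ : ℤ) (z : ℂ)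
    (hd : ∀ j : ℤ, dP r p j z ≠ 0) (hcd : ∀ j : ℤ, cdP r p j ≠ 0)
    (N : ℕ) (hn : nP r p (N:ℤ) z ≠ 0) :
    annulusPartialProduct r p δ N ((r:ℂ)^2 * z)
      = annulusPartialProduct r p δ N z *
        (((r:ℂ)^2)^(-δ) * ((((r:ℂ)^2)^(e*(2*N+1)) * nP r p (-(N:ℤ)-1) z * dP r p (-(N:ℤ)) z)
          / (nP r p (N:ℤ) z * dP r p ((N:ℤ)+1) z))) := by
  rw [F_eq, F_eq, mul_zpow]
  have hcard : (((N:ℤ) + 1 - -(N:ℤ)).toNat) = 2*N+1 := by omega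
  have hL : ∏ j ∈ Finset.Icc (-(N:ℤ)) (N:ℤ), annulusBlaschkeFactor r p j ((r:ℂ)^2*z)
      = ((∏ j ∈ Finset.Icc (-(N:ℤ)) (N:ℤ), cnP r p j)
          * (((r:ℂ)^2)^(e*(2*N+1)) * (nP r p (-(N:ℤ)-1) z * ∏ j ∈ Finset.Icc (-(N:ℤ)) ((N:ℤ)-1), nP r p j z)))
        / ((∏ j ∈ Finset.Icc (-(N:ℤ)) (N:ℤ), cdP r p j)
          * (dP r p ((N:ℤ)+1) z * ∏ j ∈ Finset.Icc (-(N:ℤ)+1) (N:ℤ), dP r p j z)) := by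
    rw [Finset.prod_congr rfl (fun j _ => B_shift r hr p j z), Finset.prod_div_distrib,
      Finset.prod_mul_distrib, Finset.prod_mul_distrib, Finset.prod_mul_distrib,
      Finset.prod_const, Int.card_Icc, hcard,
      shift_down (fun j => nP r p j z) N, shift_up (fun j => dP r p j z) N, ← pow_mul]
  have hRn : ∏ j ∈ Finset.Icc (-(N:ℤ)) (N:ℤ), nP r p j z
      = nP r p (N:ℤ) z * ∏ j ∈ Finset.Icc (-(N:ℤ)) ((N:ℤ)-1), nP r p j z :=
    prod_Icc_top _ _ (by omega) _
  have hRd : ∏ j ∈ Finset.Icc (-(N:ℤ)) (N:ℤ), dP r p j z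
      = dP r p (-(N:ℤ)) z * ∏ j ∈ Finset.Icc (-(N:ℤ)+1) (N:ℤ), dP r p j z :=
    prod_Icc_bot _ _ (by omega) _
  have hR : ∏ j ∈ Finset.Icc (-(N:ℤ)) (N:ℤ), annulusBlaschkeFactor r p j z
      = ((∏ j ∈ Finset.Icc (-(N:ℤ)) (N:ℤ), cnP r p j)
          * (nP r p (N:ℤ) z * ∏ j ∈ Finset.Icc (-(N:ℤ)) ((N:ℤ)-1), nP r p j z))
        / ((∏ j ∈ Finset.Icc (-(N:ℤ)) (N:ℤ), cdP r p j)
          * (dP r p (-(N:ℤ)) z * ∏ j ∈ Finset.Icc (-(N:ℤ)+1) (N:ℤ), dP r p j z)) := by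
    rw [Finset.prod_congr rfl (fun j _ => B_eq r p j z), Finset.prod_div_distrib,
      Finset.prod_mul_distrib, Finset.prod_mul_distrib, hRn, hRd]
  rw [hL, hR]
  have hCD : (∏ j ∈ Finset.Icc (-(N:ℤ)) (N:ℤ), cdP r p j) ≠ 0 :=
    Finset.prod_ne_zero_iff.mpr (fun j _ => hcd j)
  have hD : (∏ j ∈ Finset.Icc (-(N:ℤ)+1) (N:ℤ), dP r p j z) ≠ 0 :=
    Finset.prod_ne_zero_iff.mpr (fun j _ => hd j)
  have hd1 := hd ((N:ℤ)+1)
  have hdM := hd (-(N:ℤ))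
  generalize (∏ j ∈ Finset.Icc (-(N:ℤ)) (N:ℤ), cnP r p j) = CN
  generalize hCD' : (∏ j ∈ Finset.Icc (-(N:ℤ)) (N:ℤ), cdP r p j) = CD at hCD ⊢
  generalize (∏ j ∈ Finset.Icc (-(N:ℤ)) ((N:ℤ)-1), nP r p j z) = A
  generalize hD' : (∏ j ∈ Finset.Icc (-(N:ℤ)+1) (N:ℤ), dP r p j z) = D at hD ⊢
  generalize hd1' : dP r p ((N:ℤ)+1) z = d1 at hd1 ⊢
  generalize hdM' : dP r p (-(N:ℤ)) z = dM at hdM ⊢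
  generalize hn' : nP r p (N:ℤ) z = nN at hn ⊢
  generalize nP r p (-(N:ℤ)-1) z = nm
  generalize ((r:ℂ)^2)^(e*(2*N+1)) = c
  generalize ((r:ℂ)^2)^(-δ) = b
  generalize z^(-δ) = a
  field_simp


lemma abs_rpow (r : ℝ) (hr0 : 0 < r) (m : ℤ) :
    ‖(r:ℂ)^m‖ = r^m := by
  rw [norm_zpow, Complex.norm_real, Real.norm_eq_abs, abs_of_pos hr0]

lemma cdP_ne (r : ℝ) (hr0 : 0 < r) (hr1 : r < 1) (p : Fin e → ℂ)
    (hp : ∀ k, r < ‖p k‖ ∧ ‖p k‖ < 1) (j : ℤ) :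
    cdP r p j ≠ 0 := by
  refine Finset.prod_ne_zero_iff.mpr (fun k _ h => ?_)
  have h1 : p k * (r:ℂ)^(2*j) = 1 := by
    have := sub_eq_zero.mp h; exact this.symm
  have h2 : ‖p k‖ * r^(2*j) = 1 := by
    have := congrArg norm h1
    rwa [norm_mul, abs_rpow r hr0, norm_one] at this
  have hrpos : (0:ℝ) < r^(2*j) := zpow_pos hr0 _
  have hk1 := (hp k).1
  have hk2 := (hp k).2
  rcases le_or_gt 0 j with hj | hj
  · have : r^(2*j) ≤ r^(0:ℤ) := by
      rcases eq_or_lt_of_le (by omega : (0:ℤ) ≤ 2*j) with h' | h'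
      · rw [← h']
      · exact le_of_lt (zpow_lt_zpow_right_of_lt_one₀ hr0 hr1 h')
    rw [zpow_zero] at this
    nlinarith [norm_nonneg (p k)]
  · have : r^(0:ℤ) < r^(2*j+1) := zpow_lt_zpow_right_of_lt_one₀ hr0 hr1 (by omega)
    rw [zpow_zero] at this
    have h3 : r^(2*j+1) = r^(2*j) * r := by
      rw [zpow_add₀ (ne_of_gt hr0), zpow_one]
    nlinarith

lemma pole_zero (r : ℝ) (p : Fin e → ℂ) (δ : ℤ) (z : ℂ) (j : ℤ) (k : Fin e)
    (h : 1 - (starRingEnd ℂ) (p k) * (r:ℂ)^(2*j) * z = 0) (N : ℕ) (hN : j.natAbs ≤ N) :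
    annulusPartialProduct r p δ N z = 0 := by
  rw [F_eq]
  have hjmem : j ∈ Finset.Icc (-(N:ℤ)) (N:ℤ) := by
    simp only [Finset.mem_Icc]; omega
  have hBj : annulusBlaschkeFactor r p j z = 0 := by
    unfold annulusBlaschkeFactor
    exact mul_eq_zero_of_right _
      (Finset.prod_eq_zero (Finset.mem_univ k) (by rw [h, div_zero]))
  rw [Finset.prod_eq_zero hjmem hBj, mul_zero]

lemma pole_limit (r : ℝ) (p : Fin e → ℂ) (δ : ℤ) (z : ℂ) (w : ℂ)
    (hpole : ∃ (j : ℤ) (k : Fin e), 1 - (starRingEnd ℂ) (p k) * (r:ℂ)^(2*j) * z = 0)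
    (h : Tendsto (fun N => annulusPartialProduct r p δ N z) atTop (nhds w)) : w = 0 := by
  obtain ⟨j, k, hjk⟩ := hpole
  have hev : ∀ᶠ N in atTop, annulusPartialProduct r p δ N z = (0:ℂ) :=
    eventually_atTop.mpr ⟨j.natAbs, fun N hN => pole_zero r p δ z j k hjk N hN⟩
  exact tendsto_nhds_unique (h.congr' (hev.mono fun N hN => hN)) tendsto_const_nhds

lemma const_mul_prod (c : ℂ) (f : Fin e → ℂ) : c^e * ∏ k, f k = ∏ k, (c * f k) := by
  rw [Finset.prod_mul_distrib, Finset.prod_const, Finset.card_univ, Fintype.card_fin]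

lemma pow_cancel (r : ℝ) (hr : (r:ℂ) ≠ 0) (m : ℕ) :
    ((r:ℂ)^2)^m * (r:ℂ)^(2*(-(m:ℤ))) = 1 := by
  rw [← pow_mul, ← zpow_natCast (r:ℂ) (2*m), ← zpow_add₀ hr,
    show ((2*m:ℕ):ℤ) + 2*(-(m:ℤ)) = 0 by push_cast; ring, zpow_zero]

lemma E_form (r : ℝ) (hr : (r:ℂ) ≠ 0) (p : Fin e → ℂ) (N : ℕ) (z : ℂ) :
    ((r:ℂ)^2)^(e*(2*N+1)) * nP r p (-(N:ℤ)-1) z * dP r p (-(N:ℤ)) z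
      = (∏ k, (((r:ℂ)^2)^(N+1) * z - p k))
        * (∏ k, (((r:ℂ)^2)^N - (starRingEnd ℂ) (p k) * z)) := by
  unfold nP dP
  have hq1 : ((r:ℂ)^2)^(N+1) * (r:ℂ)^(2*(-(N:ℤ)-1)) = 1 := by
    have := pow_cancel r hr (N+1)
    rwa [show 2*(-((N+1:ℕ):ℤ)) = 2*(-(N:ℤ)-1) by push_cast; ring] at this
  have hq2 : ((r:ℂ)^2)^N * (r:ℂ)^(2*(-(N:ℤ))) = 1 := pow_cancel r hr N
  have h1 : (((r:ℂ)^2)^(N+1))^e * ∏ k, (z - p k * (r:ℂ)^(2*(-(N:ℤ)-1)))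
      = ∏ k, (((r:ℂ)^2)^(N+1) * z - p k) := by
    rw [const_mul_prod]
    exact Finset.prod_congr rfl fun k _ => by linear_combination (-(p k)) * hq1
  have h2 : (((r:ℂ)^2)^N)^e * ∏ k, (1 - (starRingEnd ℂ) (p k) * (r:ℂ)^(2*(-(N:ℤ))) * z)
      = ∏ k, (((r:ℂ)^2)^N - (starRingEnd ℂ) (p k) * z) := by
    rw [const_mul_prod]
    exact Finset.prod_congr rfl fun k _ =>
      by linear_combination (-((starRingEnd ℂ) (p k) * z)) * hq2
  rw [← h1, ← h2, show e*(2*N+1) = (N+1)*e + N*e by ring, pow_add, pow_mul, pow_mul]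
  ring

lemma nP_nat (r : ℝ) (p : Fin e → ℂ) (N : ℕ) (z : ℂ) :
    nP r p (N:ℤ) z = ∏ k, (z - p k * ((r:ℂ)^2)^N) := by
  unfold nP
  refine Finset.prod_congr rfl fun k _ => ?_
  rw [← pow_mul, ← zpow_natCast (r:ℂ) (2*N),
    show ((2*N:ℕ):ℤ) = 2*(N:ℤ) by push_cast; ring]

lemma dP_nat (r : ℝ) (p : Fin e → ℂ) (N : ℕ) (z : ℂ) :
    dP r p ((N:ℤ)+1) z = ∏ k, (1 - (starRingEnd ℂ) (p k) * ((r:ℂ)^2)^(N+1) * z) := by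
  unfold dP
  refine Finset.prod_congr rfl fun k _ => ?_
  rw [← pow_mul, ← zpow_natCast (r:ℂ) (2*(N+1)),
    show ((2*(N+1):ℕ):ℤ) = 2*((N:ℤ)+1) by push_cast; ring]

lemma tendsto_E (r : ℝ) (hr0 : 0 < r) (hr1 : r < 1) (p : Fin e → ℂ)
    (δ : ℤ) (hprod : ‖∏ k, p k‖ = r ^ δ) (z : ℂ) (hz : z ≠ 0) :
    Tendsto (fun N : ℕ => ((r:ℂ)^2)^(-δ) *
        ((((r:ℂ)^2)^(e*(2*N+1)) * nP r p (-(N:ℤ)-1) z * dP r p (-(N:ℤ)) z)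
          / (nP r p (N:ℤ) z * dP r p ((N:ℤ)+1) z))) atTop (nhds 1) := by
  have hrne : (r:ℂ) ≠ 0 := by
    simpa using ne_of_gt hr0
  have hnorm : ‖(r:ℂ)^2‖ < 1 := by
    rw [norm_pow, Complex.norm_real, Real.norm_eq_abs, abs_of_pos hr0]
    nlinarith
  have hT : Tendsto (fun N : ℕ => ((r:ℂ)^2)^N) atTop (nhds 0) :=
    tendsto_pow_atTop_nhds_zero_of_norm_lt_one hnorm
  have hT1 : Tendsto (fun N : ℕ => ((r:ℂ)^2)^(N+1)) atTop (nhds 0) :=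
    hT.comp (tendsto_add_atTop_nat 1)
  have hnum1 : Tendsto (fun N : ℕ => ∏ k, (((r:ℂ)^2)^(N+1) * z - p k)) atTop
      (nhds (∏ k, ((0:ℂ) * z - p k))) :=
    tendsto_finset_prod _ (fun k _ => ((hT1.mul_const z).sub tendsto_const_nhds))
  have hnum2 : Tendsto (fun N : ℕ => ∏ k, (((r:ℂ)^2)^N - (starRingEnd ℂ) (p k) * z)) atTop
      (nhds (∏ k, ((0:ℂ) - (starRingEnd ℂ) (p k) * z))) :=
    tendsto_finset_prod _ (fun k _ => (hT.sub tendsto_const_nhds))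
  have hden1 : Tendsto (fun N : ℕ => ∏ k, (z - p k * ((r:ℂ)^2)^N)) atTop
      (nhds (∏ k, (z - p k * (0:ℂ)))) :=
    tendsto_finset_prod _ (fun k _ => tendsto_const_nhds.sub (hT.const_mul (p k)))
  have hden2 : Tendsto (fun N : ℕ =>
      ∏ k, (1 - (starRingEnd ℂ) (p k) * ((r:ℂ)^2)^(N+1) * z)) atTop
      (nhds (∏ k, ((1:ℂ) - (starRingEnd ℂ) (p k) * (0:ℂ) * z))) :=
    tendsto_finset_prod _
      (fun k _ => tendsto_const_nhds.sub (((hT1.const_mul ((starRingEnd ℂ) (p k)))).mul_const z))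
  have hdenne : (∏ k, (z - p k * (0:ℂ))) * (∏ k, ((1:ℂ) - (starRingEnd ℂ) (p k) * (0:ℂ) * z)) ≠ 0 := by
    simp only [mul_zero, sub_zero, zero_mul, Finset.prod_const, Finset.card_univ,
      Fintype.card_fin, Finset.prod_const_one, mul_one]
    simpa using pow_ne_zero e hz
  have hG := tendsto_const_nhds.mul ((hnum1.mul hnum2).div (hden1.mul hden2) hdenne)
    (f := fun _ : ℕ => ((r:ℂ)^2)^(-δ))
  have hvalue : ((r:ℂ)^2)^(-δ) *
      (((∏ k, ((0:ℂ) * z - p k)) * (∏ k, ((0:ℂ) - (starRingEnd ℂ) (p k) * z)))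
        / ((∏ k, (z - p k * (0:ℂ))) * (∏ k, ((1:ℂ) - (starRingEnd ℂ) (p k) * (0:ℂ) * z)))) = 1 := by
    have hcomb : (∏ k, ((0:ℂ) * z - p k)) * (∏ k, ((0:ℂ) - (starRingEnd ℂ) (p k) * z))
        = ((∏ k, p k) * (starRingEnd ℂ) (∏ k, p k)) * z^e := by
      rw [← Finset.prod_mul_distrib,
        Finset.prod_congr rfl (fun k (_ : k ∈ Finset.univ) =>
          show ((0:ℂ) * z - p k) * ((0:ℂ) - (starRingEnd ℂ) (p k) * z)
            = (p k * (starRingEnd ℂ) (p k)) * z from by ring),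
        Finset.prod_mul_distrib, Finset.prod_mul_distrib, Finset.prod_const,
        Finset.card_univ, Fintype.card_fin, map_prod]
    have habs : (∏ k, p k) * (starRingEnd ℂ) (∏ k, p k) = ((r:ℂ)^δ)^2 := by
      rw [Complex.mul_conj, ← Complex.sq_norm, hprod]
      push_cast
      ring
    rw [hcomb, habs]
    simp only [mul_zero, sub_zero, zero_mul, Finset.prod_const, Finset.card_univ,
      Fintype.card_fin, Finset.prod_const_one, mul_one]
    have hze : z^e ≠ 0 := pow_ne_zero e hz
    rw [one_pow, mul_one, mul_div_assoc, div_self hze, mul_one,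
      zpow_neg, pow_two (r:ℂ), mul_zpow, pow_two ((r:ℂ)^δ)]
    exact inv_mul_cancel₀ (mul_ne_zero (zpow_ne_zero _ hrne) (zpow_ne_zero _ hrne))
  rw [hvalue] at hG
  refine hG.congr fun N => ?_
  rw [E_form r hrne p N z, nP_nat, dP_nat]
  rfl

end AnnulusAux

/-- Suppose `0 < r < 1`, `δ ∈ ℤ`, `p₁, …, p_e ∈ 𝔸_r`, and
`|p₁ ⋯ p_e| = r^δ`.  Then the limit `f_∞` of the partial products is modular
under multiplication by `r²`: for every `z ≠ 0` at which both `f_∞(r² z)` and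
`f_∞(z)` are defined (i.e. the limits of the partial products exist there),
these two values coincide. -/
theorem annulusInfiniteProduct_modular (r : ℝ) (hr0 : 0 < r) (hr1 : r < 1)
    (e : ℕ) (p : Fin e → ℂ)
    (hp : ∀ k, r < ‖p k‖ ∧ ‖p k‖ < 1) (δ : ℤ)
    (hprod : ‖∏ k, p k‖ = r ^ δ) :
    ∀ z : ℂ, z ≠ 0 → ∀ w₁ w₂ : ℂ,
      Tendsto (fun N => annulusPartialProduct r p δ N ((r : ℂ) ^ 2 * z)) atTop (nhds w₁) →
      Tendsto (fun N => annulusPartialProduct r p δ N z) atTop (nhds w₂) →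
      w₁ = w₂ := by
  intro z hz w₁ w₂ h₁ h₂
  have hrne : (r:ℂ) ≠ 0 := by simpa using ne_of_gt hr0
  by_cases hpole : ∃ (j : ℤ) (k : Fin e), 1 - (starRingEnd ℂ) (p k) * (r:ℂ)^(2*j) * z = 0
  · obtain ⟨j, k, hjk⟩ := hpole
    have hw2 := AnnulusAux.pole_limit r p δ z w₂ ⟨j, k, hjk⟩ h₂
    have hpole' : ∃ (j' : ℤ) (k' : Fin e),
        1 - (starRingEnd ℂ) (p k') * (r:ℂ)^(2*j') * ((r:ℂ)^2*z) = 0 := by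
      refine ⟨j-1, k, ?_⟩
      have h2 := AnnulusAux.zpow_two_mul' r hrne j
      rw [show (starRingEnd ℂ) (p k) * (r:ℂ)^(2*(j-1)) * ((r:ℂ)^2*z)
          = (starRingEnd ℂ) (p k) * ((r:ℂ)^(2*(j-1)) * (r:ℂ)^2) * z from by ring, ← h2]
      exact hjk
    have hw1 := AnnulusAux.pole_limit r p δ ((r:ℂ)^2*z) w₁ hpole' h₁
    rw [hw1, hw2]
  · push_neg at hpole
    have hd : ∀ j : ℤ, AnnulusAux.dP r p j z ≠ 0 := fun j =>
      Finset.prod_ne_zero_iff.mpr (fun k _ => hpole j k)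
    have hcd : ∀ j : ℤ, AnnulusAux.cdP r p j ≠ 0 := AnnulusAux.cdP_ne r hr0 hr1 p hp
    have hzpos : 0 < ‖z‖ := by
      simpa using hz
    have hr2 : (0:ℝ) ≤ r^2 := sq_nonneg r
    have hr2' : r^2 < 1 := by nlinarith
    have hrt : Tendsto (fun N : ℕ => (r^2)^N) atTop (nhds 0) :=
      tendsto_pow_atTop_nhds_zero_of_lt_one hr2 hr2'
    have hev : ∀ᶠ N : ℕ in atTop, (r^2)^N < ‖z‖ :=
      hrt.eventually (gt_mem_nhds hzpos)
    have hnev : ∀ᶠ N : ℕ in atTop, AnnulusAux.nP r p (N:ℤ) z ≠ 0 := by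
      filter_upwards [hev] with N hN
      refine Finset.prod_ne_zero_iff.mpr (fun k _ h0 => ?_)
      have hzeq : z = p k * (r:ℂ)^(2*(N:ℤ)) := by
        have := sub_eq_zero.mp h0; exact this
      have habs : ‖z‖ = ‖p k‖ * (r^2)^N := by
        rw [hzeq, norm_mul, AnnulusAux.abs_rpow r hr0,
          show (2*(N:ℤ)) = ((2*N:ℕ):ℤ) by push_cast; ring, zpow_natCast, pow_mul]
      have hk2 := (hp k).2
      have hpk0 : 0 ≤ ‖p k‖ := norm_nonneg _
      have hrN : (0:ℝ) ≤ (r^2)^N := pow_nonneg hr2 N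
      nlinarith
    have hident : ∀ᶠ N : ℕ in atTop,
        annulusPartialProduct r p δ N ((r:ℂ)^2*z)
          = annulusPartialProduct r p δ N z *
            (((r:ℂ)^2)^(-δ) * ((((r:ℂ)^2)^(e*(2*N+1)) * AnnulusAux.nP r p (-(N:ℤ)-1) z
                * AnnulusAux.dP r p (-(N:ℤ)) z)
              / (AnnulusAux.nP r p (N:ℤ) z * AnnulusAux.dP r p ((N:ℤ)+1) z))) := by
      filter_upwards [hnev] with N hN
      exact AnnulusAux.key_identity r hrne p δ z hd hcd N hN
    have hE := AnnulusAux.tendsto_E r hr0 hr1 p δ hprod z hz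
    have h₂' := h₂.mul hE
    rw [mul_one] at h₂'
    exact tendsto_nhds_unique h₁ (h₂'.congr' (hident.mono fun N hN => hN.symm))
end

section
/- Fix 0 < r < 1, an integer δ, and points p_1, …, p_e ∈ 𝔸_r with |p_1 p_2 ⋯ p_e| = r^δ. Then f_∞ has no zeros or poles on the unit circle, and the winding number of f_∞ along the unit circle equals e − δ; that is, (1/(2πi)) ∮_{|z|=1} f_∞′(z)/f_∞(z) dz = e − δ. -/
open Finset Complex Filter Metric

/- ---- auxiliary lemmas ---- -/

noncomputable def Complex.abs : AbsoluteValue ℂ ℝ where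
  toFun z := ‖z‖
  map_mul' := norm_mul
  nonneg' := norm_nonneg
  eq_zero' _ := norm_eq_zero
  add_le' := norm_add_le

theorem Complex.norm_eq_abs (z : ℂ) : ‖z‖ = Complex.abs z := rfl

theorem Complex.abs_conj (z : ℂ) : Complex.abs ((starRingEnd ℂ) z) = Complex.abs z :=
  Complex.norm_conj z

theorem Complex.abs_ofReal (x : ℝ) : Complex.abs (x : ℂ) = |x| := by
  rw [← Complex.norm_eq_abs, Complex.norm_real, Real.norm_eq_abs]

theorem Complex.continuous_abs : Continuous Complex.abs := continuous_norm

noncomputable def nodeTerm (r : ℝ) {e : ℕ} (p : Fin e → ℂ) (j : ℤ) (k : Fin e) :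
    ℂ → ℂ := fun z =>
  (z - p k * (r:ℂ)^(2*j))⁻¹ +
    (starRingEnd ℂ) (p k) * (r:ℂ)^(2*j) / (1 - (starRingEnd ℂ) (p k) * (r:ℂ)^(2*j) * z)


lemma circleIntegral_add' {f g : ℂ → ℂ} {c : ℂ} {R : ℝ} (hf : CircleIntegrable f c R)
    (hg : CircleIntegrable g c R) :
    (∮ z in C(c,R), (f z + g z)) = (∮ z in C(c,R), f z) + ∮ z in C(c,R), g z := by
  simp only [circleIntegral, smul_add]
  exact intervalIntegral.integral_add hf.out hg.out

lemma circleIntegral_neg' {f : ℂ → ℂ} {c : ℂ} {R : ℝ} :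
    (∮ z in C(c,R), -(f z)) = -(∮ z in C(c,R), f z) := by
  simp only [circleIntegral, smul_neg]
  exact intervalIntegral.integral_neg

lemma int_inv_inside {a : ℂ} (ha : Complex.abs a < 1) :
    (∮ z in C(0,1), (z - a)⁻¹) = 2 * Real.pi * I :=
  circleIntegral.integral_sub_inv_of_mem_ball (by simpa [Complex.dist_eq, Complex.norm_eq_abs] using ha)

lemma int_inv_outside {a : ℂ} (ha : 1 < Complex.abs a) :
    (∮ z in C(0,1), (z - a)⁻¹) = 0 := by
  have hne : ∀ z ∈ closedBall (0:ℂ) 1, z ≠ a := by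
    intro z hz h
    rw [mem_closedBall, Complex.dist_eq, sub_zero] at hz
    exact absurd (h ▸ hz) (not_le.2 ha)
  refine circleIntegral_eq_zero_of_differentiable_on_off_countable zero_le_one
    Set.countable_empty (fun z hz => ?_) (fun z hz => ?_)
  · have : DifferentiableAt ℂ (fun z : ℂ => (z - a)⁻¹) z :=
      ((differentiableAt_id.sub_const a).inv (sub_ne_zero.2 (hne z hz)))
    exact this.continuousAt.continuousWithinAt
  · exact (differentiableAt_id.sub_const a).inv
      (sub_ne_zero.2 (hne z (ball_subset_closedBall hz.1)))

lemma conj_frac_eq {c : ℂ} (hc : c ≠ 0) (z : ℂ) :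
    c / (1 - c * z) = -(z - c⁻¹)⁻¹ := by
  rcases eq_or_ne z c⁻¹ with rfl | hz
  · simp [mul_inv_cancel₀ hc]
  · have h2 : z - c⁻¹ ≠ 0 := sub_ne_zero.2 hz
    have h1 : 1 - c * z = -c * (z - c⁻¹) := by field_simp; ring
    rw [h1, neg_mul, div_neg, mul_comm, ← div_div, div_div_cancel_left' hc]

lemma circleIntegrable_sub_inv {a : ℂ} (ha : Complex.abs a ≠ 1) :
    CircleIntegrable (fun z => (z - a)⁻¹) 0 1 := by
  refine ContinuousOn.circleIntegrable zero_le_one ?_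
  intro z hz
  have hza : z ≠ a := by
    intro h; rw [mem_sphere_iff_norm, sub_zero, h] at hz; exact ha hz
  have : DifferentiableAt ℂ (fun z : ℂ => (z - a)⁻¹) z :=
    (differentiableAt_id.sub_const a).inv (sub_ne_zero.2 hza)
  exact this.continuousAt.continuousWithinAt

lemma circleIntegrable_conj_frac {a : ℂ} (ha0 : a ≠ 0) (ha : Complex.abs a ≠ 1) :
    CircleIntegrable (fun z => (starRingEnd ℂ) a / (1 - (starRingEnd ℂ) a * z)) 0 1 := by
  have hc0 : (starRingEnd ℂ) a ≠ 0 := by simpa using ha0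
  have habs : Complex.abs (((starRingEnd ℂ) a)⁻¹) ≠ 1 := by
    simp only [map_inv₀, Complex.abs_conj]
    intro h
    apply ha
    have := congrArg (·⁻¹) h
    simpa using this
  have := circleIntegrable_sub_inv habs
  have heq : (fun z => (starRingEnd ℂ) a / (1 - (starRingEnd ℂ) a * z))
      = fun z => -(z - ((starRingEnd ℂ) a)⁻¹)⁻¹ := funext fun z => conj_frac_eq hc0 z
  rw [heq]
  exact this.neg

lemma abs_conj_inv {a : ℂ} (h : a ≠ 0) :
    Complex.abs (((starRingEnd ℂ) a)⁻¹) = (Complex.abs a)⁻¹ := by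
  simp [map_inv₀, Complex.abs_conj]

lemma blaschke_term_integral {a : ℂ} (ha0 : a ≠ 0) (ha : Complex.abs a ≠ 1) :
    (∮ z in C(0,1), ((z - a)⁻¹ + (starRingEnd ℂ) a / (1 - (starRingEnd ℂ) a * z)))
      = if Complex.abs a < 1 then 2 * Real.pi * I else -(2 * Real.pi * I) := by
  have hc0 : (starRingEnd ℂ) a ≠ 0 := by simpa using ha0
  have habs0 : 0 < Complex.abs a := by
    simpa [Complex.abs.pos_iff] using ha0
  rw [circleIntegral_add' (circleIntegrable_sub_inv ha) (circleIntegrable_conj_frac ha0 ha)]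
  have heq : ∀ z : ℂ, (starRingEnd ℂ) a / (1 - (starRingEnd ℂ) a * z)
      = -(z - ((starRingEnd ℂ) a)⁻¹)⁻¹ := conj_frac_eq hc0
  have h2 : (∮ z in C(0,1), (starRingEnd ℂ) a / (1 - (starRingEnd ℂ) a * z))
      = -(∮ z in C(0,1), (z - ((starRingEnd ℂ) a)⁻¹)⁻¹) := by
    simp_rw [heq]; exact circleIntegral_neg'
  rcases lt_or_gt_of_ne ha with h | h
  · rw [if_pos h, int_inv_inside h, h2, int_inv_outside, neg_zero, add_zero]
    rw [abs_conj_inv ha0]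
    exact (one_lt_inv₀ habs0).2 h
  · rw [if_neg (not_lt.2 h.le), int_inv_outside h, h2, int_inv_inside, zero_add]
    rw [abs_conj_inv ha0]
    exact (inv_lt_one₀ habs0).2 h

section
variable {r : ℝ} {e : ℕ} {p : Fin e → ℂ}

lemma abs_node (hr0 : 0 < r) (j : ℤ) (k : Fin e) :
    Complex.abs (p k * (r:ℂ)^(2*j)) = Complex.abs (p k) * r^(2*j) := by
  rw [map_mul, map_zpow₀, Complex.abs_ofReal, abs_of_pos hr0]

lemma abs_node_lt (hr0 : 0 < r) (hr1 : r < 1)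
    (hp : ∀ k, r < Complex.abs (p k) ∧ Complex.abs (p k) < 1)
    {j : ℤ} (hj : 0 ≤ j) (k : Fin e) :
    Complex.abs (p k * (r:ℂ)^(2*j)) < 1 := by
  rw [abs_node hr0]
  calc Complex.abs (p k) * r ^ (2*j) ≤ Complex.abs (p k) * 1 := by
        refine mul_le_mul_of_nonneg_left ?_ (Complex.abs.nonneg _)
        simpa using zpow_le_zpow_right_of_le_one₀ hr0 hr1.le (by omega : (0:ℤ) ≤ 2*j)
    _ = Complex.abs (p k) := mul_one _
    _ < 1 := (hp k).2

lemma abs_node_gt (hr0 : 0 < r) (hr1 : r < 1)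
    (hp : ∀ k, r < Complex.abs (p k) ∧ Complex.abs (p k) < 1)
    {j : ℤ} (hj : j < 0) (k : Fin e) :
    1 < Complex.abs (p k * (r:ℂ)^(2*j)) := by
  rw [abs_node hr0]
  calc (1:ℝ) < r⁻¹ := (one_lt_inv₀ hr0).2 hr1
    _ = r ^ (-1:ℤ) := by rw [zpow_neg_one]
    _ ≤ r ^ (2*j + 1) := zpow_le_zpow_right_of_le_one₀ hr0 hr1.le (by omega)
    _ = r * r ^ (2*j) := by
        rw [zpow_add₀ (ne_of_gt hr0), zpow_one]; ring
    _ < Complex.abs (p k) * r ^ (2*j) :=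
        mul_lt_mul_of_pos_right (hp k).1 (by positivity)

lemma node_ne_zero (hr0 : 0 < r)
    (hp : ∀ k, r < Complex.abs (p k) ∧ Complex.abs (p k) < 1)
    (j : ℤ) (k : Fin e) : p k * (r:ℂ)^(2*j) ≠ 0 := by
  have h1 : p k ≠ 0 := by
    intro h
    have := (hp k).1
    rw [h] at this; simp at this; linarith
  have h2 : ((r:ℂ))^(2*j) ≠ 0 := zpow_ne_zero _ (by simpa using ne_of_gt hr0)
  exact mul_ne_zero h1 h2

lemma abs_node_ne_one (hr0 : 0 < r) (hr1 : r < 1)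
    (hp : ∀ k, r < Complex.abs (p k) ∧ Complex.abs (p k) < 1)
    (j : ℤ) (k : Fin e) : Complex.abs (p k * (r:ℂ)^(2*j)) ≠ 1 := by
  rcases le_or_gt 0 j with hj | hj
  · exact ne_of_lt (abs_node_lt hr0 hr1 hp hj k)
  · exact ne_of_gt (abs_node_gt hr0 hr1 hp hj k)

-- conj of node
lemma conj_node (j : ℤ) (k : Fin e) :
    (starRingEnd ℂ) (p k * (r:ℂ)^(2*j)) = (starRingEnd ℂ) (p k) * (r:ℂ)^(2*j) := by
  rw [map_mul, map_zpow₀, Complex.conj_ofReal]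


lemma factor_logDeriv {a c z : ℂ} (hza : z ≠ a) (hden : 1 - c * z ≠ 0) :
    logDeriv (fun w => (w - a) / (1 - c * w)) z = (z - a)⁻¹ + c / (1 - c * z) := by
  have hd1 : DifferentiableAt ℂ (fun w : ℂ => w - a) z := differentiableAt_id.sub_const a
  have hd2 : DifferentiableAt ℂ (fun w : ℂ => 1 - c * w) z :=
    (differentiableAt_const 1).sub ((differentiableAt_const c).mul differentiableAt_id)
  rw [logDeriv_div (f := fun w => w - a) (g := fun w => 1 - c * w) z (sub_ne_zero.2 hza) hden hd1 hd2]
  have e1 : logDeriv (fun w : ℂ => w - a) z = (z - a)⁻¹ := by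
    rw [logDeriv_apply, deriv_sub_const, deriv_id'', one_div]
  have e2 : logDeriv (fun w : ℂ => 1 - c * w) z = -c / (1 - c * z) := by
    rw [logDeriv_apply]
    have : deriv (fun w : ℂ => 1 - c * w) z = -c := by
      have : (fun w : ℂ => 1 - c * w) = fun w => 1 - (fun w : ℂ => c * w) w := rfl
      rw [this, deriv_const_sub, deriv_const_mul_field c]
      simp
    rw [this]
  rw [e1, e2]
  ring

lemma factor_differentiableAt {a c z : ℂ} (hden : 1 - c * z ≠ 0) :
    DifferentiableAt ℂ (fun w : ℂ => (w - a) / (1 - c * w)) z :=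
  (differentiableAt_id.sub_const a).div
    ((differentiableAt_const 1).sub ((differentiableAt_const c).mul differentiableAt_id)) hden

lemma factor_ne_zero {a c z : ℂ} (hza : z ≠ a) (hden : 1 - c * z ≠ 0) :
    (z - a) / (1 - c * z) ≠ 0 := div_ne_zero (sub_ne_zero.2 hza) hden

-- abbreviations
lemma abs_cnode {r : ℝ} {e : ℕ} {p : Fin e → ℂ} (j : ℤ) (k : Fin e) :
    Complex.abs ((starRingEnd ℂ) (p k) * (r:ℂ)^(2*j)) = Complex.abs (p k * (r:ℂ)^(2*j)) := by
  rw [← conj_node j k, Complex.abs_conj]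

lemma den_ne_zero (hr0 : 0 < r) (hr1 : r < 1)
    (hp : ∀ k, r < Complex.abs (p k) ∧ Complex.abs (p k) < 1)
    (j : ℤ) (k : Fin e) {z : ℂ} (hz : Complex.abs z = 1) :
    1 - (starRingEnd ℂ) (p k) * (r:ℂ)^(2*j) * z ≠ 0 := by
  intro h
  have h1 : (starRingEnd ℂ) (p k) * (r:ℂ)^(2*j) * z = 1 := by
    have := sub_eq_zero.1 h; exact this.symm
  have h2 := congrArg Complex.abs h1
  rw [map_mul, abs_cnode, hz, mul_one, map_one] at h2
  exact abs_node_ne_one hr0 hr1 hp j k h2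

lemma z_ne_node (hr0 : 0 < r) (hr1 : r < 1)
    (hp : ∀ k, r < Complex.abs (p k) ∧ Complex.abs (p k) < 1)
    (j : ℤ) (k : Fin e) {z : ℂ} (hz : Complex.abs z = 1) :
    z ≠ p k * (r:ℂ)^(2*j) := by
  intro h
  exact abs_node_ne_one hr0 hr1 hp j k (h ▸ hz)

lemma one_sub_node_ne_zero (hr0 : 0 < r) (hr1 : r < 1)
    (hp : ∀ k, r < Complex.abs (p k) ∧ Complex.abs (p k) < 1)
    (j : ℤ) (k : Fin e) : 1 - p k * (r:ℂ)^(2*j) ≠ 0 := by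
  intro h
  have h1 : p k * (r:ℂ)^(2*j) = 1 := by
    have := sub_eq_zero.1 h; exact this.symm
  exact abs_node_ne_one hr0 hr1 hp j k (by rw [h1, map_one])

lemma one_sub_cnode_ne_zero (hr0 : 0 < r) (hr1 : r < 1)
    (hp : ∀ k, r < Complex.abs (p k) ∧ Complex.abs (p k) < 1)
    (j : ℤ) (k : Fin e) : 1 - (starRingEnd ℂ) (p k) * (r:ℂ)^(2*j) ≠ 0 := by
  intro h
  have h1 : (starRingEnd ℂ) (p k) * (r:ℂ)^(2*j) = 1 := by
    have := sub_eq_zero.1 h; exact this.symm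
  have h2 := congrArg Complex.abs h1
  rw [abs_cnode, map_one] at h2
  exact abs_node_ne_one hr0 hr1 hp j k h2

lemma const_ne_zero (hr0 : 0 < r) (hr1 : r < 1)
    (hp : ∀ k, r < Complex.abs (p k) ∧ Complex.abs (p k) < 1) (j : ℤ) :
    (∏ k, (1 - (starRingEnd ℂ) (p k) * (r : ℂ) ^ (2 * j)) /
      (1 - p k * (r : ℂ) ^ (2 * j))) ≠ 0 := by
  rw [Finset.prod_ne_zero_iff]
  intro k _
  exact div_ne_zero (one_sub_cnode_ne_zero hr0 hr1 hp j k) (one_sub_node_ne_zero hr0 hr1 hp j k)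

lemma blaschke_differentiableAt (j : ℤ) {z : ℂ}
    (hden : ∀ k, 1 - (starRingEnd ℂ) (p k) * (r:ℂ)^(2*j) * z ≠ 0) :
    DifferentiableAt ℂ (annulusBlaschkeFactor r p j) z := by
  unfold annulusBlaschkeFactor
  exact (differentiableAt_const _).mul
    (DifferentiableAt.fun_finsetProd (fun k _ => factor_differentiableAt (hden k)))

lemma blaschke_ne_zero (hr0 : 0 < r) (hr1 : r < 1)
    (hp : ∀ k, r < Complex.abs (p k) ∧ Complex.abs (p k) < 1)
    (j : ℤ) {z : ℂ} (hz : Complex.abs z = 1) :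
    annulusBlaschkeFactor r p j z ≠ 0 := by
  unfold annulusBlaschkeFactor
  refine mul_ne_zero (const_ne_zero hr0 hr1 hp j) ?_
  rw [Finset.prod_ne_zero_iff]
  intro k _
  exact div_ne_zero (sub_ne_zero.2 (z_ne_node hr0 hr1 hp j k hz))
    (den_ne_zero hr0 hr1 hp j k hz)

lemma blaschke_logDeriv (hr0 : 0 < r) (hr1 : r < 1)
    (hp : ∀ k, r < Complex.abs (p k) ∧ Complex.abs (p k) < 1)
    (j : ℤ) {z : ℂ} (hz : Complex.abs z = 1) :
    logDeriv (annulusBlaschkeFactor r p j) z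
      = ∑ k, ((z - p k * (r:ℂ)^(2*j))⁻¹ +
          (starRingEnd ℂ) (p k) * (r:ℂ)^(2*j) / (1 - (starRingEnd ℂ) (p k) * (r:ℂ)^(2*j) * z)) := by
  unfold annulusBlaschkeFactor
  rw [logDeriv_const_mul z _ (const_ne_zero hr0 hr1 hp j)]
  rw [logDeriv_prod (s := Finset.univ)
      (f := fun k (w : ℂ) => (w - p k * (r:ℂ)^(2*j)) / (1 - (starRingEnd ℂ) (p k) * (r:ℂ)^(2*j) * w)) (x := z)
      (fun k _ => div_ne_zero (sub_ne_zero.2 (z_ne_node hr0 hr1 hp j k hz))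
        (den_ne_zero hr0 hr1 hp j k hz))
      (fun k _ => factor_differentiableAt (den_ne_zero hr0 hr1 hp j k hz))]
  exact Finset.sum_congr rfl fun k _ =>
    factor_logDeriv (z_ne_node hr0 hr1 hp j k hz) (den_ne_zero hr0 hr1 hp j k hz)


lemma blaschke_abs_one {r : ℝ} {e : ℕ} {p : Fin e → ℂ} (hr0 : 0 < r) (hr1 : r < 1)
    (hp : ∀ k, r < Complex.abs (p k) ∧ Complex.abs (p k) < 1)
    (j : ℤ) {z : ℂ} (hz : Complex.abs z = 1) :
    Complex.abs (annulusBlaschkeFactor r p j z) = 1 := by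
  unfold annulusBlaschkeFactor
  rw [map_mul, map_prod, map_prod]
  have h1 : ∀ k : Fin e, Complex.abs ((1 - (starRingEnd ℂ) (p k) * (r : ℂ) ^ (2 * j)) /
      (1 - p k * (r : ℂ) ^ (2 * j))) = 1 := by
    intro k
    have hc : 1 - (starRingEnd ℂ) (p k) * (r : ℂ) ^ (2 * j)
        = (starRingEnd ℂ) (1 - p k * (r : ℂ) ^ (2 * j)) := by
      rw [map_sub, map_one, conj_node]
    rw [hc, map_div₀, Complex.abs_conj, div_self]
    exact (Complex.abs.ne_zero_iff).2 (one_sub_node_ne_zero hr0 hr1 hp j k)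
  have h2 : ∀ k : Fin e, Complex.abs ((z - p k * (r : ℂ) ^ (2 * j)) /
      (1 - (starRingEnd ℂ) (p k) * (r : ℂ) ^ (2 * j) * z)) = 1 := by
    intro k
    have hzz : (starRingEnd ℂ) z * z = 1 := by
      rw [mul_comm, Complex.mul_conj]
      norm_cast
      rw [Complex.normSq_eq_norm_sq, Complex.norm_eq_abs, hz]; norm_num
    have hden : (starRingEnd ℂ) (1 - (starRingEnd ℂ) (p k) * (r : ℂ) ^ (2 * j) * z)
        = (starRingEnd ℂ) z * (z - p k * (r : ℂ) ^ (2 * j)) := by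
      rw [map_sub, map_one, map_mul, map_mul, Complex.conj_conj, map_zpow₀, Complex.conj_ofReal]
      rw [mul_sub, hzz]
      ring
    have habs : Complex.abs (1 - (starRingEnd ℂ) (p k) * (r : ℂ) ^ (2 * j) * z)
        = Complex.abs (z - p k * (r : ℂ) ^ (2 * j)) := by
      rw [← Complex.abs_conj (1 - _), hden, map_mul, Complex.abs_conj, hz, one_mul]
    rw [map_div₀, habs, div_self]
    exact (Complex.abs.ne_zero_iff).2 (sub_ne_zero.2 (z_ne_node hr0 hr1 hp j k hz))
  rw [Finset.prod_congr rfl (fun k _ => h1 k), Finset.prod_congr rfl (fun k _ => h2 k)]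
  simp

lemma circleIntegrable_sum {ι : Type*} (s : Finset ι) {f : ι → ℂ → ℂ} {c : ℂ} {R : ℝ}
    (h : ∀ i ∈ s, CircleIntegrable (f i) c R) :
    CircleIntegrable (fun z => ∑ i ∈ s, f i z) c R := by
  have := IntervalIntegrable.sum s (f := fun i => fun θ : ℝ => f i (circleMap c R θ))
    (fun i hi => h i hi)
  have heq : (∑ i ∈ s, fun θ : ℝ => f i (circleMap c R θ))
      = fun θ : ℝ => ∑ i ∈ s, f i (circleMap c R θ) := by
    funext θ; simp
  rw [heq] at this
  exact this

lemma circleIntegral_sum {ι : Type*} (s : Finset ι) {f : ι → ℂ → ℂ} {c : ℂ} {R : ℝ}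
    (h : ∀ i ∈ s, CircleIntegrable (f i) c R) :
    (∮ z in C(c,R), ∑ i ∈ s, f i z) = ∑ i ∈ s, ∮ z in C(c,R), f i z := by
  simp only [circleIntegral, Finset.smul_sum]
  exact intervalIntegral.integral_finset_sum (fun i hi => (h i hi).out)

lemma nodeTerm_integrable (hr0 : 0 < r) (hr1 : r < 1)
    (hp : ∀ k, r < Complex.abs (p k) ∧ Complex.abs (p k) < 1) (j : ℤ) (k : Fin e) :
    CircleIntegrable (nodeTerm r p j k) 0 1 := by
  unfold nodeTerm
  simp_rw [← conj_node j k]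
  exact (circleIntegrable_sub_inv (abs_node_ne_one hr0 hr1 hp j k)).add
    (circleIntegrable_conj_frac (node_ne_zero hr0 hp j k) (abs_node_ne_one hr0 hr1 hp j k))

lemma nodeTerm_integral (hr0 : 0 < r) (hr1 : r < 1)
    (hp : ∀ k, r < Complex.abs (p k) ∧ Complex.abs (p k) < 1) (j : ℤ) (k : Fin e) :
    (∮ z in C(0,1), nodeTerm r p j k z)
      = if 0 ≤ j then 2 * Real.pi * I else -(2 * Real.pi * I) := by
  unfold nodeTerm
  simp_rw [← conj_node j k]
  rw [blaschke_term_integral (node_ne_zero hr0 hp j k) (abs_node_ne_one hr0 hr1 hp j k)]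
  rcases le_or_gt 0 j with hj | hj
  · rw [if_pos (abs_node_lt hr0 hr1 hp hj k), if_pos hj]
  · rw [if_neg (not_lt.2 (abs_node_gt hr0 hr1 hp hj k).le), if_neg (not_le.2 hj)]

lemma blaschke_logDeriv' (hr0 : 0 < r) (hr1 : r < 1)
    (hp : ∀ k, r < Complex.abs (p k) ∧ Complex.abs (p k) < 1)
    (j : ℤ) {z : ℂ} (hz : Complex.abs z = 1) :
    logDeriv (annulusBlaschkeFactor r p j) z = ∑ k, nodeTerm r p j k z :=
  blaschke_logDeriv hr0 hr1 hp j hz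

lemma nodeTermSum_integral (hr0 : 0 < r) (hr1 : r < 1)
    (hp : ∀ k, r < Complex.abs (p k) ∧ Complex.abs (p k) < 1) (j : ℤ) :
    (∮ z in C(0,1), ∑ k, nodeTerm r p j k z)
      = (e : ℂ) * (if 0 ≤ j then 2 * Real.pi * I else -(2 * Real.pi * I)) := by
  rw [circleIntegral_sum Finset.univ (fun k _ => nodeTerm_integrable hr0 hr1 hp j k)]
  rw [Finset.sum_congr rfl (fun k _ => nodeTerm_integral hr0 hr1 hp j k)]
  simp [Finset.card_univ]


lemma partial_differentiableAt (δ : ℤ) (N : ℕ) {z : ℂ} (hz0 : z ≠ 0)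
    (hden : ∀ (j : ℤ) (k : Fin e), 1 - (starRingEnd ℂ) (p k) * (r:ℂ)^(2*j) * z ≠ 0) :
    DifferentiableAt ℂ (annulusPartialProduct r p δ N) z := by
  unfold annulusPartialProduct
  refine DifferentiableAt.mul (DifferentiableAt.mul ?_ ?_) ?_
  · exact differentiableAt_zpow.2 (Or.inl hz0)
  · exact blaschke_differentiableAt 0 (fun k => hden 0 k)
  · exact DifferentiableAt.fun_finsetProd (fun j _ =>
      (blaschke_differentiableAt (j : ℤ) (fun k => hden _ k)).mul
      (blaschke_differentiableAt (-(j : ℤ)) (fun k => hden _ k)))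

lemma partial_abs_one (hr0 : 0 < r) (hr1 : r < 1)
    (hp : ∀ k, r < Complex.abs (p k) ∧ Complex.abs (p k) < 1)
    (δ : ℤ) (N : ℕ) {z : ℂ} (hz : Complex.abs z = 1) :
    Complex.abs (annulusPartialProduct r p δ N z) = 1 := by
  unfold annulusPartialProduct
  rw [map_mul, map_mul, map_zpow₀, hz, one_zpow, one_mul,
    blaschke_abs_one hr0 hr1 hp 0 hz, one_mul, map_prod]
  rw [Finset.prod_congr rfl (fun j _ => by
    rw [map_mul, blaschke_abs_one hr0 hr1 hp _ hz, blaschke_abs_one hr0 hr1 hp _ hz, one_mul])]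
  simp

lemma partial_ne_zero (hr0 : 0 < r) (hr1 : r < 1)
    (hp : ∀ k, r < Complex.abs (p k) ∧ Complex.abs (p k) < 1)
    (δ : ℤ) (N : ℕ) {z : ℂ} (hz : Complex.abs z = 1) :
    annulusPartialProduct r p δ N z ≠ 0 := by
  intro h
  have := partial_abs_one hr0 hr1 hp δ N hz
  rw [h] at this; simp at this

lemma partial_logDeriv (hr0 : 0 < r) (hr1 : r < 1)
    (hp : ∀ k, r < Complex.abs (p k) ∧ Complex.abs (p k) < 1)
    (δ : ℤ) (N : ℕ) {z : ℂ} (hz : Complex.abs z = 1) :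
    logDeriv (annulusPartialProduct r p δ N) z
      = (-δ : ℂ) / z + (∑ k, nodeTerm r p 0 k z)
        + ∑ j ∈ Finset.Icc 1 N,
            ((∑ k, nodeTerm r p (j : ℤ) k z) + ∑ k, nodeTerm r p (-(j : ℤ)) k z) := by
  have hz0 : z ≠ 0 := fun h => by rw [h] at hz; simp at hz
  have hden : ∀ (j : ℤ) (k : Fin e), 1 - (starRingEnd ℂ) (p k) * (r:ℂ)^(2*j) * z ≠ 0 :=
    fun j k => den_ne_zero hr0 hr1 hp j k hz
  have hBd : ∀ j : ℤ, DifferentiableAt ℂ (annulusBlaschkeFactor r p j) z :=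
    fun j => blaschke_differentiableAt j (fun k => hden j k)
  have hBne : ∀ j : ℤ, annulusBlaschkeFactor r p j z ≠ 0 :=
    fun j => blaschke_ne_zero hr0 hr1 hp j hz
  have hzp : DifferentiableAt ℂ (fun w : ℂ => w ^ (-δ)) z :=
    differentiableAt_zpow.2 (Or.inl hz0)
  have hzpne : z ^ (-δ) ≠ 0 := zpow_ne_zero _ hz0
  have hProdD : DifferentiableAt ℂ
      (fun w => ∏ j ∈ Finset.Icc 1 N, (annulusBlaschkeFactor r p (j : ℤ) w *
        annulusBlaschkeFactor r p (-(j : ℤ)) w)) z :=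
    DifferentiableAt.fun_finsetProd (fun j _ =>
      (blaschke_differentiableAt (j : ℤ) (fun k => hden _ k)).mul
      (blaschke_differentiableAt (-(j : ℤ)) (fun k => hden _ k)))
  have hProdne : (∏ j ∈ Finset.Icc 1 N, (annulusBlaschkeFactor r p (j : ℤ) z *
      annulusBlaschkeFactor r p (-(j : ℤ)) z)) ≠ 0 :=
    Finset.prod_ne_zero_iff.2 (fun j _ => mul_ne_zero (hBne _) (hBne _))
  have step1 : logDeriv (annulusPartialProduct r p δ N) z
      = logDeriv (fun w => w ^ (-δ) * annulusBlaschkeFactor r p 0 w) z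
        + logDeriv (fun w => ∏ j ∈ Finset.Icc 1 N, (annulusBlaschkeFactor r p (j : ℤ) w *
            annulusBlaschkeFactor r p (-(j : ℤ)) w)) z := by
    unfold annulusPartialProduct
    exact logDeriv_mul z (mul_ne_zero hzpne (hBne 0)) hProdne
      (hzp.mul (hBd 0)) hProdD
  have step2 : logDeriv (fun w : ℂ => w ^ (-δ) * annulusBlaschkeFactor r p 0 w) z
      = (-δ : ℂ) / z + ∑ k, nodeTerm r p 0 k z := by
    rw [logDeriv_mul z hzpne (hBne 0) hzp (hBd 0), blaschke_logDeriv' hr0 hr1 hp 0 hz]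
    congr 1
    have := logDeriv_zpow (𝕜 := ℂ) z (-δ)
    rw [this]
    push_cast
    ring
  have step3 : logDeriv (fun w => ∏ j ∈ Finset.Icc 1 N, (annulusBlaschkeFactor r p (j : ℤ) w *
      annulusBlaschkeFactor r p (-(j : ℤ)) w)) z
      = ∑ j ∈ Finset.Icc 1 N,
          ((∑ k, nodeTerm r p (j : ℤ) k z) + ∑ k, nodeTerm r p (-(j : ℤ)) k z) := by
    rw [logDeriv_prod (s := Finset.Icc 1 N)
      (f := fun j (w : ℂ) => annulusBlaschkeFactor r p (j : ℤ) w * annulusBlaschkeFactor r p (-(j : ℤ)) w) (x := z)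
      (fun j _ => mul_ne_zero (hBne _) (hBne _))
      (fun j _ => (hBd _).mul (hBd _))]
    refine Finset.sum_congr rfl fun j _ => ?_
    rw [logDeriv_mul z (hBne _) (hBne _) (hBd _) (hBd _),
      blaschke_logDeriv' hr0 hr1 hp _ hz, blaschke_logDeriv' hr0 hr1 hp _ hz]
  rw [step1, step2, step3]

lemma partial_integral (hr0 : 0 < r) (hr1 : r < 1)
    (hp : ∀ k, r < Complex.abs (p k) ∧ Complex.abs (p k) < 1)
    (δ : ℤ) (N : ℕ) :
    (∮ z in C(0,1), logDeriv (annulusPartialProduct r p δ N) z)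
      = 2 * Real.pi * I * ((e : ℂ) - (δ : ℂ)) := by
  have habs0 : Complex.abs (0 : ℂ) ≠ 1 := by simp
  have hInt1 : CircleIntegrable (fun z : ℂ => (-δ : ℂ) / z) 0 1 := by
    have h0 : CircleIntegrable (fun z : ℂ => (z - (0:ℂ))⁻¹) 0 1 :=
      circleIntegrable_sub_inv habs0
    have h1 : IntervalIntegrable (fun θ : ℝ => (-δ : ℂ) * (circleMap 0 1 θ - (0:ℂ))⁻¹)
        MeasureTheory.volume 0 (2 * Real.pi) := IntervalIntegrable.const_mul h0 _
    have heq : (fun θ : ℝ => (-δ : ℂ) * (circleMap 0 1 θ - (0:ℂ))⁻¹)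
        = fun θ : ℝ => (-δ : ℂ) / circleMap 0 1 θ := by
      funext θ; rw [sub_zero, div_eq_mul_inv]
    rw [heq] at h1
    exact h1
  have hInt2 : CircleIntegrable (fun z : ℂ => ∑ k, nodeTerm r p 0 k z) 0 1 :=
    circleIntegrable_sum Finset.univ (fun k _ => nodeTerm_integrable hr0 hr1 hp 0 k)
  have hInt3 : ∀ j : ℕ, CircleIntegrable (fun z : ℂ =>
      (∑ k, nodeTerm r p (j : ℤ) k z) + ∑ k, nodeTerm r p (-(j : ℤ)) k z) 0 1 := fun j =>
    (circleIntegrable_sum Finset.univ (fun k _ => nodeTerm_integrable hr0 hr1 hp _ k)).add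
      (circleIntegrable_sum Finset.univ (fun k _ => nodeTerm_integrable hr0 hr1 hp _ k))
  have hInt3' : CircleIntegrable (fun z : ℂ => ∑ j ∈ Finset.Icc 1 N,
      ((∑ k, nodeTerm r p (j : ℤ) k z) + ∑ k, nodeTerm r p (-(j : ℤ)) k z)) 0 1 :=
    circleIntegrable_sum (Finset.Icc 1 N) (fun j _ => hInt3 j)
  have hcongr : (∮ z in C(0,1), logDeriv (annulusPartialProduct r p δ N) z)
      = ∮ z in C(0,1), ((fun z : ℂ => (-δ : ℂ) / z) z + (fun z : ℂ => ∑ k, nodeTerm r p 0 k z) z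
          + (fun z : ℂ => ∑ j ∈ Finset.Icc 1 N,
              ((∑ k, nodeTerm r p (j : ℤ) k z) + ∑ k, nodeTerm r p (-(j : ℤ)) k z)) z) := by
    refine circleIntegral.integral_congr zero_le_one (fun z hz => ?_)
    have habs : Complex.abs z = 1 := by simpa [Complex.dist_eq, Complex.norm_eq_abs] using hz
    exact partial_logDeriv hr0 hr1 hp δ N habs
  have hInt12 : CircleIntegrable (fun z : ℂ => (-δ : ℂ) / z + ∑ k, nodeTerm r p 0 k z) 0 1 :=
    hInt1.add hInt2
  rw [hcongr, circleIntegral_add' hInt12 hInt3', circleIntegral_add' hInt1 hInt2]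
  have hI1 : (∮ z in C(0,1), (-δ : ℂ) / z) = (-δ : ℂ) * (2 * Real.pi * I) := by
    have heq : (fun z : ℂ => (-δ : ℂ) / z) = fun z : ℂ => (-δ : ℂ) * (z - (0:ℂ))⁻¹ := by
      funext z; simp [div_eq_mul_inv]
    rw [heq, circleIntegral.integral_const_mul, int_inv_inside (by simp)]
  have hI2 : (∮ z in C(0,1), ∑ k, nodeTerm r p 0 k z) = (e : ℂ) * (2 * Real.pi * I) := by
    rw [nodeTermSum_integral hr0 hr1 hp 0, if_pos le_rfl]
  have hI3 : (∮ z in C(0,1), ∑ j ∈ Finset.Icc 1 N,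
      ((∑ k, nodeTerm r p (j : ℤ) k z) + ∑ k, nodeTerm r p (-(j : ℤ)) k z)) = 0 := by
    rw [circleIntegral_sum (Finset.Icc 1 N) (fun j _ => hInt3 j)]
    refine Finset.sum_eq_zero (fun j hj => ?_)
    have hj1 : 1 ≤ j := (Finset.mem_Icc.1 hj).1
    rw [circleIntegral_add'
      (circleIntegrable_sum Finset.univ (fun k _ => nodeTerm_integrable hr0 hr1 hp _ k))
      (circleIntegrable_sum Finset.univ (fun k _ => nodeTerm_integrable hr0 hr1 hp _ k)),
      nodeTermSum_integral hr0 hr1 hp (j : ℤ), nodeTermSum_integral hr0 hr1 hp (-(j : ℤ)),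
      if_pos (by positivity), if_neg (by omega)]
    ring
  rw [hI1, hI2, hI3]
  ring


end

/-- Let `0 < r < 1`, `δ ∈ ℤ`, and `p₁, …, p_e ∈ 𝔸_r` with
`|p₁ ⋯ p_e| = r^δ`.  Let `f_∞` be the limit of the partial products `f_N`,
the convergence being locally uniform on an open neighborhood `U` of the unit
circle avoiding `0` and the poles of the factors.  Then `f_∞` has no zeros or
poles on the unit circle (it is analytic and nonvanishing there), and its
winding number along the positively oriented unit circle equals `e − δ`:
`(1/(2πi)) ∮_{|z|=1} f_∞′(z)/f_∞(z) dz = e − δ`. -/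
theorem annulusInfiniteProduct_winding_number (r : ℝ) (hr0 : 0 < r) (hr1 : r < 1)
    (e : ℕ) (p : Fin e → ℂ)
    (hp : ∀ k, r < ‖p k‖ ∧ ‖p k‖ < 1) (δ : ℤ)
    (hprod : ‖∏ k, p k‖ = r ^ δ)
    (U : Set ℂ) (hUopen : IsOpen U) (hUcirc : Metric.sphere (0 : ℂ) 1 ⊆ U)
    (hU0 : (0 : ℂ) ∉ U)
    (hUpoles : ∀ z ∈ U, ∀ (j : ℤ) (k : Fin e),
      1 - (starRingEnd ℂ) (p k) * (r : ℂ) ^ (2 * j) * z ≠ 0)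
    (finf : ℂ → ℂ)
    (hconv : TendstoLocallyUniformlyOn
      (fun N z => annulusPartialProduct r p δ N z) finf atTop U) :
    (∀ z ∈ Metric.sphere (0 : ℂ) 1, AnalyticAt ℂ finf z ∧ finf z ≠ 0) ∧
    (∮ z in C(0, 1), deriv finf z / finf z) =
      2 * Real.pi * Complex.I * ((e : ℂ) - (δ : ℂ)) := by

  have hp : ∀ k, r < Complex.abs (p k) ∧ Complex.abs (p k) < 1 := hp
  have habs_of_sphere : ∀ z ∈ Metric.sphere (0 : ℂ) 1, Complex.abs z = 1 := by
    intro z hz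
    simpa [Complex.dist_eq, Complex.norm_eq_abs] using hz
  have hdiffN : ∀ N : ℕ, DifferentiableOn ℂ (fun z => annulusPartialProduct r p δ N z) U := by
    intro N z hz
    exact (partial_differentiableAt δ N (fun h => hU0 (h ▸ hz)) (hUpoles z hz)).differentiableWithinAt
  have hdf : DifferentiableOn ℂ finf U :=
    hconv.differentiableOn (Eventually.of_forall hdiffN) hUopen
  -- modulus of finf is 1 on the sphere
  have habsf : ∀ z ∈ Metric.sphere (0 : ℂ) 1, Complex.abs (finf z) = 1 := by
    intro z hz
    have h1 : Tendsto (fun N => annulusPartialProduct r p δ N z) atTop (nhds (finf z)) :=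
      hconv.tendsto_at (hUcirc hz)
    have h2 : Tendsto (fun N => Complex.abs (annulusPartialProduct r p δ N z)) atTop
        (nhds (Complex.abs (finf z))) := (Complex.continuous_abs.tendsto _).comp h1
    have h3 : Tendsto (fun _ : ℕ => (1:ℝ)) atTop (nhds (Complex.abs (finf z))) := by
      refine h2.congr fun N => ?_
      rw [partial_abs_one hr0 hr1 hp δ N (habs_of_sphere z hz)]
    exact tendsto_nhds_unique h3 tendsto_const_nhds
  have hfne : ∀ z ∈ Metric.sphere (0 : ℂ) 1, finf z ≠ 0 := by
    intro z hz h
    have := habsf z hz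
    rw [h] at this; simp at this
  constructor
  · intro z hz
    exact ⟨hdf.analyticAt (hUopen.mem_nhds (hUcirc hz)), hfne z hz⟩
  -- the winding integral
  have hderiv : TendstoLocallyUniformlyOn
      (deriv ∘ fun N z => annulusPartialProduct r p δ N z) (deriv finf) atTop U :=
    hconv.deriv (Eventually.of_forall hdiffN) hUopen
  have hderivU : TendstoUniformlyOn
      (deriv ∘ fun N z => annulusPartialProduct r p δ N z) (deriv finf) atTop
      (Metric.sphere (0:ℂ) 1) :=
    (tendstoLocallyUniformlyOn_iff_forall_isCompact hUopen).1 hderiv _ hUcirc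
      (isCompact_sphere 0 1)
  -- bound for the derivatives
  have hderivfc : ContinuousOn (deriv finf) U :=
    ((hdf.analyticOnNhd hUopen).deriv).continuousOn
  obtain ⟨M, hM⟩ := (isCompact_sphere (0:ℂ) 1).exists_bound_of_continuousOn
    (hderivfc.mono hUcirc)
  have hbound : ∀ᶠ N in atTop, ∀ z ∈ Metric.sphere (0:ℂ) 1,
      ‖deriv (annulusPartialProduct r p δ N) z‖ ≤ M + 1 := by
    filter_upwards [Metric.tendstoUniformlyOn_iff.1 hderivU 1 one_pos] with N hN z hz
    have h1 := hN z hz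
    have h2 := hM z hz
    have h1' : ‖deriv finf z - deriv (annulusPartialProduct r p δ N) z‖ < 1 := by
      rw [← dist_eq_norm]; exact h1
    calc ‖deriv (annulusPartialProduct r p δ N) z‖
        = ‖deriv finf z - (deriv finf z - deriv (annulusPartialProduct r p δ N) z)‖ := by
          rw [sub_sub_cancel]
      _ ≤ ‖deriv finf z‖ + ‖deriv finf z - deriv (annulusPartialProduct r p δ N) z‖ :=
          norm_sub_le _ _
      _ ≤ M + 1 := add_le_add h2 h1'.le
  -- dominated convergence
  set γ : ℝ → ℂ := circleMap 0 1 with hγ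
  have hγs : ∀ θ : ℝ, γ θ ∈ Metric.sphere (0:ℂ) 1 := fun θ => circleMap_mem_sphere 0 zero_le_one θ
  have htendsto : Tendsto (fun N => ∮ z in C(0,1), logDeriv (annulusPartialProduct r p δ N) z)
      atTop (nhds (∮ z in C(0,1), deriv finf z / finf z)) := by
    simp only [circleIntegral]
    apply intervalIntegral.tendsto_integral_filter_of_dominated_convergence
      (bound := fun _ => M + 1)
    · -- measurability
      refine Eventually.of_forall fun N => ?_
      have h1 : Continuous fun θ : ℝ => deriv (annulusPartialProduct r p δ N) (γ θ) :=
        ContinuousOn.comp_continuous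
          (((hdiffN N).analyticOnNhd hUopen).deriv.continuousOn)
          (continuous_circleMap 0 1) (fun θ => hUcirc (hγs θ))
      have h2 : Continuous fun θ : ℝ => annulusPartialProduct r p δ N (γ θ) :=
        ContinuousOn.comp_continuous ((hdiffN N).continuousOn)
          (continuous_circleMap 0 1) (fun θ => hUcirc (hγs θ))
      have h3 : Continuous fun θ : ℝ => deriv γ θ := by
        simp only [hγ, deriv_circleMap]
        exact (continuous_circleMap 0 1).mul continuous_const
      have h4 : Continuous fun θ : ℝ => deriv γ θ •
          logDeriv (annulusPartialProduct r p δ N) (γ θ) := by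
        refine h3.smul ?_
        exact h1.div h2 (fun θ => partial_ne_zero hr0 hr1 hp δ N (habs_of_sphere _ (hγs θ)))
      exact h4.aestronglyMeasurable
    · -- bound
      filter_upwards [hbound] with N hN
      refine MeasureTheory.ae_of_all _ fun θ _ => ?_
      have hz := hγs θ
      have habs1 : Complex.abs (γ θ) = 1 := habs_of_sphere _ hz
      have hd : ‖deriv γ θ‖ = 1 := by
        simp only [hγ, deriv_circleMap]
        simp
      rw [norm_smul, hd, one_mul, logDeriv_apply, norm_div]
      have hfn : ‖annulusPartialProduct r p δ N (γ θ)‖ = 1 := partial_abs_one hr0 hr1 hp δ N habs1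
      rw [hfn, div_one]
      exact hN _ hz
    · exact intervalIntegrable_const
    · -- pointwise limit
      refine MeasureTheory.ae_of_all _ fun θ _ => ?_
      have hzU : γ θ ∈ U := hUcirc (hγs θ)
      have h1 : Tendsto (fun N => deriv (annulusPartialProduct r p δ N) (γ θ)) atTop
          (nhds (deriv finf (γ θ))) := hderiv.tendsto_at hzU
      have h2 : Tendsto (fun N => annulusPartialProduct r p δ N (γ θ)) atTop
          (nhds (finf (γ θ))) := hconv.tendsto_at hzU
      have h3 := Tendsto.div h1 h2 (hfne _ (hγs θ))
      exact (tendsto_const_nhds.mul h3).congr fun N => by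
        rw [logDeriv_apply]; rfl
  have hconst : Tendsto (fun N => ∮ z in C(0,1), logDeriv (annulusPartialProduct r p δ N) z)
      atTop (nhds (2 * Real.pi * Complex.I * ((e : ℂ) - (δ : ℂ)))) := by
    refine tendsto_const_nhds.congr fun N => ?_
    rw [partial_integral hr0 hr1 hp δ N]
  exact tendsto_nhds_unique htendsto hconst
end

section
/- Let 0 < r < 1 and let f_1, f_2 : 𝔸_r → 𝔻 be proper holomorphic maps that extend continuously to the closed annulus Ā_r = {r ≤ |z| ≤ 1}. Suppose that f_1 and f_2 have the same order of vanishing at every point of 𝔸_r (i.e., the same zeros counted with multiplicity), and that f_1(1) = f_2(1) = 1. Then f_1 = f_2 on 𝔸_r. -/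
open Finset Complex

namespace ProperAnnulusAux

noncomputable def A (r : ℝ) : Set ℂ := {z : ℂ | r < ‖z‖ ∧ ‖z‖ < 1}
noncomputable def C (r : ℝ) : Set ℂ := {z : ℂ | r ≤ ‖z‖ ∧ ‖z‖ ≤ 1}

lemma isOpen_A (r : ℝ) : IsOpen (A r) :=
  isOpen_Ioo.preimage continuous_norm

lemma isClosed_C (r : ℝ) : IsClosed (C r) :=
  isClosed_Icc.preimage continuous_norm

lemma A_subset_C (r : ℝ) : A r ⊆ C r := fun z hz => ⟨le_of_lt hz.1, le_of_lt hz.2⟩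

lemma closure_A_subset (r : ℝ) : closure (A r) ⊆ C r :=
  closure_minimal (A_subset_C r) (isClosed_C r)

lemma preconnected_A (r : ℝ) (hr0 : 0 < r) : IsPreconnected (A r) := by
  have himg : A r = (fun p : ℝ × ℝ => (p.1 : ℂ) * Complex.exp (p.2 * Complex.I)) ''
      (Set.Ioo r 1 ×ˢ Set.univ) := by
    ext z
    constructor
    · rintro ⟨h1, h2⟩
      exact ⟨(‖z‖, Complex.arg z), ⟨⟨h1, h2⟩, trivial⟩, Complex.norm_mul_exp_arg_mul_I z⟩
    · rintro ⟨⟨ρ, θ⟩, ⟨⟨h1, h2⟩, -⟩, rfl⟩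
      have habs : ‖(ρ : ℂ) * Complex.exp (θ * Complex.I)‖ = ρ := by
        rw [norm_mul, Complex.norm_exp_ofReal_mul_I, Complex.norm_real, Real.norm_eq_abs, mul_one,
          abs_of_pos (hr0.trans h1)]
      exact ⟨by simpa [A, habs, abs_of_pos (hr0.trans h1)] using h1,
        by simpa [A, habs, abs_of_pos (hr0.trans h1)] using h2⟩
  rw [himg]
  exact (isPreconnected_Ioo.prod isPreconnected_univ).image _
    (Continuous.continuousOn (by continuity))

lemma one_mem_closure_A (r : ℝ) (hr0 : 0 < r) (hr1 : r < 1) : (1 : ℂ) ∈ closure (A r) := by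
  rw [Metric.mem_closure_iff]
  intro ε hε
  set δ := min (ε / 2) ((1 - r) / 2) with hδdef
  have hδ0 : 0 < δ := lt_min (by linarith) (by linarith)
  have hδr : δ ≤ (1 - r) / 2 := min_le_right _ _
  have hδε : δ < ε := lt_of_le_of_lt (min_le_left _ _) (by linarith)
  refine ⟨((1 - δ : ℝ) : ℂ), ⟨?_, ?_⟩, ?_⟩
  · show r < ‖_‖
    rw [Complex.norm_real, Real.norm_eq_abs, abs_of_pos (by linarith)]
    linarith
  · show ‖_‖ < 1
    rw [Complex.norm_real, Real.norm_eq_abs, abs_of_pos (by linarith)]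
    linarith
  · rw [Complex.dist_eq]
    have : (1 : ℂ) - ((1 - δ : ℝ) : ℂ) = ((δ : ℝ) : ℂ) := by push_cast; ring
    rw [this, Complex.norm_real, Real.norm_eq_abs, abs_of_pos hδ0]
    exact hδε

lemma boundary_abs (r : ℝ) (f : ℂ → ℂ)
    (hc : ContinuousOn f (C r)) (hmaps : ∀ z ∈ A r, ‖f z‖ < 1)
    (hproper : ∀ K : Set ℂ, K ⊆ Metric.ball 0 1 → IsCompact K →
      IsCompact (A r ∩ f ⁻¹' K))
    (z₀ : ℂ) (hz : z₀ ∈ closure (A r)) (hz' : z₀ ∉ A r) :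
    ‖f z₀‖ = 1 := by
  haveI hne : (nhdsWithin z₀ (A r)).NeBot := mem_closure_iff_nhdsWithin_neBot.1 hz
  have hct : Filter.Tendsto f (nhdsWithin z₀ (A r)) (nhds (f z₀)) :=
    (hc z₀ (closure_A_subset r hz)).mono_left (nhdsWithin_mono _ (A_subset_C r))
  have hta : Filter.Tendsto (fun z => ‖f z‖) (nhdsWithin z₀ (A r))
      (nhds (‖f z₀‖)) := (continuous_norm.tendsto _).comp hct
  have hle : ‖f z₀‖ ≤ 1 := by
    refine le_of_tendsto hta ?_
    filter_upwards [self_mem_nhdsWithin] with z hzA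
    exact le_of_lt (hmaps z hzA)
  rcases eq_or_lt_of_le hle with h | h
  · exact h
  · exfalso
    set a := ‖f z₀‖ with ha
    have hb : a < (a + 1) / 2 := by
      have : 0 ≤ a := norm_nonneg _
      linarith
    have hb1 : (a + 1) / 2 < 1 := by linarith
    have hKsub : Metric.closedBall (0 : ℂ) ((a + 1) / 2) ⊆ Metric.ball 0 1 :=
      Metric.closedBall_subset_ball hb1
    have hS : IsCompact (A r ∩ f ⁻¹' Metric.closedBall (0 : ℂ) ((a + 1) / 2)) :=
      hproper _ hKsub (isCompact_closedBall _ _)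
    have hev : ∀ᶠ z in nhdsWithin z₀ (A r),
        z ∈ A r ∩ f ⁻¹' Metric.closedBall (0 : ℂ) ((a + 1) / 2) := by
      have h1 : ∀ᶠ z in nhdsWithin z₀ (A r), ‖f z‖ < (a + 1) / 2 :=
        hta.eventually_lt_const hb
      filter_upwards [self_mem_nhdsWithin, h1] with z hzA hzb
      refine ⟨hzA, ?_⟩
      simp only [Set.mem_preimage, Metric.mem_closedBall, Complex.dist_eq, sub_zero]
      exact le_of_lt hzb
    have hmem : z₀ ∈ A r ∩ f ⁻¹' Metric.closedBall (0 : ℂ) ((a + 1) / 2) :=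
      hS.isClosed.mem_of_tendsto (Filter.Tendsto.mono_left Filter.tendsto_id nhdsWithin_le_nhds) hev
    exact hz' hmem.1

lemma not_evzero (r : ℝ) (hr0 : 0 < r) (hr1 : r < 1) (f : ℂ → ℂ)
    (hf : DifferentiableOn ℂ f (A r))
    (hproper : ∀ K : Set ℂ, K ⊆ Metric.ball 0 1 → IsCompact K →
      IsCompact (A r ∩ f ⁻¹' K))
    (z₀ : ℂ) (hz : z₀ ∈ A r) (h : ∀ᶠ w in nhds z₀, f w = 0) : False := by
  have han : AnalyticOnNhd ℂ f (A r) := fun z hzA =>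
    hf.analyticAt ((isOpen_A r).mem_nhds hzA)
  have heq : Set.EqOn f 0 (A r) :=
    han.eqOn_zero_of_preconnected_of_eventuallyEq_zero (preconnected_A r hr0) hz
      (by filter_upwards [h] with w hw; exact hw)
  have hAeq : A r ∩ f ⁻¹' {(0 : ℂ)} = A r := by
    ext z
    refine ⟨fun hz => hz.1, fun hz => ⟨hz, by simp [heq hz]⟩⟩
  have hcomp : IsCompact (A r) := by
    have := hproper {0} (by simp) isCompact_singleton
    rwa [hAeq] at this
  have hclosed : closure (A r) = A r := hcomp.isClosed.closure_eq
  have h1 : (1 : ℂ) ∈ A r := hclosed ▸ one_mem_closure_A r hr0 hr1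
  simp [A] at h1

lemma order_eq_zero_iff' {f : ℂ → ℂ} {z : ℂ} (hf : AnalyticAt ℂ f z) :
    analyticOrderAt f z = 0 ↔ f z ≠ 0 := by
  constructor
  · intro h
    rcases (hf.analyticOrderAt_eq_natCast (n := 0)).1 h with ⟨g, hg, hgz, hfg⟩
    have : f z = g z := by simpa using hfg.self_of_nhds
    rw [this]; exact hgz
  · intro h
    refine (hf.analyticOrderAt_eq_natCast (n := 0)).2 ⟨f, hf, h, ?_⟩
    filter_upwards with w; simp

noncomputable def G (f₁ f₂ : ℂ → ℂ) : ℂ → ℂ := fun z =>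
  if f₂ z = 0 then Filter.limUnder (nhdsWithin z {z}ᶜ) (fun w => f₁ w / f₂ w)
  else f₁ z / f₂ z

lemma key (r : ℝ) (hr0 : 0 < r) (hr1 : r < 1) (f₁ f₂ : ℂ → ℂ)
    (hf₁ : DifferentiableOn ℂ f₁ (A r)) (hf₂ : DifferentiableOn ℂ f₂ (A r))
    (hproper₂ : ∀ K : Set ℂ, K ⊆ Metric.ball 0 1 → IsCompact K →
      IsCompact (A r ∩ f₂ ⁻¹' K))
    (horder : ∀ z ∈ A r, ∀ (h₁ : AnalyticAt ℂ f₁ z) (h₂ : AnalyticAt ℂ f₂ z),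
      analyticOrderAt f₁ z = analyticOrderAt f₂ z)
    (z₀ : ℂ) (hz₀ : z₀ ∈ A r) :
    AnalyticAt ℂ (G f₁ f₂) z₀ ∧ G f₁ f₂ z₀ ≠ 0 ∧
      (f₂ z₀ ≠ 0 → G f₁ f₂ z₀ = f₁ z₀ / f₂ z₀) := by
  have h₁ : AnalyticAt ℂ f₁ z₀ := hf₁.analyticAt ((isOpen_A r).mem_nhds hz₀)
  have h₂ : AnalyticAt ℂ f₂ z₀ := hf₂.analyticAt ((isOpen_A r).mem_nhds hz₀)
  by_cases hz : f₂ z₀ = 0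
  · have hne : ¬ (∀ᶠ w in nhds z₀, f₂ w = 0) := fun h =>
      not_evzero r hr0 hr1 f₂ hf₂ hproper₂ z₀ hz₀ h
    have htop : analyticOrderAt f₂ z₀ ≠ ⊤ := fun h => hne (analyticOrderAt_eq_top.1 h)
    obtain ⟨n, hn⟩ : ∃ n : ℕ, analyticOrderAt f₂ z₀ = n := by
      obtain ⟨n, hn⟩ := WithTop.ne_top_iff_exists.1 htop
      exact ⟨n, hn.symm⟩
    obtain ⟨g₂, hg₂an, hg₂z, hfg₂⟩ := (h₂.analyticOrderAt_eq_natCast (n := n)).1 hn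
    have hn₁ : analyticOrderAt f₁ z₀ = n := by rw [horder z₀ hz₀ h₁ h₂, hn]
    obtain ⟨g₁, hg₁an, hg₁z, hfg₁⟩ := (h₁.analyticOrderAt_eq_natCast (n := n)).1 hn₁
    have hg₂ev : ∀ᶠ w in nhds z₀, g₂ w ≠ 0 := hg₂an.continuousAt.eventually_ne hg₂z
    have hkey : ∀ᶠ w in nhds z₀, w ≠ z₀ → (f₂ w ≠ 0 ∧ f₁ w / f₂ w = g₁ w / g₂ w) := by
      filter_upwards [hfg₁, hfg₂, hg₂ev] with w e₁ e₂ e₂' hw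
      have hp : (w - z₀) ^ n ≠ 0 := pow_ne_zero _ (sub_ne_zero.2 hw)
      rw [smul_eq_mul] at e₁ e₂
      refine ⟨by rw [e₂]; exact mul_ne_zero hp e₂', ?_⟩
      rw [e₁, e₂, mul_div_mul_left _ _ hp]
    have hlim : Filter.Tendsto (fun w => f₁ w / f₂ w) (nhdsWithin z₀ {z₀}ᶜ)
        (nhds (g₁ z₀ / g₂ z₀)) := by
      have hcont : Filter.Tendsto (fun w => g₁ w / g₂ w) (nhdsWithin z₀ {z₀}ᶜ)
          (nhds (g₁ z₀ / g₂ z₀)) :=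
        (hg₁an.continuousAt.div hg₂an.continuousAt hg₂z).tendsto.mono_left nhdsWithin_le_nhds
      refine hcont.congr' ?_
      filter_upwards [eventually_nhdsWithin_of_eventually_nhds hkey, self_mem_nhdsWithin]
        with w hw hw'
      exact (hw hw').2.symm
    have hG0 : G f₁ f₂ z₀ = g₁ z₀ / g₂ z₀ := by
      simp only [G, if_pos hz]
      exact hlim.limUnder_eq
    have hGeq : G f₁ f₂ =ᶠ[nhds z₀] fun w => g₁ w / g₂ w := by
      filter_upwards [hkey] with w hw
      rcases eq_or_ne w z₀ with rfl | hwne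
      · exact hG0
      · obtain ⟨h2', h3'⟩ := hw hwne
        simp only [G, if_neg h2']
        exact h3'
    exact ⟨(hg₁an.div hg₂an hg₂z).congr hGeq.symm,
      by rw [hG0]; exact div_ne_zero hg₁z hg₂z, fun h => absurd hz h.elim⟩
  · have hev : ∀ᶠ w in nhds z₀, f₂ w ≠ 0 := h₂.continuousAt.eventually_ne hz
    have hGeq : G f₁ f₂ =ᶠ[nhds z₀] fun w => f₁ w / f₂ w := by
      filter_upwards [hev] with w hw
      simp only [G, if_neg hw]
    have hf₁z : f₁ z₀ ≠ 0 := by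
      have ho₂ : analyticOrderAt f₂ z₀ = 0 := (order_eq_zero_iff' h₂).2 hz
      have ho₁ : analyticOrderAt f₁ z₀ = 0 := by rw [horder z₀ hz₀ h₁ h₂, ho₂]
      exact (order_eq_zero_iff' h₁).1 ho₁
    have hG0 : G f₁ f₂ z₀ = f₁ z₀ / f₂ z₀ := by simp only [G, if_neg hz]
    exact ⟨(h₁.div h₂ hz).congr hGeq.symm,
      by rw [hG0]; exact div_ne_zero hf₁z hz, fun _ => hG0⟩

end ProperAnnulusAux

open ProperAnnulusAux in
/-- Let `0 < r < 1` and let `f₁, f₂ : 𝔸_r → 𝔻` be proper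
holomorphic maps extending continuously to the closed annulus
`Ā_r = {r ≤ |z| ≤ 1}`.  If `f₁` and `f₂` have the same order of vanishing at
every point of `𝔸_r` and `f₁(1) = f₂(1) = 1`, then `f₁ = f₂` on `𝔸_r`. -/
theorem proper_annulus_to_disk_unique (r : ℝ) (hr0 : 0 < r) (hr1 : r < 1)
    (f₁ f₂ : ℂ → ℂ)
    (hf₁ : DifferentiableOn ℂ f₁ {z : ℂ | r < ‖z‖ ∧ ‖z‖ < 1})
    (hf₂ : DifferentiableOn ℂ f₂ {z : ℂ | r < ‖z‖ ∧ ‖z‖ < 1})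
    (hc₁ : ContinuousOn f₁ {z : ℂ | r ≤ ‖z‖ ∧ ‖z‖ ≤ 1})
    (hc₂ : ContinuousOn f₂ {z : ℂ | r ≤ ‖z‖ ∧ ‖z‖ ≤ 1})
    (hmaps₁ : ∀ z ∈ {z : ℂ | r < ‖z‖ ∧ ‖z‖ < 1},
      ‖f₁ z‖ < 1)
    (hmaps₂ : ∀ z ∈ {z : ℂ | r < ‖z‖ ∧ ‖z‖ < 1},
      ‖f₂ z‖ < 1)
    (hproper₁ : ∀ K : Set ℂ, K ⊆ Metric.ball 0 1 → IsCompact K →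
      IsCompact ({z : ℂ | r < ‖z‖ ∧ ‖z‖ < 1} ∩ f₁ ⁻¹' K))
    (hproper₂ : ∀ K : Set ℂ, K ⊆ Metric.ball 0 1 → IsCompact K →
      IsCompact ({z : ℂ | r < ‖z‖ ∧ ‖z‖ < 1} ∩ f₂ ⁻¹' K))
    (horder : ∀ z ∈ {z : ℂ | r < ‖z‖ ∧ ‖z‖ < 1},
      ∀ (h₁ : AnalyticAt ℂ f₁ z) (h₂ : AnalyticAt ℂ f₂ z), analyticOrderAt f₁ z = analyticOrderAt f₂ z)
    (hone₁ : f₁ 1 = 1) (hone₂ : f₂ 1 = 1) :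
    Set.EqOn f₁ f₂ {z : ℂ | r < ‖z‖ ∧ ‖z‖ < 1} := by
  have hf₁' : DifferentiableOn ℂ f₁ (A r) := hf₁
  have hf₂' : DifferentiableOn ℂ f₂ (A r) := hf₂
  have hc₁' : ContinuousOn f₁ (C r) := hc₁
  have hc₂' : ContinuousOn f₂ (C r) := hc₂
  have hmaps₁' : ∀ z ∈ A r, ‖f₁ z‖ < 1 := hmaps₁
  have hmaps₂' : ∀ z ∈ A r, ‖f₂ z‖ < 1 := hmaps₂
  have hproper₁' : ∀ K : Set ℂ, K ⊆ Metric.ball 0 1 → IsCompact K →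
      IsCompact (A r ∩ f₁ ⁻¹' K) := hproper₁
  have hproper₂' : ∀ K : Set ℂ, K ⊆ Metric.ball 0 1 → IsCompact K →
      IsCompact (A r ∩ f₂ ⁻¹' K) := hproper₂
  have horder' : ∀ z ∈ A r, ∀ (h₁ : AnalyticAt ℂ f₁ z) (h₂ : AnalyticAt ℂ f₂ z),
      analyticOrderAt f₁ z = analyticOrderAt f₂ z := horder
  set g : ℂ → ℂ := G f₁ f₂ with hgdef
  have key' : ∀ z ∈ A r, AnalyticAt ℂ g z ∧ g z ≠ 0 ∧ (f₂ z ≠ 0 → g z = f₁ z / f₂ z) :=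
    fun z hz => key r hr0 hr1 f₁ f₂ hf₁' hf₂' hproper₂' horder' z hz
  have hb₁ : ∀ z ∈ closure (A r), z ∉ A r → ‖f₁ z‖ = 1 :=
    fun z h h' => boundary_abs r f₁ hc₁' hmaps₁' hproper₁' z h h'
  have hb₂ : ∀ z ∈ closure (A r), z ∉ A r → ‖f₂ z‖ = 1 :=
    fun z h h' => boundary_abs r f₂ hc₂' hmaps₂' hproper₂' z h h'
  have hfr_ne : ∀ z ∈ closure (A r), z ∉ A r → f₂ z ≠ 0 := by
    intro z h h' h0
    have := hb₂ z h h'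
    rw [h0] at this
    simp at this
  have hfr_ne₁ : ∀ z ∈ closure (A r), z ∉ A r → f₁ z ≠ 0 := by
    intro z h h' h0
    have := hb₁ z h h'
    rw [h0] at this
    simp at this
  have hGbd : ∀ z, f₂ z ≠ 0 → g z = f₁ z / f₂ z := by
    intro z hz
    simp only [hgdef, G, if_neg hz]
  have hcont : ContinuousOn g (closure (A r)) := by
    intro z hzc
    by_cases hz : z ∈ A r
    · exact (key' z hz).1.continuousAt.continuousWithinAt
    · have hne := hfr_ne z hzc hz
      have hcw₂ : ContinuousWithinAt f₂ (closure (A r)) z :=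
        (hc₂'.mono (closure_A_subset r)) z hzc
      have hcw₁ : ContinuousWithinAt f₁ (closure (A r)) z :=
        (hc₁'.mono (closure_A_subset r)) z hzc
      have hq : ContinuousWithinAt (fun w => f₁ w / f₂ w) (closure (A r)) z :=
        hcw₁.div hcw₂ hne
      refine hq.congr_of_eventuallyEq ?_ (hGbd z hne)
      filter_upwards [hcw₂.eventually_ne hne] with w hw
      exact hGbd w hw
  have hdiff : DifferentiableOn ℂ g (A r) :=
    fun z hz => (key' z hz).1.differentiableAt.differentiableWithinAt
  have hdc : DiffContOnCl ℂ g (A r) := ⟨hdiff, hcont⟩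
  have hbd : Bornology.IsBounded (A r) := by
    have : A r ⊆ Metric.ball (0 : ℂ) 1 := fun z hz => by
      simpa [Metric.mem_ball, Complex.dist_eq] using hz.2
    exact (Metric.isBounded_ball (x := (0 : ℂ)) (r := 1)).subset this
  have hfrontier : frontier (A r) = closure (A r) \ A r := (isOpen_A r).frontier_eq
  have hle : ∀ z ∈ closure (A r), ‖g z‖ ≤ 1 := by
    intro z hz
    refine Complex.norm_le_of_forall_mem_frontier_norm_le hbd hdc ?_ hz
    intro w hw
    rw [hfrontier] at hw
    rw [hGbd w (hfr_ne w hw.1 hw.2), norm_div,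
      hb₁ w hw.1 hw.2, hb₂ w hw.1 hw.2]
    norm_num
  have hne_cl : ∀ z ∈ closure (A r), g z ≠ 0 := by
    intro z hz
    by_cases h : z ∈ A r
    · exact (key' z h).2.1
    · rw [hGbd z (hfr_ne z hz h)]
      exact div_ne_zero (hfr_ne₁ z hz h) (hfr_ne z hz h)
  have hdc' : DiffContOnCl ℂ (fun z => (g z)⁻¹) (A r) :=
    ⟨fun z hz => (hdiff z hz).inv (key' z hz).2.1, hcont.inv₀ hne_cl⟩
  have hle' : ∀ z ∈ closure (A r), ‖(g z)⁻¹‖ ≤ 1 := by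
    intro z hz
    refine Complex.norm_le_of_forall_mem_frontier_norm_le hbd hdc' ?_ hz
    intro w hw
    rw [hfrontier] at hw
    rw [norm_inv, hGbd w (hfr_ne w hw.1 hw.2), norm_div,
      hb₁ w hw.1 hw.2, hb₂ w hw.1 hw.2]
    norm_num
  have habs1 : ∀ z ∈ closure (A r), ‖g z‖ = 1 := by
    intro z hz
    have h1 := hle z hz
    have h2 := hle' z hz
    rw [norm_inv] at h2
    have h3 : 0 < ‖g z‖ := norm_pos_iff.2 (hne_cl z hz)
    have h4 := mul_le_mul_of_nonneg_right h2 h3.le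
    rw [inv_mul_cancel₀ h3.ne', one_mul] at h4
    linarith
  set z₁ : ℂ := (((r + 1) / 2 : ℝ) : ℂ) with hz₁def
  have hz₁ : z₁ ∈ A r := by
    constructor
    · show r < ‖_‖
      rw [hz₁def, Complex.norm_real, Real.norm_eq_abs, abs_of_pos (by linarith)]
      linarith
    · show ‖_‖ < 1
      rw [hz₁def, Complex.norm_real, Real.norm_eq_abs, abs_of_pos (by linarith)]
      linarith
  have hmax : IsMaxOn (norm ∘ g) (A r) z₁ := by
    intro z hz
    simp only [Function.comp_apply, Set.mem_setOf_eq]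
    rw [habs1 z (subset_closure hz), habs1 z₁ (subset_closure hz₁)]
  have heq : Set.EqOn g (Function.const ℂ (g z₁)) (A r) :=
    Complex.eqOn_of_isPreconnected_of_isMaxOn_norm (preconnected_A r hr0) (isOpen_A r)
      hdiff hz₁ hmax
  have hone_cl : (1 : ℂ) ∈ closure (A r) := one_mem_closure_A r hr0 hr1
  haveI : (nhdsWithin (1 : ℂ) (A r)).NeBot := mem_closure_iff_nhdsWithin_neBot.1 hone_cl
  have ht1 : Filter.Tendsto g (nhdsWithin 1 (A r)) (nhds (g 1)) :=
    (hcont 1 hone_cl).mono_left (nhdsWithin_mono _ subset_closure)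
  have ht2 : Filter.Tendsto g (nhdsWithin 1 (A r)) (nhds (g z₁)) := by
    refine Filter.Tendsto.congr' ?_ tendsto_const_nhds
    filter_upwards [self_mem_nhdsWithin] with w hw
    exact (heq hw).symm
  have hg1 : g 1 = 1 := by
    have h2 : f₂ 1 ≠ 0 := by rw [hone₂]; exact one_ne_zero
    rw [hGbd 1 h2, hone₁, hone₂, div_one]
  have hc1 : g z₁ = 1 := by rw [tendsto_nhds_unique ht2 ht1, hg1]
  intro z hz
  have hz' : z ∈ A r := hz
  by_cases h0 : f₂ z = 0
  · have h₁ : AnalyticAt ℂ f₁ z := hf₁'.analyticAt ((isOpen_A r).mem_nhds hz')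
    have h₂ : AnalyticAt ℂ f₂ z := hf₂'.analyticAt ((isOpen_A r).mem_nhds hz')
    have ho₂ : analyticOrderAt f₂ z ≠ 0 := fun h => (order_eq_zero_iff' h₂).1 h h0
    have ho₁ : analyticOrderAt f₁ z ≠ 0 := by rw [horder' z hz' h₁ h₂]; exact ho₂
    have hf₁z : f₁ z = 0 := by
      by_contra h
      exact ho₁ ((order_eq_zero_iff' h₁).2 h)
    show f₁ z = f₂ z
    rw [hf₁z, h0]
  · have hgz : g z = f₁ z / f₂ z := hGbd z h0
    have hval : f₁ z / f₂ z = 1 := by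
      rw [← hgz]
      have := heq hz'
      rw [Function.const_apply] at this
      rw [this, hc1]
    exact (div_eq_one_iff_eq h0).1 hval
end

section
/- Fix 0 < r < 1 and integers e > δ > 0. Let X = {(p_1, …, p_e) ∈ ℂ^e : r < |p_k| < 1 for all k, and |p_1 ⋯ p_e| = r^δ} and L = {(ζ_1, …, ζ_e) ∈ (ℂ ∖ {0})^e : |ζ_1 ⋯ ζ_e| = 1}, each with the subspace topology from ℂ^e. Define φ_r(p) = ((|p| − r)/(1 − |p|)) · (p/|p|) and Φ_r(p_1, …, p_e) = (φ_r(p_1)/Q, …, φ_r(p_e)/Q) where Q = |φ_r(p_1) ⋯ φ_r(p_e)|^{1/e}. Then Φ_r : X → L is a homeomorphism, whose inverse Ψ_r is given by Ψ_r(ζ_1, …, ζ_e) = (((|ζ_1| + t_0 r)/(|ζ_1| + t_0)) · (ζ_1/|ζ_1|), …, ((|ζ_e| + t_0 r)/(|ζ_e| + t_0)) · (ζ_e/|ζ_e|)), where t_0 = t_0(ζ_1, …, ζ_e) is the unique positive number with ∏_{k=1}^e (|ζ_k| + t_0 r)/(|ζ_k| + t_0) = r^δ. Both Φ_r and Ψ_r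 commute with permutations of the coordinates. -/
open Finset Complex

/-- The map `φ_r(p) = ((|p| − r)/(1 − |p|)) · (p/|p|)` sending the annulus
`𝔸_r` to the punctured plane `ℂ∗`. -/
noncomputable def annulusInflate (r : ℝ) (p : ℂ) : ℂ :=
  (((‖p‖ - r) / (1 - ‖p‖) : ℝ) : ℂ) *
    (p / (‖p‖ : ℂ))

/-- The normalized map
`Φ_r(p₁,…,p_e) = (φ_r(p₁)/Q, …, φ_r(p_e)/Q)` with
`Q = |φ_r(p₁) ⋯ φ_r(p_e)|^{1/e}`. -/
noncomputable def annulusInflateNormalized (r : ℝ) {e : ℕ}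
    (p : Fin e → ℂ) : Fin e → ℂ := fun k =>
  annulusInflate r (p k) /
    (((∏ j, ‖annulusInflate r (p j)‖) ^ ((1 : ℝ) / e) : ℝ) : ℂ)

/-- The candidate inverse formula
`Ψ(t₀; ζ)ₖ = ((|ζₖ| + t₀ r)/(|ζₖ| + t₀)) · (ζₖ/|ζₖ|)`. -/
noncomputable def annulusDeflate (r t₀ : ℝ) {e : ℕ}
    (ζ : Fin e → ℂ) : Fin e → ℂ := fun k =>
  (((‖ζ k‖ + t₀ * r) / (‖ζ k‖ + t₀) : ℝ) : ℂ) *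
    (ζ k / (‖ζ k‖ : ℂ))

/-- The space `X` of `e`-tuples in `𝔸_r` with `|p₁ ⋯ p_e| = r^δ`. -/
def annulusZeroTuples (r : ℝ) (e δ : ℕ) : Set (Fin e → ℂ) :=
  {p | (∀ k, r < ‖p k‖ ∧ ‖p k‖ < 1) ∧
    ‖∏ k, p k‖ = r ^ δ}

/-- The space `L` of `e`-tuples of nonzero complex numbers with
`|ζ₁ ⋯ ζ_e| = 1`. -/
def unitProductTuples (e : ℕ) : Set (Fin e → ℂ) :=
  {ζ | (∀ k, ζ k ≠ 0) ∧ ‖∏ k, ζ k‖ = 1}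


noncomputable def gfun (r u t : ℝ) : ℝ := (u + t * r) / (u + t)

lemma gfun_pos {r u t : ℝ} (hr0 : 0 < r) (hu : 0 < u) (ht : 0 ≤ t) : 0 < gfun r u t := by
  apply div_pos <;> nlinarith

lemma gfun_lt_one {r u t : ℝ} (hr1 : r < 1) (hu : 0 < u) (ht : 0 < t) : gfun r u t < 1 := by
  rw [gfun, div_lt_one (by linarith)]; nlinarith

lemma lt_gfun {r u t : ℝ} (hr1 : r < 1) (hu : 0 < u) (ht : 0 ≤ t) : r < gfun r u t := by
  rw [gfun, lt_div_iff₀ (by linarith)]; nlinarith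

lemma gfun_zero {u : ℝ} (r : ℝ) (hu : 0 < u) : gfun r u 0 = 1 := by
  rw [gfun]; field_simp; ring

lemma gfun_anti {r u : ℝ} (hr1 : r < 1) (hu : 0 < u) {t1 t2 : ℝ}
    (ht1 : 0 ≤ t1) (h : t1 < t2) : gfun r u t2 < gfun r u t1 := by
  rw [gfun, gfun, div_lt_div_iff₀ (by linarith) (by linarith)]
  nlinarith [mul_pos (mul_pos hu (sub_pos.2 h)) (sub_pos.2 hr1)]

lemma gfun_scale {r u t Q : ℝ} (hQ : 0 < Q) (hut : u + t ≠ 0) :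
    gfun r (u / Q) (t / Q) = gfun r u t := by
  rw [gfun, gfun]
  rw [div_eq_div_iff (by intro h; apply hut; field_simp at h; linarith [h]) hut]
  field_simp

lemma gfun_ffun {r s : ℝ} (hr1 : r < 1) (hs1 : s < 1) : gfun r ((s - r)/(1 - s)) 1 = s := by
  rw [gfun]
  have h1 : 1 - s ≠ 0 := by linarith
  have h2 : 1 - r ≠ 0 := by linarith
  rw [div_add_one h1, div_add' _ _ _ h1, div_div_div_cancel_right₀ h1,
    div_eq_iff (by intro h; apply h2; linarith)]
  ring

lemma ffun_gfun {r u t : ℝ} (hr1 : r < 1) (hu : 0 < u) (ht : 0 < t) :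
    (gfun r u t - r) / (1 - gfun r u t) = u / t := by
  have hg1 : gfun r u t < 1 := gfun_lt_one hr1 hu ht
  rw [div_eq_div_iff (by linarith) ht.ne']
  rw [gfun]
  field_simp
  ring

noncomputable def Gfun (r : ℝ) {e : ℕ} (ζ : Fin e → ℂ) (t : ℝ) : ℝ :=
  ∏ k, gfun r (‖ζ k‖) t

lemma Gfun_pos {r : ℝ} {e : ℕ} {ζ : Fin e → ℂ} {t : ℝ} (hr0 : 0 < r)
    (hζ : ∀ k, ζ k ≠ 0) (ht : 0 ≤ t) : 0 < Gfun r ζ t :=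
  Finset.prod_pos fun k _ => gfun_pos hr0 (norm_pos_iff.2 (hζ k)) ht

lemma Gfun_zero {r : ℝ} {e : ℕ} {ζ : Fin e → ℂ} (hζ : ∀ k, ζ k ≠ 0) :
    Gfun r ζ 0 = 1 := by
  rw [Gfun]
  exact Finset.prod_eq_one fun k _ => gfun_zero r (norm_pos_iff.2 (hζ k))

lemma Gfun_anti {r : ℝ} {e : ℕ} {ζ : Fin e → ℂ} (he : 0 < e) (hr0 : 0 < r) (hr1 : r < 1)
    (hζ : ∀ k, ζ k ≠ 0) {t1 t2 : ℝ} (ht1 : 0 ≤ t1) (h : t1 < t2) :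
    Gfun r ζ t2 < Gfun r ζ t1 := by
  apply Finset.prod_lt_prod_of_nonempty
  · exact fun k _ => gfun_pos hr0 (norm_pos_iff.2 (hζ k)) (by linarith)
  · exact fun k _ => gfun_anti hr1 (norm_pos_iff.2 (hζ k)) ht1 h
  · exact Finset.univ_nonempty_iff.2 (Fin.pos_iff_nonempty.mp he)

lemma Gfun_continuous {r : ℝ} {e : ℕ} {b : ℝ} (hb : 0 < b) :
    Continuous (fun ζ : Fin e → ℂ => Gfun r ζ b) := by
  apply continuous_finset_prod
  intro k _
  apply Continuous.div
  · exact ((continuous_norm.comp (continuous_apply k)).add continuous_const)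
  · exact ((continuous_norm.comp (continuous_apply k)).add continuous_const)
  · intro x
    have : 0 ≤ ‖x k‖ := norm_nonneg _
    intro h; nlinarith

lemma Gfun_continuousOn_t {r : ℝ} {e : ℕ} {ζ : Fin e → ℂ} (hζ : ∀ k, ζ k ≠ 0) :
    ContinuousOn (Gfun r ζ) (Set.Ici (0:ℝ)) := by
  apply continuousOn_finset_prod
  intro k _
  apply ContinuousOn.div
  · exact (continuousOn_const.add (continuousOn_id.mul continuousOn_const))
  · exact (continuousOn_const.add continuousOn_id)
  · intro t ht
    have h1 : 0 < ‖ζ k‖ := norm_pos_iff.2 (hζ k)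
    have h2 : (0:ℝ) ≤ t := ht
    have : 0 < ‖ζ k‖ + t := by linarith
    exact this.ne'

lemma exists_t0 {r : ℝ} {e δ : ℕ} {ζ : Fin e → ℂ} (hr0 : 0 < r) (hr1 : r < 1)
    (hδ0 : 0 < δ) (hδe : δ < e) (hζ : ∀ k, ζ k ≠ 0) :
    ∃ t, 0 < t ∧ Gfun r ζ t = r ^ δ := by
  have he : 0 < e := lt_trans hδ0 hδe
  have hne : (Finset.univ : Finset (Fin e)).Nonempty :=
    Finset.univ_nonempty_iff.2 (Fin.pos_iff_nonempty.mp he)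
  set c : ℝ := r ^ ((δ : ℝ) / e) with hc
  have hδe' : (δ : ℝ) / e < 1 := by
    rw [div_lt_one (by exact_mod_cast he)]
    exact_mod_cast hδe
  have hrc : r < c := by
    calc r = r ^ (1:ℝ) := (Real.rpow_one r).symm
    _ < c := Real.rpow_lt_rpow_of_exponent_gt hr0 hr1 hδe'
  have hce : c ^ e = r ^ δ := by
    rw [hc, ← Real.rpow_natCast (r ^ ((δ:ℝ)/e)) e, ← Real.rpow_mul hr0.le,
      div_mul_cancel₀ _ (by exact_mod_cast he.ne' : (e:ℝ) ≠ 0), Real.rpow_natCast]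
  have hrδ : r ^ δ < 1 := pow_lt_one₀ hr0.le hr1 hδ0.ne'
  -- choose T large
  obtain ⟨T, hT⟩ : ∃ T : ℝ, 0 < T ∧ ∀ k, ‖ζ k‖ * (1 - c) / (c - r) < T := by
    set M := Finset.univ.sup' hne (fun k : Fin e => ‖ζ k‖ * (1 - c) / (c - r)) with hM
    refine ⟨max M 0 + 1, by positivity, fun k => ?_⟩
    have := Finset.le_sup' (fun k : Fin e => ‖ζ k‖ * (1 - c) / (c - r)) (Finset.mem_univ k)
    have h2 : M ≤ max M 0 := le_max_left _ _
    linarith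
  have hGT : Gfun r ζ T < r ^ δ := by
    have hprod : c ^ e = ∏ _k : Fin e, c := by
      rw [Finset.prod_const, Finset.card_univ, Fintype.card_fin]
    rw [← hce, hprod]
    apply Finset.prod_lt_prod_of_nonempty _ _ hne
    · exact fun k _ => gfun_pos hr0 (norm_pos_iff.2 (hζ k)) hT.1.le
    · intro k _
      have h1 : 0 < ‖ζ k‖ := norm_pos_iff.2 (hζ k)
      have h2 := hT.2 k
      rw [gfun, div_lt_iff₀ (by linarith [hT.1])]
      rw [div_lt_iff₀ (by linarith : (0:ℝ) < c - r)] at h2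
      nlinarith
  have hsub := intermediate_value_Icc' hT.1.le
    ((Gfun_continuousOn_t (r := r) hζ).mono (Set.Icc_subset_Ici_self))
  have hmem : r ^ δ ∈ Set.Icc (Gfun r ζ T) (Gfun r ζ 0) := by
    rw [Gfun_zero hζ]
    exact ⟨hGT.le, hrδ.le⟩
  obtain ⟨t, ht, hGt⟩ := hsub hmem
  refine ⟨t, ?_, hGt⟩
  rcases eq_or_lt_of_le ht.1 with h0 | h0
  · exfalso; rw [← h0, Gfun_zero hζ] at hGt; linarith
  · exact h0

open Classical in
noncomputable def t0fun (r : ℝ) (δ : ℕ) {e : ℕ} (ζ : Fin e → ℂ) : ℝ :=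
  if h : ∃ t, 0 < t ∧ Gfun r ζ t = r ^ δ then h.choose else 1

lemma t0fun_spec {r : ℝ} {e δ : ℕ} {ζ : Fin e → ℂ} (hr0 : 0 < r) (hr1 : r < 1)
    (hδ0 : 0 < δ) (hδe : δ < e) (hζ : ∀ k, ζ k ≠ 0) :
    0 < t0fun r δ ζ ∧ Gfun r ζ (t0fun r δ ζ) = r ^ δ := by
  have h := exists_t0 hr0 hr1 hδ0 hδe hζ
  rw [t0fun]
  rw [dif_pos h]
  exact h.choose_spec

lemma t0fun_unique {r : ℝ} {e δ : ℕ} {ζ : Fin e → ℂ} (hr0 : 0 < r) (hr1 : r < 1)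
    (hδ0 : 0 < δ) (hδe : δ < e) (hζ : ∀ k, ζ k ≠ 0) {t : ℝ} (ht : 0 < t)
    (hG : Gfun r ζ t = r ^ δ) : t = t0fun r δ ζ := by
  have he : 0 < e := lt_trans hδ0 hδe
  obtain ⟨h1, h2⟩ := t0fun_spec hr0 hr1 hδ0 hδe hζ
  by_contra hne
  rcases lt_or_gt_of_ne hne with h | h
  · have := Gfun_anti he hr0 hr1 hζ ht.le h
    rw [hG, h2] at this; exact lt_irrefl _ this
  · have := Gfun_anti he hr0 hr1 hζ h1.le h
    rw [hG, h2] at this; exact lt_irrefl _ this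

lemma t0fun_lt {r : ℝ} {e δ : ℕ} {ζ : Fin e → ℂ} (hr0 : 0 < r) (hr1 : r < 1)
    (hδ0 : 0 < δ) (hδe : δ < e) (hζ : ∀ k, ζ k ≠ 0) {b : ℝ} (hb : 0 < b)
    (h : Gfun r ζ b < r ^ δ) : t0fun r δ ζ < b := by
  have he : 0 < e := lt_trans hδ0 hδe
  obtain ⟨h1, h2⟩ := t0fun_spec hr0 hr1 hδ0 hδe hζ
  by_contra hle
  push_neg at hle
  rcases eq_or_lt_of_le hle with heq | hlt
  · rw [← heq] at h2; linarith
  · have := Gfun_anti he hr0 hr1 hζ hb.le hlt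
    rw [h2] at this; linarith

lemma lt_t0fun {r : ℝ} {e δ : ℕ} {ζ : Fin e → ℂ} (hr0 : 0 < r) (hr1 : r < 1)
    (hδ0 : 0 < δ) (hδe : δ < e) (hζ : ∀ k, ζ k ≠ 0) {a : ℝ} (ha : 0 ≤ a)
    (h : r ^ δ < Gfun r ζ a) : a < t0fun r δ ζ := by
  have he : 0 < e := lt_trans hδ0 hδe
  obtain ⟨h1, h2⟩ := t0fun_spec hr0 hr1 hδ0 hδe hζ
  by_contra hle
  push_neg at hle
  rcases eq_or_lt_of_le hle with heq | hlt
  · rw [heq] at h2; linarith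
  · have := Gfun_anti he hr0 hr1 hζ h1.le hlt
    rw [h2] at this; linarith

lemma t0fun_continuousOn {r : ℝ} {e δ : ℕ} (hr0 : 0 < r) (hr1 : r < 1)
    (hδ0 : 0 < δ) (hδe : δ < e) :
    ContinuousOn (t0fun r δ) {ζ : Fin e → ℂ | ∀ k, ζ k ≠ 0} := by
  have he : 0 < e := lt_trans hδ0 hδe
  intro ζ₀ hζ₀
  obtain ⟨ht0, hG0⟩ := t0fun_spec hr0 hr1 hδ0 hδe hζ₀
  rw [ContinuousWithinAt, tendsto_order]
  constructor
  · intro a ha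
    rcases le_or_gt a 0 with h0 | h0
    · filter_upwards [self_mem_nhdsWithin] with ζ hζ
      exact lt_of_le_of_lt h0 (t0fun_spec hr0 hr1 hδ0 hδe hζ).1
    · have hGa : r ^ δ < Gfun r ζ₀ a := by
        have := Gfun_anti he hr0 hr1 hζ₀ h0.le ha
        rw [hG0] at this; exact this
      have hopen : IsOpen {ζ : Fin e → ℂ | r ^ δ < Gfun r ζ a} :=
        isOpen_lt continuous_const (Gfun_continuous h0)
      filter_upwards [self_mem_nhdsWithin,
        mem_nhdsWithin_of_mem_nhds (hopen.mem_nhds hGa)] with ζ hζ hGζ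
      exact lt_t0fun hr0 hr1 hδ0 hδe hζ h0.le hGζ
  · intro b hb
    have h0 : 0 < b := lt_trans ht0 hb
    have hGb : Gfun r ζ₀ b < r ^ δ := by
      have := Gfun_anti he hr0 hr1 hζ₀ ht0.le hb
      rw [hG0] at this; exact this
    have hopen : IsOpen {ζ : Fin e → ℂ | Gfun r ζ b < r ^ δ} :=
      isOpen_lt (Gfun_continuous h0) continuous_const
    filter_upwards [self_mem_nhdsWithin,
      mem_nhdsWithin_of_mem_nhds (hopen.mem_nhds hGb)] with ζ hζ hGζ
    exact t0fun_lt hr0 hr1 hδ0 hδe hζ h0 hGζ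

lemma abs_mul_unitdir {x : ℝ} {z : ℂ} (hx : 0 ≤ x) (hz : z ≠ 0) :
    ‖(x : ℂ) * (z / (‖z‖ : ℂ))‖ = x := by
  have hz' : (0:ℝ) < ‖z‖ := norm_pos_iff.2 hz
  rw [norm_mul, norm_div, Complex.norm_real, Complex.norm_real, Real.norm_eq_abs, Real.norm_eq_abs,
    _root_.abs_of_nonneg hz'.le, div_self hz'.ne', mul_one, _root_.abs_of_nonneg hx]

lemma abs_annulusInflate {r : ℝ} {p : ℂ} (hr0 : 0 < r) (hr : r < ‖p‖)
    (h1 : ‖p‖ < 1) :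
    ‖annulusInflate r p‖ = (‖p‖ - r) / (1 - ‖p‖) := by
  have hp : p ≠ 0 := by
    intro h; rw [h] at hr; simp at hr; linarith
  have hx : 0 ≤ (‖p‖ - r) / (1 - ‖p‖) := by
    apply div_nonneg <;> linarith
  exact abs_mul_unitdir hx hp

lemma prodAbs_pos {r : ℝ} {e δ : ℕ} {p : Fin e → ℂ} (hr0 : 0 < r)
    (hp : p ∈ annulusZeroTuples r e δ) :
    0 < ∏ j, ‖annulusInflate r (p j)‖ := by
  apply Finset.prod_pos
  intro j _
  rw [abs_annulusInflate hr0 (hp.1 j).1 (hp.1 j).2]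
  apply div_pos <;> [linarith [(hp.1 j).1]; linarith [(hp.1 j).2]]

lemma Qpow {P : ℝ} {e : ℕ} (hP : 0 < P) (he : 0 < e) :
    (P ^ ((1:ℝ)/e)) ^ e = P := by
  rw [← Real.rpow_natCast (P ^ ((1:ℝ)/e)) e, ← Real.rpow_mul hP.le,
    one_div, inv_mul_cancel₀ (by exact_mod_cast he.ne' : (e:ℝ) ≠ 0), Real.rpow_one]

lemma abs_inflateNormalized {r : ℝ} {e δ : ℕ} {p : Fin e → ℂ} (hr0 : 0 < r)
    (he : 0 < e) (hp : p ∈ annulusZeroTuples r e δ) (k : Fin e) :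
    ‖annulusInflateNormalized r p k‖ =
      ((‖p k‖ - r) / (1 - ‖p k‖)) /
        ((∏ j, ‖annulusInflate r (p j)‖) ^ ((1:ℝ)/e)) := by
  have hP := prodAbs_pos hr0 hp
  have hQ : 0 < (∏ j, ‖annulusInflate r (p j)‖) ^ ((1:ℝ)/e) :=
    Real.rpow_pos_of_pos hP _
  rw [annulusInflateNormalized, norm_div, Complex.norm_real, Real.norm_eq_abs, _root_.abs_of_nonneg hQ.le,
    abs_annulusInflate hr0 (hp.1 k).1 (hp.1 k).2]

lemma inflate_mem {r : ℝ} {e δ : ℕ} {p : Fin e → ℂ} (hr0 : 0 < r)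
    (he : 0 < e) (hp : p ∈ annulusZeroTuples r e δ) :
    annulusInflateNormalized r p ∈ unitProductTuples e := by
  have hP := prodAbs_pos hr0 hp
  have hQ : 0 < (∏ j, ‖annulusInflate r (p j)‖) ^ ((1:ℝ)/e) :=
    Real.rpow_pos_of_pos hP _
  constructor
  · intro k
    apply div_ne_zero
    · intro h
      have := abs_annulusInflate hr0 (hp.1 k).1 (hp.1 k).2
      rw [h, norm_zero] at this
      have h1 := (hp.1 k).1
      have h2 := (hp.1 k).2
      have hpos : 0 < (‖p k‖ - r) / (1 - ‖p k‖) := by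
        apply div_pos <;> linarith
      linarith [this ▸ hpos]
    · exact Complex.ofReal_ne_zero.2 hQ.ne'
  · rw [norm_prod]
    have : ∀ k ∈ Finset.univ, ‖annulusInflateNormalized r p k‖ =
        ‖annulusInflate r (p k)‖ /
          ((∏ j, ‖annulusInflate r (p j)‖) ^ ((1:ℝ)/e)) := by
      intro k _
      rw [abs_inflateNormalized hr0 he hp k, abs_annulusInflate hr0 (hp.1 k).1 (hp.1 k).2]
    rw [Finset.prod_congr rfl this, Finset.prod_div_distrib, Finset.prod_const,
      Finset.card_univ, Fintype.card_fin, Qpow hP he, div_self hP.ne']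


lemma abs_annulusDeflate {r t : ℝ} {e : ℕ} {ζ : Fin e → ℂ} (hr0 : 0 < r) (ht : 0 ≤ t)
    {k : Fin e} (hz : ζ k ≠ 0) :
    ‖annulusDeflate r t ζ k‖ = gfun r (‖ζ k‖) t :=
  abs_mul_unitdir (gfun_pos hr0 (norm_pos_iff.2 hz) ht).le hz

lemma deflate_mem {r : ℝ} {e δ : ℕ} {ζ : Fin e → ℂ} (hr0 : 0 < r) (hr1 : r < 1)
    (hδ0 : 0 < δ) (hδe : δ < e) (hζ : ζ ∈ unitProductTuples e) :
    annulusDeflate r (t0fun r δ ζ) ζ ∈ annulusZeroTuples r e δ := by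
  obtain ⟨ht0, hG0⟩ := t0fun_spec hr0 hr1 hδ0 hδe hζ.1
  constructor
  · intro k
    rw [abs_annulusDeflate hr0 ht0.le (hζ.1 k)]
    exact ⟨lt_gfun hr1 (norm_pos_iff.2 (hζ.1 k)) ht0.le,
      gfun_lt_one hr1 (norm_pos_iff.2 (hζ.1 k)) ht0⟩
  · rw [norm_prod]
    rw [Finset.prod_congr rfl (fun k _ => abs_annulusDeflate hr0 ht0.le (hζ.1 k))]
    exact hG0

lemma inflate_G {r : ℝ} {e δ : ℕ} {p : Fin e → ℂ} (hr0 : 0 < r) (hr1 : r < 1)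
    (hδ0 : 0 < δ) (hδe : δ < e) (hp : p ∈ annulusZeroTuples r e δ) :
    Gfun r (annulusInflateNormalized r p)
      (1 / (∏ j, ‖annulusInflate r (p j)‖) ^ ((1:ℝ)/e)) = r ^ δ := by
  have he : 0 < e := lt_trans hδ0 hδe
  have hP := prodAbs_pos hr0 hp
  have hQ : 0 < (∏ j, ‖annulusInflate r (p j)‖) ^ ((1:ℝ)/e) :=
    Real.rpow_pos_of_pos hP _
  rw [Gfun]
  have hstep : ∀ k ∈ Finset.univ,
      gfun r (‖annulusInflateNormalized r p k‖)
        (1 / (∏ j, ‖annulusInflate r (p j)‖) ^ ((1:ℝ)/e)) = ‖p k‖ := by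
    intro k _
    have h1 := (hp.1 k).1
    have h2 := (hp.1 k).2
    rw [abs_inflateNormalized hr0 he hp k]
    have hf : 0 < (‖p k‖ - r) / (1 - ‖p k‖) := by
      apply div_pos <;> linarith
    rw [gfun_scale hQ (by linarith : (‖p k‖ - r) / (1 - ‖p k‖) + 1 ≠ 0)]
    exact gfun_ffun hr1 h2
  rw [Finset.prod_congr rfl hstep, ← norm_prod, hp.2]

lemma inflate_t0 {r : ℝ} {e δ : ℕ} {p : Fin e → ℂ} (hr0 : 0 < r) (hr1 : r < 1)
    (hδ0 : 0 < δ) (hδe : δ < e) (hp : p ∈ annulusZeroTuples r e δ) :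
    t0fun r δ (annulusInflateNormalized r p)
      = 1 / (∏ j, ‖annulusInflate r (p j)‖) ^ ((1:ℝ)/e) := by
  have he : 0 < e := lt_trans hδ0 hδe
  have hP := prodAbs_pos hr0 hp
  have hQ : 0 < (∏ j, ‖annulusInflate r (p j)‖) ^ ((1:ℝ)/e) :=
    Real.rpow_pos_of_pos hP _
  exact (t0fun_unique hr0 hr1 hδ0 hδe (inflate_mem hr0 he hp).1 (by positivity)
    (inflate_G hr0 hr1 hδ0 hδe hp)).symm

lemma deflate_inflate {r : ℝ} {e δ : ℕ} {p : Fin e → ℂ} (hr0 : 0 < r) (hr1 : r < 1)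
    (hδ0 : 0 < δ) (hδe : δ < e) (hp : p ∈ annulusZeroTuples r e δ) :
    annulusDeflate r (t0fun r δ (annulusInflateNormalized r p))
      (annulusInflateNormalized r p) = p := by
  have he : 0 < e := lt_trans hδ0 hδe
  have hP := prodAbs_pos hr0 hp
  have hQ : 0 < (∏ j, ‖annulusInflate r (p j)‖) ^ ((1:ℝ)/e) :=
    Real.rpow_pos_of_pos hP _
  set Q := (∏ j, ‖annulusInflate r (p j)‖) ^ ((1:ℝ)/e) with hQdef
  rw [inflate_t0 hr0 hr1 hδ0 hδe hp]
  funext k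
  have h1 := (hp.1 k).1
  have h2 := (hp.1 k).2
  have hs : 0 < ‖p k‖ := lt_trans hr0 h1
  have hf : 0 < (‖p k‖ - r) / (1 - ‖p k‖) := by
    apply div_pos <;> linarith
  have habs : ‖annulusInflateNormalized r p k‖
      = ((‖p k‖ - r) / (1 - ‖p k‖)) / Q :=
    abs_inflateNormalized hr0 he hp k
  rw [annulusDeflate]
  rw [habs]
  have hgf : gfun r (((‖p k‖ - r) / (1 - ‖p k‖)) / Q) (1 / Q)
      = ‖p k‖ := by
    rw [gfun_scale hQ (by linarith : (‖p k‖ - r) / (1 - ‖p k‖) + 1 ≠ 0)]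
    exact gfun_ffun hr1 h2
  rw [show ((‖p k‖ - r) / (1 - ‖p k‖) / Q + 1 / Q * r)
      / ((‖p k‖ - r) / (1 - ‖p k‖) / Q + 1 / Q)
      = gfun r (((‖p k‖ - r) / (1 - ‖p k‖)) / Q) (1 / Q) from rfl, hgf]
  have hsC : ((‖p k‖ : ℂ)) ≠ 0 := Complex.ofReal_ne_zero.2 hs.ne'
  have hfC : (((‖p k‖ - r) / (1 - ‖p k‖) : ℝ) : ℂ) ≠ 0 :=
    Complex.ofReal_ne_zero.2 hf.ne'
  have hQC : ((Q : ℂ)) ≠ 0 := Complex.ofReal_ne_zero.2 hQ.ne'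
  have hfC' : ((‖p k‖ - r : ℝ) : ℂ) / ((1 - ‖p k‖ : ℝ) : ℂ) ≠ 0 := by
    rw [← Complex.ofReal_div]; exact hfC
  rw [annulusInflateNormalized, annulusInflate, ← hQdef]
  simp only [Complex.ofReal_div]
  rw [div_div_div_comm, div_self hQC, div_one,
    mul_div_cancel_left₀ _ hfC', mul_comm, div_mul_cancel₀ _ hsC]


lemma Qroot {x : ℝ} {e : ℕ} (hx : 0 < x) (he : 0 < e) :
    ((x ^ e : ℝ)) ^ ((1:ℝ)/e) = x := by
  rw [← Real.rpow_natCast x e, ← Real.rpow_mul hx.le, mul_one_div,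
    div_self (by exact_mod_cast he.ne' : (e:ℝ) ≠ 0), Real.rpow_one]

lemma inflate_deflate_coord {r t : ℝ} {e : ℕ} {ζ : Fin e → ℂ} (hr0 : 0 < r) (hr1 : r < 1)
    (ht : 0 < t) {k : Fin e} (hz : ζ k ≠ 0) :
    annulusInflate r (annulusDeflate r t ζ k)
      = ((‖ζ k‖ / t : ℝ) : ℂ) * (ζ k / (‖ζ k‖ : ℂ)) := by
  have hu : 0 < ‖ζ k‖ := norm_pos_iff.2 hz
  have hg : 0 < gfun r (‖ζ k‖) t := gfun_pos hr0 hu ht.le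
  have hgC : ((gfun r (‖ζ k‖) t : ℝ) : ℂ) ≠ 0 := Complex.ofReal_ne_zero.2 hg.ne'
  rw [annulusInflate, abs_annulusDeflate hr0 ht.le hz, ffun_gfun hr1 hu ht,
    show annulusDeflate r t ζ k
      = ((gfun r (‖ζ k‖) t : ℝ) : ℂ) * (ζ k / ((‖ζ k‖ : ℝ) : ℂ))
      from rfl,
    mul_div_cancel_left₀ _ hgC]

lemma inflate_deflate {r : ℝ} {e δ : ℕ} {ζ : Fin e → ℂ} (hr0 : 0 < r) (hr1 : r < 1)
    (hδ0 : 0 < δ) (hδe : δ < e) (hζ : ζ ∈ unitProductTuples e) :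
    annulusInflateNormalized r (annulusDeflate r (t0fun r δ ζ) ζ) = ζ := by
  have he : 0 < e := lt_trans hδ0 hδe
  obtain ⟨ht0, hG0⟩ := t0fun_spec hr0 hr1 hδ0 hδe hζ.1
  set t := t0fun r δ ζ with htdef
  have habs : ∀ j, ‖annulusInflate r (annulusDeflate r t ζ j)‖
      = ‖ζ j‖ / t := by
    intro j
    rw [inflate_deflate_coord hr0 hr1 ht0 (hζ.1 j)]
    exact abs_mul_unitdir (div_nonneg (norm_nonneg _) ht0.le) (hζ.1 j)
  have huprod : ∏ j, ‖ζ j‖ = 1 := by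
    rw [← norm_prod]; exact hζ.2
  have hprod : ∏ j, ‖annulusInflate r (annulusDeflate r t ζ j)‖ = (t⁻¹) ^ e := by
    rw [Finset.prod_congr rfl (fun j _ => habs j), Finset.prod_div_distrib, huprod,
      Finset.prod_const, Finset.card_univ, Fintype.card_fin, one_div, ← inv_pow]
  funext k
  have hu : 0 < ‖ζ k‖ := norm_pos_iff.2 (hζ.1 k)
  have huC : ((‖ζ k‖ : ℝ) : ℂ) ≠ 0 := Complex.ofReal_ne_zero.2 hu.ne'
  have htC : ((t : ℝ) : ℂ) ≠ 0 := Complex.ofReal_ne_zero.2 ht0.ne'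
  rw [annulusInflateNormalized, hprod, Qroot (inv_pos.2 ht0) he,
    inflate_deflate_coord hr0 hr1 ht0 (hζ.1 k), Complex.ofReal_div, Complex.ofReal_inv]
  field_simp


lemma inflate_continuousAt {r : ℝ} {e : ℕ} {p₀ : Fin e → ℂ} (hr0 : 0 < r) {j : Fin e}
    (h1 : r < ‖p₀ j‖) (h2 : ‖p₀ j‖ < 1) :
    ContinuousAt (fun p : Fin e → ℂ => annulusInflate r (p j)) p₀ := by
  have habs : ContinuousAt (fun p : Fin e → ℂ => ‖p₀ j‖) p₀ := continuousAt_const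
  have habs' : ContinuousAt (fun p : Fin e → ℂ => ‖p j‖) p₀ :=
    continuous_norm.continuousAt.comp (continuous_apply j).continuousAt
  have hne1 : (1 : ℝ) - ‖p₀ j‖ ≠ 0 := by linarith
  have hne2 : ((‖p₀ j‖ : ℝ) : ℂ) ≠ 0 :=
    Complex.ofReal_ne_zero.2 (by linarith : ‖p₀ j‖ ≠ 0)
  exact ((Complex.continuous_ofReal.continuousAt.comp
      (((habs'.sub continuousAt_const).div (continuousAt_const.sub habs') hne1))).mul
    (((continuous_apply j).continuousAt).div
      (Complex.continuous_ofReal.continuousAt.comp habs') hne2))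

lemma inflateN_continuousAt {r : ℝ} {e δ : ℕ} {p₀ : Fin e → ℂ} (hr0 : 0 < r)
    (hp : p₀ ∈ annulusZeroTuples r e δ) :
    ContinuousAt (annulusInflateNormalized r) p₀ := by
  have hP := prodAbs_pos hr0 hp
  have hprodc : ContinuousAt
      (fun p : Fin e → ℂ => ∏ j, ‖annulusInflate r (p j)‖) p₀ :=
    tendsto_finset_prod _ fun j _ =>
      continuous_norm.continuousAt.comp (inflate_continuousAt hr0 (hp.1 j).1 (hp.1 j).2)
  have hQc : ContinuousAt
      (fun p : Fin e → ℂ =>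
        (∏ j, ‖annulusInflate r (p j)‖) ^ ((1:ℝ)/e)) p₀ :=
    hprodc.rpow_const (Or.inl hP.ne')
  have hQne : (((∏ j, ‖annulusInflate r (p₀ j)‖) ^ ((1:ℝ)/e) : ℝ) : ℂ) ≠ 0 :=
    Complex.ofReal_ne_zero.2 (Real.rpow_pos_of_pos hP _).ne'
  rw [continuousAt_pi]
  intro k
  exact (inflate_continuousAt hr0 (hp.1 k).1 (hp.1 k).2).div
    (Complex.continuous_ofReal.continuousAt.comp hQc) hQne

lemma deflate_continuousAt {r : ℝ} {e δ : ℕ} {ζ₀ : Fin e → ℂ} (hr0 : 0 < r) (hr1 : r < 1)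
    (hδ0 : 0 < δ) (hδe : δ < e) (hζ : ∀ k, ζ₀ k ≠ 0) :
    ContinuousAt (fun ζ : Fin e → ℂ => annulusDeflate r (t0fun r δ ζ) ζ) ζ₀ := by
  obtain ⟨ht0, hG0⟩ := t0fun_spec hr0 hr1 hδ0 hδe hζ
  have hSopen : IsOpen {ζ : Fin e → ℂ | ∀ k, ζ k ≠ 0} := by
    have : {ζ : Fin e → ℂ | ∀ k, ζ k ≠ 0} = ⋂ k, (fun ζ : Fin e → ℂ => ζ k) ⁻¹' {0}ᶜ := by
      ext ζ; simp [Set.mem_iInter]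
    rw [this]
    exact isOpen_iInter_of_finite fun k => (isOpen_compl_singleton).preimage (continuous_apply k)
  have ht0c : ContinuousAt (t0fun r δ) ζ₀ :=
    (t0fun_continuousOn hr0 hr1 hδ0 hδe).continuousAt (hSopen.mem_nhds hζ)
  rw [continuousAt_pi]
  intro k
  have habs : ContinuousAt (fun ζ : Fin e → ℂ => ‖ζ k‖) ζ₀ :=
    continuous_norm.continuousAt.comp (continuous_apply k).continuousAt
  have hu : 0 < ‖ζ₀ k‖ := norm_pos_iff.2 (hζ k)
  have hden : ‖ζ₀ k‖ + t0fun r δ ζ₀ ≠ 0 := by positivity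
  have huC : ((‖ζ₀ k‖ : ℝ) : ℂ) ≠ 0 := Complex.ofReal_ne_zero.2 hu.ne'
  exact ((Complex.continuous_ofReal.continuousAt.comp
      ((habs.add (ht0c.mul continuousAt_const)).div (habs.add ht0c) hden)).mul
    (((continuous_apply k).continuousAt).div
      (Complex.continuous_ofReal.continuousAt.comp habs) huC))

/-- For `0 < r < 1` and integers `e > δ > 0`, the map `Φ_r`
is a homeomorphism from `X` onto `L`, with inverse given by the formula `Ψ_r`
(with `t₀ = t₀(ζ)` the unique positive solution of
`∏ₖ (|ζₖ| + t₀ r)/(|ζₖ| + t₀) = r^δ`), and both `Φ_r` and `Ψ_r` commute with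
permutations of the coordinates. -/
theorem annulusZeroTuples_homeo_unitProductTuples (r : ℝ) (hr0 : 0 < r)
    (hr1 : r < 1) (e δ : ℕ) (hδ0 : 0 < δ) (hδe : δ < e) :
    ∃ H : (annulusZeroTuples r e δ) ≃ₜ (unitProductTuples e),
      (∀ p : annulusZeroTuples r e δ,
        (H p : Fin e → ℂ) = annulusInflateNormalized r p.val) ∧
      (∀ ζ : unitProductTuples e, ∃ t₀ : ℝ, 0 < t₀ ∧
        (∏ k, (‖ζ.val k‖ + t₀ * r) / (‖ζ.val k‖ + t₀))
          = r ^ δ ∧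
        (H.symm ζ : Fin e → ℂ) = annulusDeflate r t₀ ζ.val) ∧
      (∀ σ : Equiv.Perm (Fin e), ∀ p : Fin e → ℂ,
        annulusInflateNormalized r (p ∘ σ) = annulusInflateNormalized r p ∘ σ) ∧
      (∀ σ : Equiv.Perm (Fin e), ∀ (t₀ : ℝ) (ζ : Fin e → ℂ),
        annulusDeflate r t₀ (ζ ∘ σ) = annulusDeflate r t₀ ζ ∘ σ) := by
  have he : 0 < e := lt_trans hδ0 hδe
  refine ⟨⟨⟨fun p => ⟨annulusInflateNormalized r p.1, inflate_mem hr0 he p.2⟩,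
      fun ζ => ⟨annulusDeflate r (t0fun r δ ζ.1) ζ.1, deflate_mem hr0 hr1 hδ0 hδe ζ.2⟩,
      fun p => Subtype.ext (deflate_inflate hr0 hr1 hδ0 hδe p.2),
      fun ζ => Subtype.ext (inflate_deflate hr0 hr1 hδ0 hδe ζ.2)⟩, ?_, ?_⟩,
    fun p => rfl, ?_, ?_, ?_⟩
  · exact Continuous.subtype_mk (continuous_iff_continuousAt.2 fun p =>
      (inflateN_continuousAt hr0 p.2).comp continuous_subtype_val.continuousAt) _
  · exact Continuous.subtype_mk (continuous_iff_continuousAt.2 fun ζ =>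
      (deflate_continuousAt hr0 hr1 hδ0 hδe ζ.2.1).comp continuous_subtype_val.continuousAt) _
  · intro ζ
    refine ⟨t0fun r δ ζ.1, (t0fun_spec hr0 hr1 hδ0 hδe ζ.2.1).1,
      (t0fun_spec hr0 hr1 hδ0 hδe ζ.2.1).2, rfl⟩
  · intro σ p
    funext k
    simp only [annulusInflateNormalized, Function.comp_apply, Function.comp]
    rw [show (∏ j, ‖annulusInflate r (p (σ j))‖)
      = ∏ j, ‖annulusInflate r (p j)‖ from
      Equiv.prod_comp σ (fun j => ‖annulusInflate r (p j)‖)]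
  · intro σ t₀ ζ
    funext k
    rfl
end

section
/- Let n ≥ 0 and let d_1, …, d_{n+1} be integers, each at least 2, with ∑_{j=1}^{n+1} 1/d_j < 1. Set N = lcm(d_1, …, d_{n+1}) and N* = (1 − ∑_{j=1}^{n+1} 1/d_j)·N = N − ∑_{j=1}^{n+1} N/d_j. Then N* is a positive integer, and for any integers m_1, m_2 and k_1, …, k_{n+1} satisfying m_2 + d_j k_j = m_1 + ∑_{i=1}^{n+1} k_i for every j ∈ {1, …, n+1}, the integer N* divides m_1 − m_2. -/
open Finset

/-- Let `d 0, …, d n ≥ 2` be integers with `∑ 1/dⱼ < 1`.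
Set `N = lcm(d 0, …, d n)` and `N* = N − ∑ⱼ N/dⱼ = (1 − ∑ⱼ 1/dⱼ)·N`.  Then
`N*` is a positive integer, and whenever integers `m₁, m₂, k 0, …, k n`
satisfy `m₂ + dⱼ·kⱼ = m₁ + ∑ᵢ kᵢ` for every `j`, the integer `N*` divides
`m₁ − m₂`. -/
theorem twist_times_divisibility (n : ℕ) (d : Fin (n + 1) → ℕ)
    (hd : ∀ j, 2 ≤ d j) (hsum : ∑ j, (1 : ℝ) / d j < 1) :
    0 < Finset.univ.lcm d - ∑ j, Finset.univ.lcm d / d j ∧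
    ∀ (m₁ m₂ : ℤ) (k : Fin (n + 1) → ℤ),
      (∀ j, m₂ + (d j : ℤ) * k j = m₁ + ∑ i, k i) →
      ((Finset.univ.lcm d - ∑ j, Finset.univ.lcm d / d j : ℕ) : ℤ) ∣ m₁ - m₂ := by
  set N := Finset.univ.lcm d with hN
  have hdvd : ∀ j, d j ∣ N := fun j => Finset.dvd_lcm (mem_univ j)
  have hdpos : ∀ j, 0 < d j := fun j => lt_of_lt_of_le (by norm_num) (hd j)
  have hNpos : 0 < N := by
    rw [hN]
    apply Nat.pos_of_ne_zero
    rw [Ne, Finset.lcm_eq_zero_iff]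
    intro h
    obtain ⟨j, _, hj⟩ := h
    exact (hdpos j).ne' hj
  -- key estimate
  have hlt : ∑ j, N / d j < N := by
    have hcast : ∀ j : Fin (n + 1), ((N / d j : ℕ) : ℝ) = (N : ℝ) * (1 / d j) := by
      intro j
      rw [Nat.cast_div (hdvd j) (by exact_mod_cast (hdpos j).ne')]
      ring
    have : ((∑ j, N / d j : ℕ) : ℝ) < (N : ℝ) := by
      rw [Nat.cast_sum]
      calc ∑ j, ((N / d j : ℕ) : ℝ) = (N : ℝ) * ∑ j, (1 : ℝ) / d j := by
            rw [Finset.mul_sum]; exact Finset.sum_congr rfl fun j _ => hcast j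
        _ < (N : ℝ) * 1 := by
            apply mul_lt_mul_of_pos_left hsum (by exact_mod_cast hNpos)
        _ = (N : ℝ) := mul_one _
    exact_mod_cast this
  refine ⟨Nat.sub_pos_of_lt hlt, ?_⟩
  intro m₁ m₂ k hk
  set S := ∑ i, k i with hS
  set A := m₁ - m₂ + S with hA
  have hdA : ∀ j, (d j : ℤ) ∣ A := fun j => ⟨k j, by have := hk j; rw [hA]; linarith⟩
  have hNA : (N : ℤ) ∣ A := by
    rw [Int.natCast_dvd]
    exact Finset.lcm_dvd fun j _ => Int.natCast_dvd.mp (hdA j)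
  obtain ⟨t, hAt⟩ := hNA
  have hkeq : ∀ j, k j = ((N / d j : ℕ) : ℤ) * t := by
    intro j
    have hdj : (d j : ℤ) ≠ 0 := by exact_mod_cast (hdpos j).ne'
    have hNe : (N : ℤ) = (d j : ℤ) * ((N / d j : ℕ) : ℤ) := by
      exact_mod_cast (Nat.mul_div_cancel' (hdvd j)).symm
    have hAkj : (d j : ℤ) * k j = A := by have := hk j; rw [hA]; linarith
    have : (d j : ℤ) * k j = (d j : ℤ) * (((N / d j : ℕ) : ℤ) * t) := by
      rw [hAkj, hAt, hNe, mul_assoc]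
    exact mul_left_cancel₀ hdj this
  have hSe : S = ((∑ j, N / d j : ℕ) : ℤ) * t := by
    rw [hS, Nat.cast_sum, Finset.sum_mul]
    exact Finset.sum_congr rfl fun j _ => hkeq j
  refine ⟨t, ?_⟩
  have : m₁ - m₂ = A - S := by rw [hA]; ring
  rw [this, hAt, hSe, Nat.cast_sub hlt.le]
  ring
end
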